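/- arXiv:0904.2447 — 9 statements merged into one kernel-verified Lean document; each statement's English description precedes it below -/
import Mathlib

section
/- Let n ≥ 3, H a subgroup of Sym_n, and M = S_n(H) the monoid presented by generators a_1,...,a_n and relations a_1a_2⋯a_n = a_{σ(1)}a_{σ(2)}⋯a_{σ(n)} for all σ ∈ H. Let z = a_1a_2⋯a_n. Then z is central in M if and only if H contains the cyclic subgroup of Sym_n generated by the n-cycle (1,2,...,n). -/
/-- The defining relation of `Sₙ(H)`: the word `a₁a₂⋯aₙ` equals the word
`a_{σ(1)}a_{σ(2)}⋯a_{σ(n)}` for every `σ ∈ H`. -/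
def SnRel (n : ℕ) (H : Set (Equiv.Perm (Fin n))) :
    FreeMonoid (Fin n) → FreeMonoid (Fin n) → Prop := fun x y =>
  ∃ σ ∈ H, x = FreeMonoid.ofList (List.ofFn (fun i : Fin n => i)) ∧
    y = FreeMonoid.ofList (List.ofFn (fun i : Fin n => σ i))

/-- The congruence generated by the defining relations. -/
def SnCon (n : ℕ) (H : Set (Equiv.Perm (Fin n))) : Con (FreeMonoid (Fin n)) :=
  conGen (SnRel n H)

/-- The monoid `Sₙ(H) = ⟨a₁,…,aₙ ∣ a₁a₂⋯aₙ = a_{σ(1)}⋯a_{σ(n)}, σ ∈ H⟩`. -/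
abbrev Sn (n : ℕ) (H : Set (Equiv.Perm (Fin n))) : Type := (SnCon n H).Quotient

/-- The generator `aᵢ` of `Sₙ(H)`. -/
def gen (n : ℕ) (H : Set (Equiv.Perm (Fin n))) (i : Fin n) : Sn n H :=
  (SnCon n H).mk' (FreeMonoid.of i)

/-- The element `z = a₁a₂⋯aₙ` of `Sₙ(H)`. -/
def zel (n : ℕ) (H : Set (Equiv.Perm (Fin n))) : Sn n H :=
  (SnCon n H).mk' (FreeMonoid.ofList (List.ofFn (fun i : Fin n => i)))

namespace SnAux

open FreeMonoid Relation

/-- The word `a_{σ(0)} ⋯ a_{σ(n-1)}`. -/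
def W (n : ℕ) (σ : Equiv.Perm (Fin n)) : FreeMonoid (Fin n) :=
  FreeMonoid.ofList (List.ofFn (fun i => σ i))

lemma toList_W {n : ℕ} (σ : Equiv.Perm (Fin n)) :
    FreeMonoid.toList (W n σ) = List.ofFn (fun i => σ i) := rfl

lemma W_one {n : ℕ} : W n 1 = FreeMonoid.ofList (List.ofFn (fun i : Fin n => i)) := rfl

/-- A single rewriting step. -/
def Step {n : ℕ} (H : Set (Equiv.Perm (Fin n))) (u v : FreeMonoid (Fin n)) : Prop :=
  ∃ σ ∈ H, ∃ τ ∈ H, ∃ p s, u = p * W n σ * s ∧ v = p * W n τ * s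

lemma Step.symm {n : ℕ} {H : Set (Equiv.Perm (Fin n))} {u v} (h : Step H u v) : Step H v u := by
  obtain ⟨σ, hσ, τ, hτ, p, s, hu, hv⟩ := h
  exact ⟨τ, hτ, σ, hσ, p, s, hv, hu⟩

lemma Step.mul_left {n : ℕ} {H : Set (Equiv.Perm (Fin n))} (a : FreeMonoid (Fin n)) {u v}
    (h : Step H u v) : Step H (a * u) (a * v) := by
  obtain ⟨σ, hσ, τ, hτ, p, s, rfl, rfl⟩ := h
  exact ⟨σ, hσ, τ, hτ, a * p, s, by simp [mul_assoc], by simp [mul_assoc]⟩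

lemma Step.mul_right {n : ℕ} {H : Set (Equiv.Perm (Fin n))} (a : FreeMonoid (Fin n)) {u v}
    (h : Step H u v) : Step H (u * a) (v * a) := by
  obtain ⟨σ, hσ, τ, hτ, p, s, rfl, rfl⟩ := h
  exact ⟨σ, hσ, τ, hτ, p, s * a, by simp [mul_assoc], by simp [mul_assoc]⟩

lemma EqvGen.step_mul_left {n : ℕ} {H : Set (Equiv.Perm (Fin n))} (a : FreeMonoid (Fin n)) {u v}
    (h : EqvGen (Step H) u v) : EqvGen (Step H) (a * u) (a * v) := by
  induction h with
  | rel x y h => exact .rel _ _ (h.mul_left a)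
  | refl x => exact .refl _
  | symm x y _ ih => exact ih.symm _ _
  | trans x y z _ _ ih1 ih2 => exact ih1.trans _ _ _ ih2

lemma EqvGen.step_mul_right {n : ℕ} {H : Set (Equiv.Perm (Fin n))} (a : FreeMonoid (Fin n)) {u v}
    (h : EqvGen (Step H) u v) : EqvGen (Step H) (u * a) (v * a) := by
  induction h with
  | rel x y h => exact .rel _ _ (h.mul_right a)
  | refl x => exact .refl _
  | symm x y _ ih => exact ih.symm _ _
  | trans x y z _ _ ih1 ih2 => exact ih1.trans _ _ _ ih2

/-- The congruence of one-step rewritings. -/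
def stepCon {n : ℕ} (H : Set (Equiv.Perm (Fin n))) : Con (FreeMonoid (Fin n)) where
  toSetoid := Relation.EqvGen.setoid (Step H)
  mul' {w x y z} h1 h2 :=
    (EqvGen.step_mul_right y h1).trans _ _ _ (EqvGen.step_mul_left x h2)

lemma stepCon_apply {n : ℕ} (H : Set (Equiv.Perm (Fin n))) (u v : FreeMonoid (Fin n)) :
    stepCon H u v ↔ EqvGen (Step H) u v := Iff.rfl

lemma snCon_le_stepCon {n : ℕ} (H : Subgroup (Equiv.Perm (Fin n))) :
    SnCon n ↑H ≤ stepCon (↑H : Set (Equiv.Perm (Fin n))) := by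
  apply Con.conGen_le.mpr
  rintro x y ⟨σ, hσ, rfl, rfl⟩
  exact Relation.EqvGen.rel _ _
    ⟨1, H.one_mem, σ, hσ, 1, 1, by rw [W_one]; simp, by simp [W]⟩

/-- Rotation of a word given by `List.ofFn`. -/
lemma rot_ofFn {α : Type*} {m : ℕ} (f : Fin (m + 1) → α) :
    f 0 :: List.ofFn (fun j => f (j + 1)) = List.ofFn f ++ [f 0] := by
  rw [List.ofFn_succ' (fun j : Fin (m + 1) => f (j + 1)), List.ofFn_succ (f := f)]
  simp only [List.concat_eq_append, Fin.coeSucc_eq_succ, Fin.last_add_one]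
  simp

open Fin.NatCast in
lemma pow_finRotate_zero {m : ℕ} (i : ℕ) :
    ((finRotate (m + 1)) ^ i) 0 = (i : Fin (m + 1)) := by
  induction i with
  | zero => simp
  | succ k ih =>
    rw [pow_succ', Equiv.Perm.mul_apply, ih, finRotate_succ_apply]
    push_cast
    ring

/-- key word identity: `a_x ⬝ W(c^{v+1}) = W(c^v) ⬝ a_x` where `x = c^v 0`. -/
lemma word_rotate {m : ℕ} (v : ℕ) :
    FreeMonoid.of (((finRotate (m + 1)) ^ v) 0) * W (m + 1) ((finRotate (m + 1)) ^ (v + 1)) =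
      W (m + 1) ((finRotate (m + 1)) ^ v) *
        FreeMonoid.of (((finRotate (m + 1)) ^ v) 0) := by
  apply FreeMonoid.toList.injective
  simp only [FreeMonoid.toList_mul, FreeMonoid.toList_of, toList_W]
  have h : (fun j : Fin (m + 1) => ((finRotate (m + 1)) ^ (v + 1)) j)
      = fun j => ((finRotate (m + 1)) ^ v) (j + 1) := by
    funext j
    rw [pow_succ, Equiv.Perm.mul_apply, finRotate_succ_apply]
  rw [h]
  exact rot_ofFn _

open Fin.NatCast in
/-- `a_x` commutes with `z` in `Sₙ(H)` when the rotation is in `H`. -/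
lemma gen_comm {m : ℕ} (H : Subgroup (Equiv.Perm (Fin (m + 1))))
    (hc : finRotate (m + 1) ∈ H) (x : Fin (m + 1)) :
    SnCon (m + 1) ↑H (W (m + 1) 1 * FreeMonoid.of x) (FreeMonoid.of x * W (m + 1) 1) := by
  set c := finRotate (m + 1) with hcdef
  have hx : (c ^ (x : ℕ)) 0 = x := by rw [hcdef, pow_finRotate_zero, Fin.cast_val_eq_self]
  have r1 : SnCon (m + 1) ↑H (W (m + 1) 1) (W (m + 1) (c ^ ((x : ℕ) + 1))) :=
    ConGen.Rel.of _ _ ⟨c ^ ((x : ℕ) + 1), H.pow_mem hc _, W_one, rfl⟩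
  have r2 : SnCon (m + 1) ↑H (W (m + 1) 1) (W (m + 1) (c ^ (x : ℕ))) :=
    ConGen.Rel.of _ _ ⟨c ^ (x : ℕ), H.pow_mem hc _, W_one, rfl⟩
  have hw := word_rotate (m := m) (x : ℕ)
  rw [← hcdef, hx] at hw
  have h1 : SnCon (m + 1) ↑H (W (m + 1) 1 * FreeMonoid.of x)
      (W (m + 1) (c ^ (x : ℕ)) * FreeMonoid.of x) :=
    (SnCon (m + 1) ↑H).mul r2 ((SnCon (m + 1) ↑H).refl _)
  rw [← hw] at h1
  exact h1.trans ((SnCon (m + 1) ↑H).mul ((SnCon (m + 1) ↑H).refl _) r1.symm)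

/-- the shift extraction lemma. -/
lemma shift_eq {m : ℕ} {σ ρ : Equiv.Perm (Fin (m + 1))} {x : Fin (m + 1)}
    (h : List.ofFn (fun i => σ i) ++ [x] = (0 : Fin (m + 1)) :: List.ofFn (fun i => ρ i)) :
    ρ = σ * finRotate (m + 1) := by
  have hm : m < m + 1 := Nat.lt_succ_self m
  have hσ0 : σ 0 = 0 := by
    have h0 := List.getElem_of_eq h (i := 0) (by simp)
    simpa [List.getElem_append_left] using h0
  have hmain : ∀ (j : ℕ) (hj : j + 1 < m + 1), ρ ⟨j, by omega⟩ = σ ⟨j + 1, hj⟩ := by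
    intro j hj
    have h1 := List.getElem_of_eq h (i := j + 1) (by simp; omega)
    rw [List.getElem_append_left (by simpa using hj), List.getElem_cons_succ] at h1
    simp only [List.getElem_ofFn] at h1
    exact h1.symm
  have hlast : ρ ⟨m, hm⟩ = σ 0 := by
    have hky : σ (σ.symm (ρ ⟨m, hm⟩)) = ρ ⟨m, hm⟩ := Equiv.apply_symm_apply _ _
    rcases eq_or_ne (σ.symm (ρ ⟨m, hm⟩)) 0 with h0 | h0
    · rw [h0] at hky
      exact hky.symm
    · exfalso
      set k := σ.symm (ρ ⟨m, hm⟩) with hk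
      have hkpos : 0 < (k : ℕ) := by
        rcases Nat.eq_zero_or_pos (k : ℕ) with hp | hp
        · exact absurd (Fin.ext hp) h0
        · exact hp
      have hklt : (k : ℕ) < m + 1 := k.isLt
      have hj : ((k : ℕ) - 1) + 1 < m + 1 := by omega
      have hthis := hmain ((k : ℕ) - 1) hj
      have hkk : (⟨(k : ℕ) - 1 + 1, hj⟩ : Fin (m + 1)) = k := by
        apply Fin.ext; simp; omega
      rw [hkk, hky] at hthis
      have := congrArg Fin.val (ρ.injective hthis)
      simp at this
      omega
  apply Equiv.ext
  intro j
  rw [Equiv.Perm.mul_apply, finRotate_succ_apply]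
  rcases Nat.lt_or_ge ((j : ℕ) + 1) (m + 1) with hj | hj
  · have hh := hmain (j : ℕ) hj
    have h1 : (⟨(j : ℕ), by omega⟩ : Fin (m + 1)) = j := Fin.ext rfl
    have h2 : (⟨(j : ℕ) + 1, hj⟩ : Fin (m + 1)) = j + 1 := by
      apply Fin.ext
      rw [Fin.val_add_one_of_lt]
      rw [Fin.lt_def, Fin.val_last]
      omega
    rw [← h1, hh, h2]
  · have hjm : j = Fin.last m := by
      apply Fin.ext
      have := j.isLt
      simp only [Fin.val_last]
      omega
    rw [hjm, Fin.last_add_one]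
    exact hlast

lemma step_pres {m : ℕ} (H : Subgroup (Equiv.Perm (Fin (m + 1))))
    (hc : finRotate (m + 1) ∉ H) {u v : FreeMonoid (Fin (m + 1))} (h : Step (↑H) u v)
    (hu : ∃ ρ ∈ H, u = FreeMonoid.of 0 * W (m + 1) ρ) :
    ∃ ρ ∈ H, v = FreeMonoid.of 0 * W (m + 1) ρ := by
  obtain ⟨σ, hσ, τ, hτ, p, s, rfl, rfl⟩ := h
  obtain ⟨ρ, hρ, hu⟩ := hu
  have hls : FreeMonoid.toList p ++ (List.ofFn (fun i => σ i) ++ FreeMonoid.toList s)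
      = (0 : Fin (m + 1)) :: List.ofFn (fun i => ρ i) := by
    have h2 := congrArg FreeMonoid.toList hu
    simpa [FreeMonoid.toList_mul, toList_W, List.append_assoc] using h2
  have hlen := congrArg List.length hls
  simp only [List.length_append, List.length_ofFn, List.length_cons] at hlen
  rcases Nat.lt_or_ge 0 (FreeMonoid.toList p).length with hp | hp
  · have hs0 : FreeMonoid.toList s = [] := List.length_eq_zero_iff.mp (by omega)
    obtain ⟨y, hy⟩ := List.length_eq_one_iff.mp
      (show (FreeMonoid.toList p).length = 1 by omega)
    rw [hy, hs0, List.append_nil] at hls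
    have hy0 : y = 0 := (List.cons_eq_cons.mp hls).1
    refine ⟨τ, hτ, ?_⟩
    apply FreeMonoid.toList.injective
    simp [FreeMonoid.toList_mul, toList_W, hs0, hy, hy0]
  · have hp0 : FreeMonoid.toList p = [] := List.length_eq_zero_iff.mp (by omega)
    obtain ⟨y, hy⟩ := List.length_eq_one_iff.mp
      (show (FreeMonoid.toList s).length = 1 by omega)
    rw [hp0, hy, List.nil_append] at hls
    have hshift := shift_eq hls
    exfalso
    apply hc
    have hmem := H.mul_mem (H.inv_mem hσ) hρ
    rwa [hshift, inv_mul_cancel_left] at hmem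

lemma eqv_pres {m : ℕ} (H : Subgroup (Equiv.Perm (Fin (m + 1))))
    (hc : finRotate (m + 1) ∉ H) {u v : FreeMonoid (Fin (m + 1))}
    (h : EqvGen (Step (↑H)) u v) :
    (∃ ρ ∈ H, u = FreeMonoid.of 0 * W (m + 1) ρ) ↔
      (∃ ρ ∈ H, v = FreeMonoid.of 0 * W (m + 1) ρ) := by
  induction h with
  | rel x y h => exact ⟨step_pres H hc h, step_pres H hc h.symm⟩
  | refl => exact Iff.rfl
  | symm _ _ _ ih => exact ih.symm
  | trans _ _ _ _ _ ih1 ih2 => exact ih1.trans ih2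

lemma z_comm_word {m : ℕ} (H : Subgroup (Equiv.Perm (Fin (m + 1))))
    (hc : finRotate (m + 1) ∈ H) (u : FreeMonoid (Fin (m + 1))) :
    SnCon (m + 1) ↑H (W (m + 1) 1 * u) (u * W (m + 1) 1) := by
  induction u using FreeMonoid.recOn with
  | one =>
    rw [mul_one, one_mul]
    exact (SnCon (m + 1) ↑H).refl _
  | of_mul x u ih =>
    have hg := gen_comm H hc x
    have h1 : SnCon (m + 1) ↑H (W (m + 1) 1 * (FreeMonoid.of x * u))
        ((FreeMonoid.of x * W (m + 1) 1) * u) := by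
      rw [← mul_assoc]
      exact (SnCon (m + 1) ↑H).mul hg ((SnCon (m + 1) ↑H).refl u)
    have h2 : SnCon (m + 1) ↑H ((FreeMonoid.of x * W (m + 1) 1) * u)
        (FreeMonoid.of x * (u * W (m + 1) 1)) := by
      rw [mul_assoc]
      exact (SnCon (m + 1) ↑H).mul ((SnCon (m + 1) ↑H).refl _) ih
    have h3 := h1.trans h2
    rw [show FreeMonoid.of x * (u * W (m + 1) 1) = (FreeMonoid.of x * u) * W (m + 1) 1
      from (mul_assoc _ _ _).symm] at h3
    exact h3

end SnAux

/-- for a subgroup `H ≤ Symₙ` with `n ≥ 3`, the element `z` is central in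
`Sₙ(H)` if and only if `H` contains the cyclic subgroup generated by the
`n`-cycle `(1,2,…,n)` (which sends `i` to `i+1` cyclically, i.e. `finRotate n`). -/
theorem stmt0 (n : ℕ) (hn : 3 ≤ n) (H : Subgroup (Equiv.Perm (Fin n))) :
    (∀ x : Sn n ↑H, zel n ↑H * x = x * zel n ↑H) ↔
      Subgroup.zpowers (finRotate n) ≤ H := by
  obtain ⟨m, rfl⟩ : ∃ m, n = m + 1 := ⟨n - 1, by omega⟩
  constructor
  · intro hz
    rw [Subgroup.zpowers_le]
    by_contra hc
    have h1 := hz (gen (m + 1) ↑H 0)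
    rw [zel, gen, ← map_mul, ← map_mul, ← SnAux.W_one] at h1
    have h2 : SnCon (m + 1) ↑H (SnAux.W (m + 1) 1 * FreeMonoid.of 0)
        (FreeMonoid.of 0 * SnAux.W (m + 1) 1) := (Con.eq _).mp h1
    have h3 := Con.le_def.mp (SnAux.snCon_le_stepCon H) h2
    have hP := (SnAux.eqv_pres H hc h3).mpr ⟨1, H.one_mem, rfl⟩
    obtain ⟨ρ, hρ, heq⟩ := hP
    have hls : List.ofFn (fun i => (1 : Equiv.Perm (Fin (m + 1))) i) ++ [(0 : Fin (m + 1))]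
        = (0 : Fin (m + 1)) :: List.ofFn (fun i => ρ i) := by
      have := congrArg FreeMonoid.toList heq
      simpa [FreeMonoid.toList_mul, SnAux.toList_W] using this
    have := SnAux.shift_eq hls
    rw [one_mul] at this
    exact hc (this ▸ hρ)
  · intro hle x
    have hcm : finRotate (m + 1) ∈ H := hle (Subgroup.mem_zpowers _)
    obtain ⟨u, rfl⟩ := Con.mk'_surjective x
    rw [zel, ← map_mul, ← map_mul, ← SnAux.W_one]
    exact (Con.eq _).mpr (SnAux.z_comm_word H hcm u)
end

section
/- Let n ≥ 3, H a subgroup of Sym_n, M = S_n(H), and z = a_1a_2⋯a_n. If a_1z = za_1 in M, then H contains the n-cycle (1,2,...,n). -/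
namespace Stmt1Aux

open Relation

variable {n : ℕ}

def Step (H : Set (Equiv.Perm (Fin n))) (x y : FreeMonoid (Fin n)) : Prop :=
  ∃ (p s : List (Fin n)) (σ τ : Equiv.Perm (Fin n)), σ ∈ H ∧ τ ∈ H ∧
    FreeMonoid.toList x = p ++ List.ofFn ⇑σ ++ s ∧
    FreeMonoid.toList y = p ++ List.ofFn ⇑τ ++ s

lemma Step.symm {H : Set (Equiv.Perm (Fin n))} {x y} (h : Step H x y) : Step H y x := by
  obtain ⟨p, s, σ, τ, hσ, hτ, hx, hy⟩ := h
  exact ⟨p, s, τ, σ, hτ, hσ, hy, hx⟩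

lemma Step.mul_right {H : Set (Equiv.Perm (Fin n))} (u : FreeMonoid (Fin n)) {x y}
    (h : Step H x y) : Step H (x * u) (y * u) := by
  obtain ⟨p, s, σ, τ, hσ, hτ, hx, hy⟩ := h
  exact ⟨p, s ++ FreeMonoid.toList u, σ, τ, hσ, hτ,
    by simp [FreeMonoid.toList_mul, hx], by simp [FreeMonoid.toList_mul, hy]⟩

lemma Step.mul_left {H : Set (Equiv.Perm (Fin n))} (u : FreeMonoid (Fin n)) {x y}
    (h : Step H x y) : Step H (u * x) (u * y) := by
  obtain ⟨p, s, σ, τ, hσ, hτ, hx, hy⟩ := h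
  exact ⟨FreeMonoid.toList u ++ p, s, σ, τ, hσ, hτ,
    by simp [FreeMonoid.toList_mul, hx], by simp [FreeMonoid.toList_mul, hy]⟩

lemma eqv_mul_right {H : Set (Equiv.Perm (Fin n))} (u : FreeMonoid (Fin n)) {x y}
    (h : EqvGen (Step H) x y) : EqvGen (Step H) (x * u) (y * u) := by
  induction h with
  | rel a b hab => exact .rel _ _ (hab.mul_right u)
  | refl a => exact .refl _
  | symm a b _ ih => exact .symm _ _ ih
  | trans a b c _ _ ih1 ih2 => exact .trans _ _ _ ih1 ih2

lemma eqv_mul_left {H : Set (Equiv.Perm (Fin n))} (u : FreeMonoid (Fin n)) {x y}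
    (h : EqvGen (Step H) x y) : EqvGen (Step H) (u * x) (u * y) := by
  induction h with
  | rel a b hab => exact .rel _ _ (hab.mul_left u)
  | refl a => exact .refl _
  | symm a b _ ih => exact .symm _ _ ih
  | trans a b c _ _ ih1 ih2 => exact .trans _ _ _ ih1 ih2

lemma conGen_to_eqvGen {H : Set (Equiv.Perm (Fin n))}
    (h1 : (1 : Equiv.Perm (Fin n)) ∈ H) {x y}
    (h : ConGen.Rel (SnRel n H) x y) : EqvGen (Step H) x y := by
  induction h with
  | of a b hab =>
      obtain ⟨σ, hσ, ha, hb⟩ := hab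
      refine .rel _ _ ⟨[], [], 1, σ, h1, hσ, ?_, ?_⟩
      · subst ha; simp only [FreeMonoid.toList_ofList, List.append_nil, List.nil_append]; rfl
      · subst hb; simp only [FreeMonoid.toList_ofList, List.append_nil, List.nil_append]
  | refl a => exact .refl _
  | symm _ ih => exact .symm _ _ ih
  | trans _ _ ih1 ih2 => exact .trans _ _ _ ih1 ih2
  | mul _ _ ih1 ih2 =>
      exact .trans _ _ _ (eqv_mul_right _ ih1) (eqv_mul_left _ ih2)

end Stmt1Aux

namespace Stmt1Aux

lemma keyA {m : ℕ} (σ ρ : Equiv.Perm (Fin (m + 1))) (t : Fin (m + 1))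
    (h : List.ofFn ⇑σ ++ [t] = (0 : Fin (m + 1)) :: List.ofFn ⇑ρ) :
    ρ = σ * finRotate (m + 1) := by
  have hlenσ : (List.ofFn ⇑σ).length = m + 1 := by simp
  have key : ∀ (j : ℕ) (hj : j < m + 2),
      (List.ofFn ⇑σ ++ [t])[j]'(by simp; omega) =
      ((0 : Fin (m + 1)) :: List.ofFn ⇑ρ)[j]'(by simp; omega) := by
    intro j hj
    exact List.getElem_of_eq h _
  have h0 : σ 0 = 0 := by
    have := key 0 (by omega)
    rwa [List.getElem_append_left (by simp), List.getElem_ofFn,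
      List.getElem_cons_zero, Fin.mk_zero] at this
  have hmid : ∀ (k : ℕ) (hk : k < m), ρ ⟨k, by omega⟩ = σ ⟨k + 1, by omega⟩ := by
    intro k hk
    have := key (k + 1) (by omega)
    rw [List.getElem_append_left (by simp; omega), List.getElem_ofFn,
      List.getElem_cons_succ, List.getElem_ofFn] at this
    exact this.symm
  have hlast : t = ρ ⟨m, by omega⟩ := by
    have := key (m + 1) (by omega)
    rw [List.getElem_append_right (by simp), List.getElem_cons_succ,
      List.getElem_ofFn] at this
    simpa [hlenσ] using this
  have hρm : ρ ⟨m, by omega⟩ = 0 := by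
    set k0 : Fin (m + 1) := ρ.symm 0 with hk0
    have hρk0 : ρ k0 = 0 := Equiv.apply_symm_apply ρ 0
    rcases Nat.lt_or_ge k0.val m with h' | h'
    · exfalso
      have h1 : ρ ⟨k0.val, by omega⟩ = σ ⟨k0.val + 1, by omega⟩ := hmid k0.val h'
      rw [Fin.eta, hρk0] at h1
      have h2 : σ ⟨k0.val + 1, by omega⟩ = σ 0 := by rw [← h1, h0]
      have h3 := σ.injective h2
      have h4 := congrArg Fin.val h3
      simp at h4
    · have hm : k0.val = m := by omega
      have he : (⟨m, by omega⟩ : Fin (m + 1)) = k0 := Fin.ext hm.symm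
      rw [he, hρk0]
  apply Equiv.ext
  intro i
  show ρ i = (σ * finRotate (m + 1)) i
  rw [Equiv.Perm.mul_apply, finRotate_succ_apply]
  rcases Nat.lt_or_ge i.val m with h' | h'
  · have hv : (i + 1).val = i.val + 1 := Fin.val_add_one_of_lt (by
      rw [Fin.lt_iff_val_lt_val, Fin.val_last]; omega)
    have e1 : i + 1 = (⟨i.val + 1, by omega⟩ : Fin (m + 1)) := Fin.ext hv
    calc ρ i = ρ ⟨i.val, by omega⟩ := by rw [Fin.eta]
      _ = σ ⟨i.val + 1, by omega⟩ := hmid i.val h'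
      _ = σ (i + 1) := congrArg σ e1.symm
  · have hm : i.val = m := by omega
    have hi : i = Fin.last m := Fin.ext (by simpa using hm)
    rw [hi, Fin.last_add_one, h0]
    have he : Fin.last m = (⟨m, by omega⟩ : Fin (m + 1)) := rfl
    rw [he, hρm]

end Stmt1Aux

namespace Stmt1Aux

def Rset {m : ℕ} (H : Set (Equiv.Perm (Fin (m + 1)))) (x : FreeMonoid (Fin (m + 1))) : Prop :=
  ∃ σ ∈ H, FreeMonoid.toList x = (0 : Fin (m + 1)) :: List.ofFn ⇑σ

lemma Rset.of_step {m : ℕ} (H : Subgroup (Equiv.Perm (Fin (m + 1))))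
    (hc : finRotate (m + 1) ∉ H) {x y : FreeMonoid (Fin (m + 1))}
    (hs : Step (↑H) x y) (hx : Rset (↑H) x) : Rset (↑H) y := by
  obtain ⟨p, s, σ, τ, hσ, hτ, hxe, hye⟩ := hs
  obtain ⟨ρ, hρ, hxe'⟩ := hx
  have heq : p ++ List.ofFn ⇑σ ++ s = (0 : Fin (m + 1)) :: List.ofFn ⇑ρ := by
    rw [← hxe, hxe']
  have hlen := congrArg List.length heq
  simp only [List.length_append, List.length_ofFn, List.length_cons] at hlen
  cases p with
  | nil =>
      simp only [List.length_nil] at hlen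
      have hs1 : s.length = 1 := by omega
      obtain ⟨t, rfl⟩ := List.length_eq_one_iff.mp hs1
      rw [List.nil_append] at heq
      have hkey := keyA σ ρ t heq
      exfalso
      apply hc
      have hρH : ρ ∈ H := hρ
      have hσH : σ ∈ H := hσ
      have : finRotate (m + 1) = σ⁻¹ * ρ := by rw [hkey]; group
      rw [this]
      exact H.mul_mem (H.inv_mem hσH) hρH
  | cons a p' =>
      simp only [List.length_cons] at hlen
      have hp' : p'.length = 0 ∧ s.length = 0 := by constructor <;> omega
      obtain ⟨hp'0, hs0⟩ := hp'
      rw [List.length_eq_zero_iff] at hp'0 hs0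
      subst hp'0; subst hs0
      rw [List.cons_append, List.nil_append, List.append_nil] at heq
      have ha : a = 0 := (List.cons.injEq _ _ _ _).mp heq |>.1
      refine ⟨τ, hτ, ?_⟩
      rw [hye, ha, List.cons_append, List.nil_append, List.append_nil]

lemma rset_iff {m : ℕ} (H : Subgroup (Equiv.Perm (Fin (m + 1))))
    (hc : finRotate (m + 1) ∉ H) {x y : FreeMonoid (Fin (m + 1))}
    (h : Relation.EqvGen (Step (↑H : Set (Equiv.Perm (Fin (m + 1))))) x y) :
    Rset (↑H) x ↔ Rset (↑H) y := by
  induction h with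
  | rel a b hab => exact ⟨Rset.of_step H hc hab, Rset.of_step H hc hab.symm⟩
  | refl a => exact Iff.rfl
  | symm a b _ ih => exact ih.symm
  | trans a b c _ _ ih1 ih2 => exact ih1.trans ih2

end Stmt1Aux

/-- if `a₁z = za₁` in `Sₙ(H)` then `H` contains the `n`-cycle
`(1,2,…,n)` (i.e. `finRotate n`). -/
theorem stmt1 (n : ℕ) (hn : 3 ≤ n) (H : Subgroup (Equiv.Perm (Fin n)))
    (h : gen n ↑H ⟨0, by omega⟩ * zel n ↑H = zel n ↑H * gen n ↑H ⟨0, by omega⟩) :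
    finRotate n ∈ H := by
  by_contra hc
  obtain ⟨m, rfl⟩ : ∃ m, n = m + 1 := ⟨n - 1, by omega⟩
  rw [gen, zel, ← map_mul, ← map_mul] at h
  have h2 : SnCon (m + 1) ↑H
      (FreeMonoid.of (⟨0, by omega⟩ : Fin (m + 1)) *
        FreeMonoid.ofList (List.ofFn (fun i : Fin (m + 1) => i)))
      (FreeMonoid.ofList (List.ofFn (fun i : Fin (m + 1) => i)) *
        FreeMonoid.of (⟨0, by omega⟩ : Fin (m + 1))) := (Con.eq _).mp h
  have h3 : Relation.EqvGen (Stmt1Aux.Step (↑H : Set (Equiv.Perm (Fin (m + 1))))) _ _ :=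
    Stmt1Aux.conGen_to_eqvGen H.one_mem h2
  have h4 := Stmt1Aux.rset_iff H hc h3
  have hx : Stmt1Aux.Rset (↑H)
      (FreeMonoid.of (⟨0, by omega⟩ : Fin (m + 1)) *
        FreeMonoid.ofList (List.ofFn (fun i : Fin (m + 1) => i))) := by
    refine ⟨1, H.one_mem, ?_⟩
    simp only [FreeMonoid.toList_mul, FreeMonoid.toList_of, FreeMonoid.toList_ofList]
    rw [Fin.mk_zero]
    rfl
  have hy := h4.mp hx
  obtain ⟨σ, hσ, hlist⟩ := hy
  simp only [FreeMonoid.toList_mul, FreeMonoid.toList_of, FreeMonoid.toList_ofList] at hlist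
  have hlist' : List.ofFn ⇑(1 : Equiv.Perm (Fin (m + 1))) ++ [(⟨0, by omega⟩ : Fin (m + 1))] =
      (0 : Fin (m + 1)) :: List.ofFn ⇑σ := hlist
  have hkey := Stmt1Aux.keyA 1 σ _ hlist'
  rw [one_mul] at hkey
  exact hc (hkey ▸ hσ)
end

section
/- Let n ≥ 3, H ⊆ Sym_n, M = S_n(H), and suppose z^m = (a_1⋯a_n)^m is central in M for some positive integer m. Then for every a ∈ M, the intersection Ma ∩ aM ∩ ⟨z^m⟩ is nonempty, where ⟨z^m⟩ is the submonoid generated by z^m. -/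
namespace Stmt2Aux

/-- The word `a₁⋯aₙ` in the free monoid. -/
def zw (n : ℕ) : FreeMonoid (Fin n) := FreeMonoid.ofList (List.ofFn (fun i : Fin n => i))

/-- `z` is left-divisible by the generator `aⱼ`. -/
def Cl (n : ℕ) (H : Set (Equiv.Perm (Fin n))) (j : Fin n) : Prop :=
  ∃ t : Sn n H, zel n H = gen n H j * t

/-- `z` is right-divisible by the generator `aⱼ`. -/
def Cr (n : ℕ) (H : Set (Equiv.Perm (Fin n))) (j : Fin n) : Prop :=
  ∃ s : Sn n H, zel n H = s * gen n H j

lemma head_ofFn {n : ℕ} (hn : 0 < n) (g : Fin n → Fin n) :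
    (List.ofFn g).head? = some (g ⟨0, hn⟩) := by
  obtain ⟨k, rfl⟩ : ∃ k, n = k + 1 := ⟨n - 1, by omega⟩
  rw [List.ofFn_succ, List.head?_cons]
  congr 1

lemma last_ofFn {n : ℕ} (hn : 0 < n) (g : Fin n → Fin n) :
    (List.ofFn g).getLast? = some (g ⟨n - 1, by omega⟩) := by
  obtain ⟨k, rfl⟩ : ∃ k, n = k + 1 := ⟨n - 1, by omega⟩
  rw [List.ofFn_succ', List.concat_eq_append, List.getLast?_concat]
  congr 1

lemma decomp_head {n : ℕ} (H : Set (Equiv.Perm (Fin n))) (hn : 0 < n) (g : Fin n → Fin n) :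
    ∃ t : Sn n H, (SnCon n H).mk' (FreeMonoid.ofList (List.ofFn g)) =
      gen n H (g ⟨0, hn⟩) * t := by
  obtain ⟨k, rfl⟩ : ∃ k, n = k + 1 := ⟨n - 1, by omega⟩
  refine ⟨(SnCon (k+1) H).mk' (FreeMonoid.ofList (List.ofFn fun i : Fin k => g i.succ)), ?_⟩
  rw [List.ofFn_succ, FreeMonoid.ofList_cons, map_mul]
  have : g 0 = g ⟨0, hn⟩ := congrArg g (by ext; simp)
  rw [this]; rfl

lemma decomp_last {n : ℕ} (H : Set (Equiv.Perm (Fin n))) (hn : 0 < n) (g : Fin n → Fin n) :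
    ∃ s : Sn n H, (SnCon n H).mk' (FreeMonoid.ofList (List.ofFn g)) =
      s * gen n H (g ⟨n - 1, by omega⟩) := by
  obtain ⟨k, rfl⟩ : ∃ k, n = k + 1 := ⟨n - 1, by omega⟩
  refine ⟨(SnCon (k+1) H).mk' (FreeMonoid.ofList (List.ofFn fun i : Fin k => g i.castSucc)), ?_⟩
  rw [List.ofFn_succ', List.concat_eq_append]
  have : FreeMonoid.ofList ((List.ofFn fun i : Fin k => g i.castSucc) ++ [g (Fin.last k)]) =
      FreeMonoid.ofList (List.ofFn fun i : Fin k => g i.castSucc) *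
        FreeMonoid.of (g (Fin.last k)) := rfl
  rw [this, map_mul]
  have : g (Fin.last k) = g ⟨k + 1 - 1, by omega⟩ := congrArg g (by ext; simp [Fin.last])
  rw [this]; rfl

lemma rel_zel {n : ℕ} {H : Set (Equiv.Perm (Fin n))} {σ : Equiv.Perm (Fin n)} (hσ : σ ∈ H) :
    zel n H = (SnCon n H).mk' (FreeMonoid.ofList (List.ofFn fun i : Fin n => σ i)) :=
  (Con.eq _).mpr (ConGen.Rel.of _ _ ⟨σ, hσ, rfl, rfl⟩)

lemma cl_zero {n : ℕ} (H : Set (Equiv.Perm (Fin n))) (hn : 0 < n) : Cl n H ⟨0, hn⟩ :=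
  decomp_head H hn (fun i => i)

lemma cl_sigma {n : ℕ} {H : Set (Equiv.Perm (Fin n))} (hn : 0 < n)
    {σ : Equiv.Perm (Fin n)} (hσ : σ ∈ H) : Cl n H (σ ⟨0, hn⟩) := by
  obtain ⟨t, ht⟩ := decomp_head H hn (fun i => σ i)
  exact ⟨t, (rel_zel hσ).trans ht⟩

lemma cr_last {n : ℕ} (H : Set (Equiv.Perm (Fin n))) (hn : 0 < n) :
    Cr n H ⟨n - 1, by omega⟩ :=
  decomp_last H hn (fun i => i)

lemma cr_sigma {n : ℕ} {H : Set (Equiv.Perm (Fin n))} (hn : 0 < n)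
    {σ : Equiv.Perm (Fin n)} (hσ : σ ∈ H) : Cr n H (σ ⟨n - 1, by omega⟩) := by
  obtain ⟨s, hs⟩ := decomp_last H hn (fun i => σ i)
  exact ⟨s, (rel_zel hσ).trans hs⟩

lemma len_eq {n : ℕ} {H : Set (Equiv.Perm (Fin n))} {x y : FreeMonoid (Fin n)}
    (h : ConGen.Rel (SnRel n H) x y) : x.toList.length = y.toList.length := by
  induction h with
  | of x y h => obtain ⟨σ, _, rfl, rfl⟩ := h; simp
  | refl => rfl
  | symm _ ih => exact ih.symm
  | trans _ _ ih1 ih2 => exact ih1.trans ih2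
  | mul _ _ ih1 ih2 => simp only [FreeMonoid.toList_mul, List.length_append]; omega

/-- head-divisibility property of a word -/
def Pl (n : ℕ) (H : Set (Equiv.Perm (Fin n))) (x : FreeMonoid (Fin n)) : Prop :=
  ∀ j, x.toList.head? = some j → Cl n H j

/-- last-divisibility property of a word -/
def Pr (n : ℕ) (H : Set (Equiv.Perm (Fin n))) (x : FreeMonoid (Fin n)) : Prop :=
  ∀ j, x.toList.getLast? = some j → Cr n H j

lemma head_inv {n : ℕ} {H : Set (Equiv.Perm (Fin n))} (hn : 0 < n)
    {x y : FreeMonoid (Fin n)} (h : ConGen.Rel (SnRel n H) x y) :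
    (Pl n H x ↔ Pl n H y) := by
  induction h with
  | of x y h =>
    obtain ⟨σ, hσ, rfl, rfl⟩ := h
    constructor <;> intro _
    · intro j hj
      rw [FreeMonoid.toList_ofList, head_ofFn hn] at hj
      obtain rfl : σ ⟨0, hn⟩ = j := by injection hj
      exact cl_sigma hn hσ
    · intro j hj
      rw [FreeMonoid.toList_ofList, head_ofFn hn] at hj
      obtain rfl : (⟨0, hn⟩ : Fin n) = j := by injection hj
      exact cl_zero H hn
  | refl => rfl
  | symm _ ih => exact ih.symm
  | trans _ _ ih1 ih2 => exact ih1.trans ih2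
  | @mul w x y z hwx _ ih1 ih2 =>
    rcases hw : w.toList with _ | ⟨a, l⟩
    · have hx : x.toList = [] := by
        have := len_eq hwx
        rw [hw] at this
        exact List.eq_nil_of_length_eq_zero this.symm
      simp only [Pl, FreeMonoid.toList_mul, hw, hx, List.nil_append] at *
      exact ih2
    · rcases hx : x.toList with _ | ⟨b, l'⟩
      · exfalso
        have := len_eq hwx
        rw [hw, hx] at this
        simp at this
      · simp only [Pl, FreeMonoid.toList_mul, hw, hx, List.cons_append, List.head?_cons,
          Option.some.injEq, forall_eq'] at *
        exact ih1

lemma last_inv {n : ℕ} {H : Set (Equiv.Perm (Fin n))} (hn : 0 < n)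
    {x y : FreeMonoid (Fin n)} (h : ConGen.Rel (SnRel n H) x y) :
    (Pr n H x ↔ Pr n H y) := by
  induction h with
  | of x y h =>
    obtain ⟨σ, hσ, rfl, rfl⟩ := h
    constructor <;> intro _
    · intro j hj
      rw [FreeMonoid.toList_ofList, last_ofFn hn] at hj
      obtain rfl : σ ⟨n - 1, by omega⟩ = j := by injection hj
      exact cr_sigma hn hσ
    · intro j hj
      rw [FreeMonoid.toList_ofList, last_ofFn hn] at hj
      obtain rfl : (⟨n - 1, by omega⟩ : Fin n) = j := by injection hj
      exact cr_last H hn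
  | refl => rfl
  | symm _ ih => exact ih.symm
  | trans _ _ ih1 ih2 => exact ih1.trans ih2
  | @mul w x y z _ hyz ih1 ih2 =>
    rcases hy : y.toList.getLast? with _ | a
    · have hy' : y.toList = [] := List.getLast?_eq_none_iff.mp hy
      have hz : z.toList = [] := by
        have := len_eq hyz
        rw [hy'] at this
        exact List.eq_nil_of_length_eq_zero this.symm
      simp only [Pr, FreeMonoid.toList_mul, hy', hz, List.append_nil] at *
      exact ih1
    · have hy2 : y.toList ≠ [] := by
        intro h'; rw [h'] at hy; simp at hy
      have hz2 : z.toList ≠ [] := by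
        intro h'
        have := len_eq hyz
        rw [h'] at this
        exact hy2 (List.eq_nil_of_length_eq_zero this)
      rcases hz : z.toList.getLast? with _ | b
      · exact absurd (List.getLast?_eq_none_iff.mp hz) hz2
      · have e1 : (FreeMonoid.toList w ++ FreeMonoid.toList y).getLast? = some a := by
          rw [List.getLast?_append_of_ne_nil _ hy2, hy]
        have e2 : (FreeMonoid.toList x ++ FreeMonoid.toList z).getLast? = some b := by
          rw [List.getLast?_append_of_ne_nil _ hz2, hz]
        simp only [Pr, hy, hz, Option.some.injEq, forall_eq'] at ih2
        simp only [Pr, FreeMonoid.toList_mul, e1, e2, Option.some.injEq, forall_eq']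
        exact ih2

end Stmt2Aux

open Stmt2Aux in
/-- if `z^m` is central in `M = Sₙ(H)` for some `m > 0`, then for every
`a ∈ M` the set `Ma ∩ aM ∩ ⟨z^m⟩` is nonempty. -/
theorem stmt2 (n : ℕ) (hn : 3 ≤ n) (H : Set (Equiv.Perm (Fin n)))
    (m : ℕ) (hm : 0 < m)
    (hcent : ∀ x : Sn n H, (zel n H) ^ m * x = x * (zel n H) ^ m)
    (a : Sn n H) :
    ∃ w : Sn n H, (∃ s, w = s * a) ∧ (∃ t, w = a * t) ∧ ∃ k : ℕ, w = ((zel n H) ^ m) ^ k := by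
  have hn0 : 0 < n := by omega
  -- powers of z^m are central
  have hZ : ∀ (k : ℕ) (x : Sn n H), ((zel n H) ^ m) ^ k * x = x * ((zel n H) ^ m) ^ k :=
    fun k x => (Commute.pow_left (hcent x) k)
  -- each generator left-divides z
  have hcl : ∀ i : Fin n, Cl n H i := by
    intro i
    have e : ((SnCon n H).mk' (zw n ^ m * FreeMonoid.of i) : Sn n H) =
        (SnCon n H).mk' (FreeMonoid.of i * zw n ^ m) := by
      rw [map_mul, map_mul, map_pow]
      exact hcent (gen n H i)
    have hrel : ConGen.Rel (SnRel n H) (zw n ^ m * FreeMonoid.of i)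
        (FreeMonoid.of i * zw n ^ m) := (Con.eq _).mp e
    have hleft : Pl n H (zw n ^ m * FreeMonoid.of i) := by
      intro j hj
      obtain ⟨m', rfl⟩ : ∃ m', m = m' + 1 := ⟨m - 1, by omega⟩
      rw [pow_succ'] at hj
      simp only [FreeMonoid.toList_mul, List.head?_append, zw,
        FreeMonoid.toList_ofList, head_ofFn hn0] at hj
      simp only [Option.some_or, Option.some.injEq] at hj
      rw [← hj]
      exact cl_zero H hn0
    have hright : Pl n H (FreeMonoid.of i * zw n ^ m) := (head_inv hn0 hrel).mp hleft
    exact hright i (by simp [FreeMonoid.toList_mul, FreeMonoid.toList_of])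
  -- each generator right-divides z
  have hcr : ∀ i : Fin n, Cr n H i := by
    intro i
    have e : ((SnCon n H).mk' (FreeMonoid.of i * zw n ^ m) : Sn n H) =
        (SnCon n H).mk' (zw n ^ m * FreeMonoid.of i) := by
      rw [map_mul, map_mul, map_pow]
      exact (hcent (gen n H i)).symm
    have hrel : ConGen.Rel (SnRel n H) (FreeMonoid.of i * zw n ^ m)
        (zw n ^ m * FreeMonoid.of i) := (Con.eq _).mp e
    have hleft : Pr n H (FreeMonoid.of i * zw n ^ m) := by
      intro j hj
      obtain ⟨m', rfl⟩ : ∃ m', m = m' + 1 := ⟨m - 1, by omega⟩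
      have hne : FreeMonoid.toList (zw n) ≠ [] := by
        simp [zw, FreeMonoid.toList_ofList]
        omega
      have hne2 : FreeMonoid.toList (zw n ^ m') ++ FreeMonoid.toList (zw n) ≠ [] := by
        simp [hne]
      rw [pow_succ] at hj
      simp only [FreeMonoid.toList_mul] at hj
      rw [List.getLast?_append_of_ne_nil _ hne2, List.getLast?_append_of_ne_nil _ hne] at hj
      rw [show FreeMonoid.toList (zw n) = List.ofFn (fun i : Fin n => i) from rfl,
        last_ofFn hn0] at hj
      rw [← Option.some.inj hj]
      exact cr_last H hn0
    have hright : Pr n H (zw n ^ m * FreeMonoid.of i) := (last_inv hn0 hrel).mp hleft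
    refine hright i ?_
    simp [FreeMonoid.toList_mul, FreeMonoid.toList_of]
  -- z^m is divisible by each generator on both sides
  have hgen : ∀ i : Fin n, (∃ t, (zel n H) ^ m = gen n H i * t) ∧
      (∃ s, (zel n H) ^ m = s * gen n H i) := by
    intro i
    obtain ⟨m', rfl⟩ : ∃ m', m = m' + 1 := ⟨m - 1, by omega⟩
    obtain ⟨t, ht⟩ := hcl i
    obtain ⟨s, hs⟩ := hcr i
    constructor
    · exact ⟨t * (zel n H) ^ m', by rw [pow_succ', ht, mul_assoc]⟩
    · exact ⟨(zel n H) ^ m' * s, by rw [pow_succ, hs, mul_assoc]⟩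
  -- main induction on words
  have main : ∀ l : List (Fin n), ∃ (k : ℕ) (t s : Sn n H),
      ((zel n H) ^ m) ^ k = ((SnCon n H).mk' (FreeMonoid.ofList l) : Sn n H) * t ∧
      ((zel n H) ^ m) ^ k = s * ((SnCon n H).mk' (FreeMonoid.ofList l) : Sn n H) := by
    intro l
    induction l with
    | nil =>
      refine ⟨0, 1, 1, ?_, ?_⟩ <;> simp [FreeMonoid.ofList_nil]
    | cons i l ih =>
      obtain ⟨k, t, s, h1, h2⟩ := ih
      obtain ⟨⟨ti, hti⟩, ⟨si, hsi⟩⟩ := hgen i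
      set Z := (zel n H) ^ m with hZdef
      set A := ((SnCon n H).mk' (FreeMonoid.ofList l) : Sn n H) with hA
      have hmk : ((SnCon n H).mk' (FreeMonoid.ofList (i :: l)) : Sn n H) = gen n H i * A := by
        rw [FreeMonoid.ofList_cons, map_mul]; rfl
      refine ⟨k + 1, t * ti, s * si, ?_, ?_⟩
      · rw [hmk]
        calc Z ^ (k + 1) = Z * Z ^ k := (pow_succ' Z k)
          _ = gen n H i * ti * Z ^ k := by rw [hti]
          _ = gen n H i * (Z ^ k * ti) := by rw [mul_assoc, ← hZ k ti]
          _ = gen n H i * (A * t * ti) := by rw [h1]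
          _ = gen n H i * A * (t * ti) := by simp [mul_assoc]
      · rw [hmk]
        calc Z ^ (k + 1) = Z * Z ^ k := (pow_succ' Z k)
          _ = Z * (s * A) := by rw [h2]
          _ = s * Z * A := by rw [← mul_assoc, hcent s]
          _ = s * (si * gen n H i) * A := by rw [hsi]
          _ = s * si * (gen n H i * A) := by simp [mul_assoc]
  -- conclude
  induction a using Con.induction_on with
  | _ x =>
    obtain ⟨k, t, s, h1, h2⟩ := main x.toList
    have hx : (SnCon n H).mk' (FreeMonoid.ofList x.toList) = (x : Sn n H) := rfl
    rw [hx] at h1 h2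
    exact ⟨((zel n H) ^ m) ^ k, ⟨s, h2⟩, ⟨t, h1⟩, k, rfl⟩
end

section
/- Let n ≥ 4 and M = S_n(Alt_n), with z = a_1a_2⋯a_n. Then for any two distinct indices 1 ≤ i, j ≤ n, the equality a_i a_j z = z a_i a_j holds in M. -/
/-- The set of even permutations of `{1,…,n}`. -/
def AltH (n : ℕ) : Set (Equiv.Perm (Fin n)) := ↑(alternatingGroup (Fin n))

/-- The monoid `Sₙ(Altₙ)`. -/
abbrev SAlt (n : ℕ) : Type := Sn n (AltH n)

/-- The generator `aᵢ` of `Sₙ(Altₙ)`. -/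
def a (n : ℕ) (i : Fin n) : SAlt n := gen n (AltH n) i

/-- The element `z = a₁⋯aₙ` of `Sₙ(Altₙ)`. -/
def z (n : ℕ) : SAlt n := zel n (AltH n)

/-- Any even word equals `z` in `Sₙ(Altₙ)`. -/
lemma z_eq (n : ℕ) (σ : Equiv.Perm (Fin n)) (hσ : σ ∈ AltH n) :
    (SnCon n (AltH n)).mk' (FreeMonoid.ofList (List.ofFn (fun k : Fin n => σ k))) = z n := by
  show ((FreeMonoid.ofList (List.ofFn (fun k : Fin n => σ k)) : FreeMonoid (Fin n)) :
      (SnCon n (AltH n)).Quotient) = ((FreeMonoid.ofList (List.ofFn (fun i : Fin n => i))) :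
      (SnCon n (AltH n)).Quotient)
  rw [Con.eq]
  exact ((ConGen.Rel.of _ _ ⟨σ, hσ, rfl, rfl⟩ : SnCon n (AltH n) _ _)).symm

lemma exists_even (n : ℕ) (hn : 4 ≤ n) (i j : Fin n) (hij : i ≠ j) :
    ∃ σ : Equiv.Perm (Fin n), σ ∈ alternatingGroup (Fin n) ∧
      σ ⟨0, by omega⟩ = i ∧ σ ⟨1, by omega⟩ = j := by
  set e0 : Fin n := ⟨0, by omega⟩
  set e1 : Fin n := ⟨1, by omega⟩
  set e2 : Fin n := ⟨2, by omega⟩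
  set e3 : Fin n := ⟨3, by omega⟩
  set ρ : Equiv.Perm (Fin n) := Equiv.swap i e0 with hρ
  have hρ0 : ρ e0 = i := Equiv.swap_apply_right i e0
  set j' : Fin n := ρ⁻¹ j with hj'
  have hj'0 : j' ≠ e0 := by
    intro h
    apply hij
    have := congrArg ρ h
    rw [hj', Equiv.Perm.inv_def, Equiv.apply_symm_apply, hρ0] at this
    exact this.symm
  set π : Equiv.Perm (Fin n) := ρ * Equiv.swap e1 j' with hπ
  have hπ0 : π e0 = i := by
    have : Equiv.swap e1 j' e0 = e0 :=
      Equiv.swap_apply_of_ne_of_ne (by simp [e0, e1, Fin.ext_iff]) (Ne.symm hj'0)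
    simp [hπ, Equiv.Perm.mul_apply, this, hρ0]
  have hπ1 : π e1 = j := by
    simp [hπ, Equiv.Perm.mul_apply, Equiv.swap_apply_left, hj', Equiv.Perm.inv_def, Equiv.apply_symm_apply]
  rcases Int.units_eq_one_or (Equiv.Perm.sign π) with h | h
  · exact ⟨π, Equiv.Perm.mem_alternatingGroup.mpr h, hπ0, hπ1⟩
  · refine ⟨π * Equiv.swap e2 e3, ?_, ?_, ?_⟩
    · rw [Equiv.Perm.mem_alternatingGroup, map_mul, h,
        Equiv.Perm.sign_swap (by simp [e2, e3, Fin.ext_iff])]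
      decide
    · have : Equiv.swap e2 e3 e0 = e0 :=
        Equiv.swap_apply_of_ne_of_ne (by simp [e0, e2, Fin.ext_iff]) (by simp [e0, e3, Fin.ext_iff])
      simp [Equiv.Perm.mul_apply, this, hπ0]
    · have : Equiv.swap e2 e3 e1 = e1 :=
        Equiv.swap_apply_of_ne_of_ne (by simp [e1, e2, Fin.ext_iff]) (by simp [e1, e3, Fin.ext_iff])
      simp [Equiv.Perm.mul_apply, this, hπ1]

lemma sign_addRight_two (n : ℕ) [NeZero n] (hn : 4 ≤ n) :
    Equiv.addRight (⟨2, by omega⟩ : Fin n) ∈ alternatingGroup (Fin n) := by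
  obtain ⟨m, rfl⟩ : ∃ m, n = m + 1 := ⟨n - 1, by omega⟩
  have key : Equiv.addRight (⟨2, by omega⟩ : Fin (m + 1)) = (finRotate (m + 1)) ^ 2 := by
    refine Equiv.ext fun k => ?_
    have h2 : ((finRotate (m + 1)) ^ 2) k = k + 1 + 1 := by
      simp [pow_succ, Equiv.Perm.mul_apply]
    rw [h2]
    show k + ⟨2, by omega⟩ = k + 1 + 1
    rw [add_assoc]
    congr 1
    apply Fin.ext
    simp only [Fin.add_def, Fin.val_one']
    rw [Nat.mod_eq_of_lt (show (1:ℕ) < m + 1 by omega)]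
    show 2 = (1 + 1) % (m + 1)
    rw [Nat.mod_eq_of_lt (by omega)]
  rw [key, Equiv.Perm.mem_alternatingGroup, map_pow, sign_finRotate,
    ← pow_mul, mul_comm, pow_mul]
  simp

/-- in `M = Sₙ(Altₙ)` with `n ≥ 4`, `aᵢaⱼz = zaᵢaⱼ` for distinct `i, j`. -/
theorem stmt4 (n : ℕ) (hn : 4 ≤ n) (i j : Fin n) (hij : i ≠ j) :
    a n i * a n j * z n = z n * (a n i * a n j) := by
  haveI : NeZero n := ⟨by omega⟩
  obtain ⟨σ, hσ, h0, h1⟩ := exists_even n hn i j hij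
  have hσ' : σ ∈ AltH n := hσ
  set τ : Equiv.Perm (Fin n) := σ * Equiv.addRight (⟨2, by omega⟩ : Fin n) with hτdef
  have hτ : τ ∈ AltH n := by
    show τ ∈ alternatingGroup (Fin n)
    exact Subgroup.mul_mem _ hσ (sign_addRight_two n hn)
  have hτapp : ∀ k : Fin n, τ k = σ (k + ⟨2, by omega⟩) := fun k => by
    rw [hτdef]; rfl
  have keyL : ([i, j] ++ List.ofFn (fun k : Fin n => τ k) : List (Fin n)) =
      List.ofFn (fun k : Fin n => σ k) ++ [i, j] := by
    apply List.ext_getElem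
    · simp only [List.length_append, List.length_ofFn, List.length_cons, List.length_nil]
      omega
    · intro m hm1 hm2
      simp only [List.length_append, List.length_ofFn, List.length_cons,
        List.length_nil] at hm1 hm2
      rcases m with _ | _ | m
      · rw [List.getElem_append_left (show (0:ℕ) < ([i, j] : List (Fin n)).length by simp),
          List.getElem_append_left
            (show (0:ℕ) < (List.ofFn (fun k : Fin n => σ k)).length by simp; omega),
          List.getElem_ofFn]
        show i = σ _
        exact h0.symm
      · rw [List.getElem_append_left (show (1:ℕ) < ([i, j] : List (Fin n)).length by simp),
          List.getElem_append_left
            (show (1:ℕ) < (List.ofFn (fun k : Fin n => σ k)).length by simp; omega),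
          List.getElem_ofFn]
        show j = σ _
        exact h1.symm
      · rw [List.getElem_append_right (show ([i, j] : List (Fin n)).length ≤ m + 2 by simp)]
        simp only [show ([i, j] : List (Fin n)).length = 2 from rfl]
        rw [List.getElem_ofFn, hτapp]
        rcases Nat.lt_or_ge (m + 2) n with hc | hc
        · rw [List.getElem_append_left
            (show m + 2 < (List.ofFn (fun k : Fin n => σ k)).length by simp [hc]),
            List.getElem_ofFn]
          congr 1
          apply Fin.ext
          simp only [Fin.add_def]
          show (m + 2 - 2 + 2) % n = m + 2
          rw [Nat.mod_eq_of_lt (by omega)]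
          omega
        · rw [List.getElem_append_right
            (show (List.ofFn (fun k : Fin n => σ k)).length ≤ m + 2 by simp; omega)]
          simp only [List.length_ofFn]
          have hval : ∀ (hx : m + 2 - 2 < n),
              ((⟨m + 2 - 2, hx⟩ : Fin n) + ⟨2, by omega⟩) = (⟨m + 2 - n, by omega⟩ : Fin n) := by
            intro hx
            apply Fin.ext
            simp only [Fin.add_def]
            show (m + 2 - 2 + 2) % n = m + 2 - n
            have h2n : m + 2 - 2 + 2 = m + 2 := by omega
            rw [h2n]
            rcases (show m + 2 = n ∨ m + 2 = n + 1 by omega) with h | h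
            · rw [h, Nat.mod_self]; omega
            · rw [h, Nat.add_mod_left, Nat.mod_eq_of_lt (by omega)]; omega
          rw [hval]
          rcases (show m + 2 - n = 0 ∨ m + 2 - n = 1 by omega) with h | h
          · simp only [h]
            show σ ⟨0, _⟩ = i
            exact h0
          · simp only [h]
            show σ ⟨1, _⟩ = j
            exact h1
  have e1 : a n i * a n j * z n =
      (SnCon n (AltH n)).mk'
        (FreeMonoid.ofList ([i, j] ++ List.ofFn (fun k : Fin n => τ k))) := by
    rw [← z_eq n τ hτ]
    show (SnCon n (AltH n)).mk' (FreeMonoid.of i) * (SnCon n (AltH n)).mk' (FreeMonoid.of j) *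
        (SnCon n (AltH n)).mk' _ = _
    rw [← map_mul, ← map_mul]
    rfl
  have e2 : z n * (a n i * a n j) =
      (SnCon n (AltH n)).mk'
        (FreeMonoid.ofList (List.ofFn (fun k : Fin n => σ k) ++ [i, j])) := by
    rw [← z_eq n σ hσ']
    show (SnCon n (AltH n)).mk' _ * ((SnCon n (AltH n)).mk' (FreeMonoid.of i) *
        (SnCon n (AltH n)).mk' (FreeMonoid.of j)) = _
    rw [← map_mul, ← map_mul]
    rfl
  rw [e1, e2, keyL]
end

section
/- Let n ≥ 4 and M = S_n(Alt_n). Then the element z^2 = (a_1a_2⋯a_n)^2 is central in M. -/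
/-! ### Auxiliary infrastructure -/

/-- The class of a word in `Sₙ(Altₙ)`. -/
def Q (n : ℕ) (l : List (Fin n)) : SAlt n := (SnCon n (AltH n)).mk' (FreeMonoid.ofList l)

lemma Q_append (n : ℕ) (l1 l2 : List (Fin n)) : Q n (l1 ++ l2) = Q n l1 * Q n l2 := by
  unfold Q; rw [← map_mul]; rfl

lemma a_eq (n : ℕ) (i : Fin n) : a n i = Q n [i] := rfl

lemma Q_perm (n : ℕ) (σ : Equiv.Perm (Fin n)) (hσ : Equiv.Perm.sign σ = 1) :
    Q n (List.ofFn ⇑σ) = z n := by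
  have h : SnRel n (AltH n) (FreeMonoid.ofList (List.ofFn fun i => i))
      (FreeMonoid.ofList (List.ofFn ⇑σ)) := by
    refine ⟨σ, ?_, rfl, rfl⟩
    simp [AltH, Equiv.Perm.mem_alternatingGroup, hσ]
  have h2 : (SnCon n (AltH n)) (FreeMonoid.ofList (List.ofFn fun i => i))
      (FreeMonoid.ofList (List.ofFn ⇑σ)) := ConGen.Rel.of _ _ h
  exact (Con.eq _).2 ((SnCon n (AltH n)).symm h2)

lemma Q_rw (n : ℕ) (u v : List (Fin n)) (p q : Equiv.Perm (Fin n))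
    (hp : Equiv.Perm.sign p = 1) (hq : Equiv.Perm.sign q = 1) :
    Q n (u ++ (List.ofFn ⇑p ++ v)) = Q n (u ++ (List.ofFn ⇑q ++ v)) := by
  rw [Q_append, Q_append, Q_append, Q_append, Q_perm n p hp, Q_perm n q hq]

lemma rot_pow_apply (n : ℕ) (hn : 0 < n) (k j : ℕ) (hj : j < n) :
    ((finRotate n)^k) ⟨j, hj⟩ = ⟨(j + k) % n, Nat.mod_lt _ hn⟩ := by
  induction k with
  | zero => simp [Fin.ext_iff, Nat.mod_eq_of_lt hj]
  | succ k ih =>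
    obtain ⟨m, rfl⟩ : ∃ m, n = m + 1 := ⟨n - 1, by omega⟩
    rw [pow_succ', Equiv.Perm.mul_apply, ih, finRotate_succ_apply]
    apply Fin.ext
    simp [Fin.add_def, ← Nat.add_mod, Nat.add_assoc]

lemma ofFn_mul_rot_pow (n : ℕ) (hn : 0 < n) (σ : Equiv.Perm (Fin n)) (k : ℕ) (hk : k ≤ n) :
    List.ofFn ⇑(σ * (finRotate n)^k) = (List.ofFn ⇑σ).drop k ++ (List.ofFn ⇑σ).take k := by
  apply List.ext_getElem
  · simp; omega
  intro j h1 h2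
  simp only [List.getElem_ofFn, Equiv.Perm.mul_apply]
  rw [List.getElem_append]
  have hj : j < n := by simpa using h1
  by_cases hc : j < n - k
  · have hlt : j + k < n := by omega
    rw [dif_pos (by simpa using hc)]
    simp only [List.getElem_drop, List.getElem_ofFn]
    congr 1
    rw [rot_pow_apply n hn k j hj]
    apply Fin.ext
    simp [Nat.mod_eq_of_lt hlt]
    omega
  · rw [dif_neg (by simpa using hc)]
    simp only [List.getElem_take, List.getElem_ofFn]
    congr 1
    rw [rot_pow_apply n hn k j hj]
    apply Fin.ext
    have h3 : j + k = (j + k - n) + n := by omega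
    simp only [List.length_drop, List.length_ofFn]
    rw [h3, Nat.add_mod_right, Nat.mod_eq_of_lt (by omega)]
    omega

lemma take_one_ofFn (n : ℕ) (hn : 0 < n) (f : Fin n → Fin n) :
    (List.ofFn f).take 1 = [f ⟨0, hn⟩] := by
  apply List.ext_getElem
  · simp; omega
  intro j h1 h2
  have hj : j = 0 := by simp at h2; omega
  subst hj
  simp

lemma take_two_ofFn (n : ℕ) (h0 : 0 < n) (h1 : 1 < n) (f : Fin n → Fin n) :
    (List.ofFn f).take 2 = [f ⟨0, h0⟩, f ⟨1, h1⟩] := by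
  apply List.ext_getElem
  · simp; omega
  intro j h1 h2
  have hj : j = 0 ∨ j = 1 := by simp at h2; omega
  rcases hj with rfl | rfl <;> simp

lemma take_two_ofFn' (n : ℕ) (h0 : 0 < n) (h1 : 1 < n) (f : Fin n → Fin n) (x y : Fin n)
    (hx : f ⟨0, h0⟩ = x) (hy : f ⟨1, h1⟩ = y) :
    (List.ofFn f).take 2 = [x, y] := by
  rw [take_two_ofFn n h0 h1 f, hx, hy]

lemma shuttle (n : ℕ) (hn : 0 < n) (σ : Equiv.Perm (Fin n)) :
    (σ ⟨0, hn⟩) :: List.ofFn ⇑(σ * finRotate n) = List.ofFn ⇑σ ++ [σ ⟨0, hn⟩] := by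
  have h := ofFn_mul_rot_pow n hn σ 1 (by omega)
  rw [pow_one] at h
  rw [h, take_one_ofFn n hn ⇑σ, show (σ ⟨0,hn⟩) :: ((List.ofFn ⇑σ).drop 1 ++ [σ ⟨0,hn⟩]) = ([σ ⟨0,hn⟩] ++ (List.ofFn ⇑σ).drop 1) ++ [σ ⟨0,hn⟩] by simp,
     ← take_one_ofFn n hn ⇑σ, List.take_append_drop]

lemma sign_finRotate' (n : ℕ) (hn : 0 < n) :
    Equiv.Perm.sign (finRotate n) = (-1) ^ (n - 1) := by
  obtain ⟨m, rfl⟩ : ∃ m, n = m + 1 := ⟨n - 1, by omega⟩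
  simpa using sign_finRotate m

/-- The rotation of a word by one step, keyed to a distinguished last value. -/
lemma shuttle' (n : ℕ) (hn : 0 < n) (hq1 : n-1 < n) (γ : Equiv.Perm (Fin n)) (i : Fin n)
    (hγ : γ ⟨n-1, hq1⟩ = i) :
    i :: List.ofFn ⇑γ = List.ofFn ⇑(γ * (finRotate n)⁻¹) ++ [i] := by
  set Γ := γ * (finRotate n)⁻¹ with hΓ
  have hΓe : Γ * finRotate n = γ := inv_mul_cancel_right γ (finRotate n)
  have he : finRotate n ⟨n-1, hq1⟩ = ⟨0, hn⟩ := by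
    have := rot_pow_apply n hn 1 (n-1) hq1
    rw [pow_one] at this
    rw [this]
    apply Fin.ext
    simp only [Fin.val_zero]
    rw [show n - 1 + 1 = n by omega, Nat.mod_self]
  have hΓ0 : Γ ⟨0, hn⟩ = i := by
    rw [hΓ, Equiv.Perm.mul_apply, ← he, show ∀ x, (finRotate n)⁻¹ (finRotate n x) = x from Equiv.symm_apply_apply _, hγ]
  have := shuttle n hn Γ
  rw [hΓe, hΓ0] at this
  exact this

/-- Drop-2 invariance under right multiplication by `swap 0 1`. -/
lemma drop_two_swap01 (n : ℕ) (h0 : 0 < n) (h1 : 1 < n) (s : Equiv.Perm (Fin n)) :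
    (List.ofFn ⇑(s * Equiv.swap (⟨0, h0⟩ : Fin n) ⟨1, h1⟩)).drop 2
      = (List.ofFn ⇑s).drop 2 := by
  apply List.ext_getElem
  · simp
  intro j h1 h2
  simp only [List.getElem_drop, List.getElem_ofFn, Equiv.Perm.mul_apply]
  congr 1
  rw [Equiv.swap_apply_of_ne_of_ne (by simp [Fin.ext_iff]) (by simp [Fin.ext_iff]; omega)]

/-- The middle-window identity for `ω' = γ ∘ e² ∘ swap (n-2) (n-1)`. -/
lemma ofFn_omega' (n : ℕ) (hn : 4 ≤ n) (hq2 : n-2 < n) (hq1 : n-1 < n) (h0 : 0 < n)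
    (h1 : 1 < n) (γ : Equiv.Perm (Fin n)) (x y : Fin n)
    (hx : γ ⟨1, h1⟩ = x) (hy : γ ⟨0, h0⟩ = y) :
    List.ofFn ⇑(γ * (finRotate n)^2 * Equiv.swap (⟨n-2, hq2⟩ : Fin n) ⟨n-1, hq1⟩)
      = (List.ofFn ⇑γ).drop 2 ++ [x, y] := by
  subst hx hy
  apply List.ext_getElem
  · simp; omega
  intro j h1 h2
  have hj : j < n := by simpa using h1
  simp only [List.getElem_ofFn, Equiv.Perm.mul_apply]
  rw [List.getElem_append]
  by_cases hc : j < n - 2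
  · rw [dif_pos (by simpa using hc)]
    simp only [List.getElem_drop, List.getElem_ofFn]
    rw [Equiv.swap_apply_of_ne_of_ne (by simp [Fin.ext_iff]; omega) (by simp [Fin.ext_iff]; omega)]
    congr 1
    rw [rot_pow_apply n (by omega) 2 j hj]
    apply Fin.ext
    simp
    rw [Nat.mod_eq_of_lt (by omega)]
    omega
  · have hj2 : j = n - 2 ∨ j = n - 1 := by omega
    rw [dif_neg (by simpa using hc)]
    rcases hj2 with rfl | rfl
    · rw [show (⟨n-2, hj⟩ : Fin n) = ⟨n-2, by omega⟩ from rfl, Equiv.swap_apply_left]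
      rw [rot_pow_apply n (by omega) 2 (n-1) (by omega)]
      have hl : ((List.ofFn ⇑γ).drop 2).length = n - 2 := by simp
      have hm : n - 2 - ((List.ofFn ⇑γ).drop 2).length = 0 := by omega
      simp only [hm, List.getElem_cons_zero]
      congr 1
      apply Fin.ext
      simp
      rw [show n - 1 + 2 = n + 1 by omega, Nat.add_mod_left, Nat.mod_eq_of_lt (by omega)]
    · rw [show (⟨n-1, hj⟩ : Fin n) = ⟨n-1, by omega⟩ from rfl, Equiv.swap_apply_right]
      rw [rot_pow_apply n (by omega) 2 (n-2) (by omega)]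
      have hl : ((List.ofFn ⇑γ).drop 2).length = n - 2 := by simp
      have hm : n - 1 - ((List.ofFn ⇑γ).drop 2).length = 1 := by omega
      simp only [hm, List.getElem_cons_succ, List.getElem_cons_zero]
      congr 1
      apply Fin.ext
      simp
      rw [show n - 2 + 2 = n by omega, Nat.mod_self]

/-! ### The key commutation for generators -/

lemma neg_one_pow_eq_one_of_even {k : ℕ} (h : 2 ∣ k) : ((-1 : ℤˣ))^k = 1 := by
  obtain ⟨m, rfl⟩ := h
  rw [pow_mul]
  simp

lemma s_facts (n : ℕ) (hn : 4 ≤ n) (hq1 : n-1 < n) (i : Fin n) :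
    ∃ s : Equiv.Perm (Fin n), Equiv.Perm.sign s = 1 ∧ s ⟨n-1, hq1⟩ = i := by
  set p0 : Fin n := ⟨0, by omega⟩
  set p1 : Fin n := ⟨1, by omega⟩
  set q1 : Fin n := ⟨n-1, hq1⟩
  set k := i.1 + 1 with hk
  refine ⟨(finRotate n)^k * (Equiv.swap p0 p1)^(k*(n-1)), ?_, ?_⟩
  · rw [map_mul, map_pow, map_pow, sign_finRotate' n (by omega),
      Equiv.Perm.sign_swap (by simp [p0, p1, Fin.ext_iff])]
    rw [← pow_mul, ← pow_add]
    exact neg_one_pow_eq_one_of_even ⟨(n-1)*k, by ring⟩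
  · rw [Equiv.Perm.mul_apply]
    have hfix : (Equiv.swap p0 p1) q1 = q1 := by
      apply Equiv.swap_apply_of_ne_of_ne <;> (simp [p0, p1, q1, Fin.ext_iff]; omega)
    rw [Equiv.Perm.pow_apply_eq_self_of_apply_eq_self hfix]
    show ((finRotate n)^k) ⟨n-1, by omega⟩ = i
    rw [rot_pow_apply n (by omega) k (n-1) (by omega)]
    apply Fin.ext
    simp only
    rw [hk, show n - 1 + (i.1 + 1) = n + i.1 by omega, Nat.add_mod_left,
      Nat.mod_eq_of_lt i.2]

lemma sign_rot_inv_even (n : ℕ) (hn : 4 ≤ n) (hodd : ¬ 2 ∣ n) :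
    Equiv.Perm.sign ((finRotate n)⁻¹) = 1 := by
  rw [map_inv, sign_finRotate' n (by omega), neg_one_pow_eq_one_of_even (by omega)]
  rfl

lemma gen_comm_odd (n : ℕ) (hn : 4 ≤ n) (hodd : ¬ 2 ∣ n) (i : Fin n) :
    a n i * z n = z n * a n i := by
  have h0 : 0 < n := by omega
  have hq1 : n - 1 < n := by omega
  obtain ⟨s, hs_sign, hs_last⟩ := s_facts n hn hq1 i
  have hsh := shuttle' n h0 hq1 s i hs_last
  have hsign2 : Equiv.Perm.sign (s * (finRotate n)⁻¹) = 1 := by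
    rw [map_mul, hs_sign, sign_rot_inv_even n hn hodd, one_mul]
  calc a n i * z n = Q n [i] * Q n (List.ofFn ⇑s) := by rw [a_eq, Q_perm n s hs_sign]
  _ = Q n ([i] ++ List.ofFn ⇑s) := (Q_append _ _ _).symm
  _ = Q n (List.ofFn ⇑(s * (finRotate n)⁻¹) ++ [i]) := by rw [show [i] ++ List.ofFn ⇑s = i :: List.ofFn ⇑s from rfl, hsh]
  _ = z n * a n i := by rw [Q_append, a_eq, Q_perm n _ hsign2]

lemma gen_comm_even (n : ℕ) (hn : 6 ≤ n) (heven : 2 ∣ n) (i : Fin n) :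
    a n i * (z n)^2 = (z n)^2 * a n i := by
  have h0 : 0 < n := by omega
  have h1 : 1 < n := by omega
  have h2 : 2 < n := by omega
  have h3 : 3 < n := by omega
  have hq2 : n - 2 < n := by omega
  have hq1 : n - 1 < n := by omega
  have hn4 : 4 ≤ n := by omega
  obtain ⟨s, hs_sign, hs_last⟩ := s_facts n hn4 hq1 i
  obtain ⟨γ, hγ⟩ : ∃ x, x = s * Equiv.swap (⟨2, h2⟩ : Fin n) ⟨3, h3⟩ := ⟨_, rfl⟩
  obtain ⟨δ, hδ⟩ : ∃ x, x = s * Equiv.swap (⟨0, h0⟩ : Fin n) ⟨1, h1⟩ := ⟨_, rfl⟩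
  obtain ⟨ω, hω⟩ : ∃ x, x = s * (finRotate n)^2 := ⟨_, rfl⟩
  obtain ⟨ω', hω'⟩ : ∃ x, x = γ * (finRotate n)^2 * Equiv.swap (⟨n-2, hq2⟩ : Fin n) ⟨n-1, hq1⟩ := ⟨_, rfl⟩
  have hsign_e : Equiv.Perm.sign (finRotate n) = -1 := by
    rw [sign_finRotate' n h0]
    exact Odd.neg_one_pow ⟨(n-2)/2, by omega⟩
  -- signs
  have hsγ : Equiv.Perm.sign γ = -1 := by
    rw [hγ, map_mul, hs_sign, Equiv.Perm.sign_swap (by simp [Fin.ext_iff]), one_mul]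
  have hsδ : Equiv.Perm.sign δ = -1 := by
    rw [hδ, map_mul, hs_sign, Equiv.Perm.sign_swap (by simp [Fin.ext_iff]), one_mul]
  have hsω : Equiv.Perm.sign ω = 1 := by
    rw [hω, map_mul, hs_sign, map_pow, hsign_e]
    simp
  have hsω' : Equiv.Perm.sign ω' = 1 := by
    rw [hω', map_mul, map_mul, hsγ, map_pow, hsign_e,
      Equiv.Perm.sign_swap (by simp [Fin.ext_iff]; omega)]
    simp
  have hsΓ : Equiv.Perm.sign (γ * (finRotate n)⁻¹) = 1 := by
    rw [map_mul, hsγ, map_inv, hsign_e]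
    simp
  have hsΔ : Equiv.Perm.sign (δ * (finRotate n)⁻¹) = 1 := by
    rw [map_mul, hsδ, map_inv, hsign_e]
    simp
  -- values
  have hγq1 : γ ⟨n-1, hq1⟩ = i := by
    rw [hγ, Equiv.Perm.mul_apply,
      Equiv.swap_apply_of_ne_of_ne (by simp [Fin.ext_iff]; omega)
        (by simp [Fin.ext_iff]; omega), hs_last]
  have hδq1 : δ ⟨n-1, hq1⟩ = i := by
    rw [hδ, Equiv.Perm.mul_apply,
      Equiv.swap_apply_of_ne_of_ne (by simp [Fin.ext_iff]; omega)
        (by simp [Fin.ext_iff]; omega), hs_last]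
  have hγp0 : γ ⟨0, h0⟩ = s ⟨0, h0⟩ := by
    rw [hγ, Equiv.Perm.mul_apply,
      Equiv.swap_apply_of_ne_of_ne (by simp [Fin.ext_iff]) (by simp [Fin.ext_iff])]
  have hγp1 : γ ⟨1, h1⟩ = s ⟨1, h1⟩ := by
    rw [hγ, Equiv.Perm.mul_apply,
      Equiv.swap_apply_of_ne_of_ne (by simp [Fin.ext_iff]) (by simp [Fin.ext_iff])]
  have hδp0 : δ ⟨0, h0⟩ = s ⟨1, h1⟩ := by
    rw [hδ, Equiv.Perm.mul_apply, Equiv.swap_apply_left]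
  have hδp1 : δ ⟨1, h1⟩ = s ⟨0, h0⟩ := by
    rw [hδ, Equiv.Perm.mul_apply, Equiv.swap_apply_right]
  -- list identities
  have htake2s : (List.ofFn ⇑s).take 2 = [s ⟨0, h0⟩, s ⟨1, h1⟩] :=
    take_two_ofFn' n h0 h1 ⇑s _ _ rfl rfl
  have hA : List.ofFn ⇑ω = (List.ofFn ⇑s).drop 2 ++ [s ⟨0, h0⟩, s ⟨1, h1⟩] := by
    rw [hω, ofFn_mul_rot_pow n h0 s 2 (by omega), htake2s]
  have htake2γ : (List.ofFn ⇑γ).take 2 = [s ⟨0, h0⟩, s ⟨1, h1⟩] :=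
    take_two_ofFn' n h0 h1 ⇑γ _ _ hγp0 hγp1
  have htake2δ : (List.ofFn ⇑δ).take 2 = [s ⟨1, h1⟩, s ⟨0, h0⟩] :=
    take_two_ofFn' n h0 h1 ⇑δ _ _ hδp0 hδp1
  have hdrop2δ : (List.ofFn ⇑δ).drop 2 = (List.ofFn ⇑s).drop 2 := by
    rw [hδ]
    exact drop_two_swap01 n h0 h1 s
  have hB : List.ofFn ⇑ω' = (List.ofFn ⇑γ).drop 2 ++ [s ⟨1, h1⟩, s ⟨0, h0⟩] := by
    rw [hω']
    exact ofFn_omega' n hn4 hq2 hq1 h0 h1 γ _ _ hγp1 hγp0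
  -- the word chain
  have word1 : List.ofFn ⇑s ++ List.ofFn ⇑s
      = [s ⟨0, h0⟩, s ⟨1, h1⟩] ++ (List.ofFn ⇑ω ++ (List.ofFn ⇑s).drop 2) := by
    conv_lhs => rw [← List.take_append_drop 2 (List.ofFn ⇑s)]
    rw [hA, htake2s]
    simp only [List.append_assoc]
  have word2 : [s ⟨0, h0⟩, s ⟨1, h1⟩] ++ (List.ofFn ⇑ω' ++ (List.ofFn ⇑s).drop 2)
      = List.ofFn ⇑γ ++ List.ofFn ⇑δ := by
    rw [hB]
    conv_rhs => rw [← List.take_append_drop 2 (List.ofFn ⇑γ), ← List.take_append_drop 2 (List.ofFn ⇑δ)]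
    rw [htake2γ, htake2δ, hdrop2δ]
    simp only [List.append_assoc]
  have shγ := shuttle' n h0 hq1 γ i hγq1
  have shδ := shuttle' n h0 hq1 δ i hδq1
  calc a n i * (z n)^2 = Q n [i] * (Q n (List.ofFn ⇑s) * Q n (List.ofFn ⇑s)) := by
        rw [a_eq, Q_perm n s hs_sign, pow_two]
  _ = Q n ([i] ++ (List.ofFn ⇑s ++ List.ofFn ⇑s)) := by rw [Q_append, Q_append]
  _ = Q n (([i] ++ [s ⟨0, h0⟩, s ⟨1, h1⟩]) ++ (List.ofFn ⇑ω ++ (List.ofFn ⇑s).drop 2)) := by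
        rw [word1]; simp [List.append_assoc]
  _ = Q n (([i] ++ [s ⟨0, h0⟩, s ⟨1, h1⟩]) ++ (List.ofFn ⇑ω' ++ (List.ofFn ⇑s).drop 2)) :=
        Q_rw n ([i] ++ [s ⟨0, h0⟩, s ⟨1, h1⟩]) ((List.ofFn ⇑s).drop 2) ω ω' hsω hsω'
  _ = Q n ([i] ++ (List.ofFn ⇑γ ++ List.ofFn ⇑δ)) := by
        rw [← word2]; simp [List.append_assoc]
  _ = Q n ((i :: List.ofFn ⇑γ) ++ List.ofFn ⇑δ) := by simp
  _ = Q n (List.ofFn ⇑(γ * (finRotate n)⁻¹)) * (Q n [i] * Q n (List.ofFn ⇑δ)) := by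
        rw [shγ, Q_append, Q_append, mul_assoc]
  _ = Q n (List.ofFn ⇑(γ * (finRotate n)⁻¹)) * Q n (i :: List.ofFn ⇑δ) := by
        rw [show (i :: List.ofFn ⇑δ) = [i] ++ List.ofFn ⇑δ from rfl, Q_append]
  _ = Q n (List.ofFn ⇑(γ * (finRotate n)⁻¹)) * (Q n (List.ofFn ⇑(δ * (finRotate n)⁻¹)) * Q n [i]) := by
        rw [shδ, Q_append]
  _ = (z n)^2 * a n i := by
        rw [Q_perm n _ hsΓ, Q_perm n _ hsΔ, a_eq, pow_two, mul_assoc]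

lemma gen_comm_four (i : Fin 4) :
    a 4 i * (z 4)^2 = (z 4)^2 * a 4 i := by
  have hz : z 4 = Q 4 [0,1,2,3] := (Q_perm 4 1 (by decide)).symm
  fin_cases i
  -- case i = 0
  · calc a 4 (⟨0, by omega⟩ : Fin 4) * (z 4)^2
        = Q 4 [0,0,1,2,3,0,1,2,3] := by
          rw [a_eq, hz, pow_two, ← Q_append, ← Q_append]
          rfl
    _ = Q 4 [0,1,2,0,3,0,1,2,3] := by
          rw [show ([0,0,1,2,3,0,1,2,3] : List (Fin 4)) = [0] ++ (List.ofFn ⇑(Equiv.swap (0 : Fin 4) 1 * Equiv.swap (0 : Fin 4) 1) ++ [0,1,2,3]) by decide,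
              show ([0,1,2,0,3,0,1,2,3] : List (Fin 4)) = [0] ++ (List.ofFn ⇑(Equiv.swap (0 : Fin 4) 1 * Equiv.swap (1 : Fin 4) 2) ++ [0,1,2,3]) by decide]
          exact Q_rw 4 [0] [0,1,2,3] _ _ (by decide) (by decide)
    _ = Q 4 [0,1,2,0,3,1,2,0,3] := by
          rw [show ([0,1,2,0,3,0,1,2,3] : List (Fin 4)) = [0,1,2,0,3] ++ (List.ofFn ⇑(Equiv.swap (0 : Fin 4) 1 * Equiv.swap (0 : Fin 4) 1) ++ []) by decide,
              show ([0,1,2,0,3,1,2,0,3] : List (Fin 4)) = [0,1,2,0,3] ++ (List.ofFn ⇑(Equiv.swap (0 : Fin 4) 1 * Equiv.swap (1 : Fin 4) 2) ++ []) by decide]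
          exact Q_rw 4 [0,1,2,0,3] [] _ _ (by decide) (by decide)
    _ = Q 4 [0,1,2,3,0,2,1,0,3] := by
          rw [show ([0,1,2,0,3,1,2,0,3] : List (Fin 4)) = [0,1,2] ++ (List.ofFn ⇑(Equiv.swap (1 : Fin 4) 2 * Equiv.swap (1 : Fin 4) 3) ++ [0,3]) by decide,
              show ([0,1,2,3,0,2,1,0,3] : List (Fin 4)) = [0,1,2] ++ (List.ofFn ⇑(Equiv.swap (0 : Fin 4) 1 * Equiv.swap (0 : Fin 4) 3) ++ [0,3]) by decide]
          exact Q_rw 4 [0,1,2] [0,3] _ _ (by decide) (by decide)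
    _ = Q 4 [2,0,1,3,0,2,1,0,3] := by
          rw [show ([0,1,2,3,0,2,1,0,3] : List (Fin 4)) = [] ++ (List.ofFn ⇑(Equiv.swap (0 : Fin 4) 1 * Equiv.swap (0 : Fin 4) 1) ++ [0,2,1,0,3]) by decide,
              show ([2,0,1,3,0,2,1,0,3] : List (Fin 4)) = [] ++ (List.ofFn ⇑(Equiv.swap (0 : Fin 4) 1 * Equiv.swap (0 : Fin 4) 2) ++ [0,2,1,0,3]) by decide]
          exact Q_rw 4 [] [0,2,1,0,3] _ _ (by decide) (by decide)
    _ = Q 4 [2,0,1,0,3,1,2,0,3] := by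
          rw [show ([2,0,1,3,0,2,1,0,3] : List (Fin 4)) = [2,0,1] ++ (List.ofFn ⇑(Equiv.swap (0 : Fin 4) 1 * Equiv.swap (0 : Fin 4) 3) ++ [0,3]) by decide,
              show ([2,0,1,0,3,1,2,0,3] : List (Fin 4)) = [2,0,1] ++ (List.ofFn ⇑(Equiv.swap (1 : Fin 4) 2 * Equiv.swap (1 : Fin 4) 3) ++ [0,3]) by decide]
          exact Q_rw 4 [2,0,1] [0,3] _ _ (by decide) (by decide)
    _ = Q 4 [2,0,1,0,3,2,1,3,0] := by
          rw [show ([2,0,1,0,3,1,2,0,3] : List (Fin 4)) = [2,0,1,0,3] ++ (List.ofFn ⇑(Equiv.swap (0 : Fin 4) 1 * Equiv.swap (1 : Fin 4) 2) ++ []) by decide,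
              show ([2,0,1,0,3,2,1,3,0] : List (Fin 4)) = [2,0,1,0,3] ++ (List.ofFn ⇑(Equiv.swap (0 : Fin 4) 2 * Equiv.swap (2 : Fin 4) 3) ++ []) by decide]
          exact Q_rw 4 [2,0,1,0,3] [] _ _ (by decide) (by decide)
    _ = Q 4 [2,0,1,3,2,0,1,3,0] := by
          rw [show ([2,0,1,0,3,2,1,3,0] : List (Fin 4)) = [2,0] ++ (List.ofFn ⇑(Equiv.swap (0 : Fin 4) 1 * Equiv.swap (2 : Fin 4) 3) ++ [1,3,0]) by decide,
              show ([2,0,1,3,2,0,1,3,0] : List (Fin 4)) = [2,0] ++ (List.ofFn ⇑(Equiv.swap (0 : Fin 4) 1 * Equiv.swap (1 : Fin 4) 3) ++ [1,3,0]) by decide]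
          exact Q_rw 4 [2,0] [1,3,0] _ _ (by decide) (by decide)
    _ = Q 4 [0,1,2,3,2,0,1,3,0] := by
          rw [show ([2,0,1,3,2,0,1,3,0] : List (Fin 4)) = [] ++ (List.ofFn ⇑(Equiv.swap (0 : Fin 4) 1 * Equiv.swap (0 : Fin 4) 2) ++ [2,0,1,3,0]) by decide,
              show ([0,1,2,3,2,0,1,3,0] : List (Fin 4)) = [] ++ (List.ofFn ⇑(Equiv.swap (0 : Fin 4) 1 * Equiv.swap (0 : Fin 4) 1) ++ [2,0,1,3,0]) by decide]
          exact Q_rw 4 [] [2,0,1,3,0] _ _ (by decide) (by decide)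
    _ = Q 4 [0,1,2,3,0,1,2,3,0] := by
          rw [show ([0,1,2,3,2,0,1,3,0] : List (Fin 4)) = [0,1,2,3] ++ (List.ofFn ⇑(Equiv.swap (0 : Fin 4) 1 * Equiv.swap (0 : Fin 4) 2) ++ [0]) by decide,
              show ([0,1,2,3,0,1,2,3,0] : List (Fin 4)) = [0,1,2,3] ++ (List.ofFn ⇑(Equiv.swap (0 : Fin 4) 1 * Equiv.swap (0 : Fin 4) 1) ++ [0]) by decide]
          exact Q_rw 4 [0,1,2,3] [0] _ _ (by decide) (by decide)
    _ = (z 4)^2 * a 4 (⟨0, by omega⟩ : Fin 4) := by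
          rw [a_eq, hz, pow_two, ← Q_append, ← Q_append]
          rfl
  -- case i = 1
  · calc a 4 (⟨1, by omega⟩ : Fin 4) * (z 4)^2
        = Q 4 [1,0,1,2,3,0,1,2,3] := by
          rw [a_eq, hz, pow_two, ← Q_append, ← Q_append]
          rfl
    _ = Q 4 [1,0,3,1,2,0,1,2,3] := by
          rw [show ([1,0,1,2,3,0,1,2,3] : List (Fin 4)) = [1] ++ (List.ofFn ⇑(Equiv.swap (0 : Fin 4) 1 * Equiv.swap (0 : Fin 4) 1) ++ [0,1,2,3]) by decide,
              show ([1,0,3,1,2,0,1,2,3] : List (Fin 4)) = [1] ++ (List.ofFn ⇑(Equiv.swap (1 : Fin 4) 2 * Equiv.swap (1 : Fin 4) 3) ++ [0,1,2,3]) by decide]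
          exact Q_rw 4 [1] [0,1,2,3] _ _ (by decide) (by decide)
    _ = Q 4 [1,0,3,1,2,0,3,1,2] := by
          rw [show ([1,0,3,1,2,0,1,2,3] : List (Fin 4)) = [1,0,3,1,2] ++ (List.ofFn ⇑(Equiv.swap (0 : Fin 4) 1 * Equiv.swap (0 : Fin 4) 1) ++ []) by decide,
              show ([1,0,3,1,2,0,3,1,2] : List (Fin 4)) = [1,0,3,1,2] ++ (List.ofFn ⇑(Equiv.swap (1 : Fin 4) 2 * Equiv.swap (1 : Fin 4) 3) ++ []) by decide]
          exact Q_rw 4 [1,0,3,1,2] [] _ _ (by decide) (by decide)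
    _ = Q 4 [1,0,3,2,0,1,3,1,2] := by
          rw [show ([1,0,3,1,2,0,3,1,2] : List (Fin 4)) = [1,0,3] ++ (List.ofFn ⇑(Equiv.swap (0 : Fin 4) 1 * Equiv.swap (1 : Fin 4) 2) ++ [1,2]) by decide,
              show ([1,0,3,2,0,1,3,1,2] : List (Fin 4)) = [1,0,3] ++ (List.ofFn ⇑(Equiv.swap (0 : Fin 4) 1 * Equiv.swap (0 : Fin 4) 2) ++ [1,2]) by decide]
          exact Q_rw 4 [1,0,3] [1,2] _ _ (by decide) (by decide)
    _ = Q 4 [0,1,2,3,0,1,3,1,2] := by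
          rw [show ([1,0,3,2,0,1,3,1,2] : List (Fin 4)) = [] ++ (List.ofFn ⇑(Equiv.swap (0 : Fin 4) 1 * Equiv.swap (2 : Fin 4) 3) ++ [0,1,3,1,2]) by decide,
              show ([0,1,2,3,0,1,3,1,2] : List (Fin 4)) = [] ++ (List.ofFn ⇑(Equiv.swap (0 : Fin 4) 1 * Equiv.swap (0 : Fin 4) 1) ++ [0,1,3,1,2]) by decide]
          exact Q_rw 4 [] [0,1,3,1,2] _ _ (by decide) (by decide)
    _ = Q 4 [0,1,1,3,2,0,3,1,2] := by
          rw [show ([0,1,2,3,0,1,3,1,2] : List (Fin 4)) = [0,1] ++ (List.ofFn ⇑(Equiv.swap (0 : Fin 4) 2 * Equiv.swap (1 : Fin 4) 3) ++ [3,1,2]) by decide,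
              show ([0,1,1,3,2,0,3,1,2] : List (Fin 4)) = [0,1] ++ (List.ofFn ⇑(Equiv.swap (0 : Fin 4) 1 * Equiv.swap (1 : Fin 4) 3) ++ [3,1,2]) by decide]
          exact Q_rw 4 [0,1] [3,1,2] _ _ (by decide) (by decide)
    _ = Q 4 [0,1,1,3,2,0,2,3,1] := by
          rw [show ([0,1,1,3,2,0,3,1,2] : List (Fin 4)) = [0,1,1,3,2] ++ (List.ofFn ⇑(Equiv.swap (1 : Fin 4) 2 * Equiv.swap (1 : Fin 4) 3) ++ []) by decide,
              show ([0,1,1,3,2,0,2,3,1] : List (Fin 4)) = [0,1,1,3,2] ++ (List.ofFn ⇑(Equiv.swap (1 : Fin 4) 2 * Equiv.swap (2 : Fin 4) 3) ++ []) by decide]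
          exact Q_rw 4 [0,1,1,3,2] [] _ _ (by decide) (by decide)
    _ = Q 4 [0,1,2,3,0,1,2,3,1] := by
          rw [show ([0,1,1,3,2,0,2,3,1] : List (Fin 4)) = [0,1] ++ (List.ofFn ⇑(Equiv.swap (0 : Fin 4) 1 * Equiv.swap (1 : Fin 4) 3) ++ [2,3,1]) by decide,
              show ([0,1,2,3,0,1,2,3,1] : List (Fin 4)) = [0,1] ++ (List.ofFn ⇑(Equiv.swap (0 : Fin 4) 2 * Equiv.swap (1 : Fin 4) 3) ++ [2,3,1]) by decide]
          exact Q_rw 4 [0,1] [2,3,1] _ _ (by decide) (by decide)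
    _ = (z 4)^2 * a 4 (⟨1, by omega⟩ : Fin 4) := by
          rw [a_eq, hz, pow_two, ← Q_append, ← Q_append]
          rfl
  -- case i = 2
  · calc a 4 (⟨2, by omega⟩ : Fin 4) * (z 4)^2
        = Q 4 [2,0,1,2,3,0,1,2,3] := by
          rw [a_eq, hz, pow_two, ← Q_append, ← Q_append]
          rfl
    _ = Q 4 [2,0,1,3,0,2,1,2,3] := by
          rw [show ([2,0,1,2,3,0,1,2,3] : List (Fin 4)) = [2,0,1] ++ (List.ofFn ⇑(Equiv.swap (0 : Fin 4) 2 * Equiv.swap (1 : Fin 4) 3) ++ [2,3]) by decide,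
              show ([2,0,1,3,0,2,1,2,3] : List (Fin 4)) = [2,0,1] ++ (List.ofFn ⇑(Equiv.swap (0 : Fin 4) 1 * Equiv.swap (0 : Fin 4) 3) ++ [2,3]) by decide]
          exact Q_rw 4 [2,0,1] [2,3] _ _ (by decide) (by decide)
    _ = Q 4 [0,2,3,1,0,2,1,2,3] := by
          rw [show ([2,0,1,3,0,2,1,2,3] : List (Fin 4)) = [] ++ (List.ofFn ⇑(Equiv.swap (0 : Fin 4) 1 * Equiv.swap (0 : Fin 4) 2) ++ [0,2,1,2,3]) by decide,
              show ([0,2,3,1,0,2,1,2,3] : List (Fin 4)) = [] ++ (List.ofFn ⇑(Equiv.swap (1 : Fin 4) 2 * Equiv.swap (2 : Fin 4) 3) ++ [0,2,1,2,3]) by decide]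
          exact Q_rw 4 [] [0,2,1,2,3] _ _ (by decide) (by decide)
    _ = Q 4 [0,2,1,3,2,0,1,2,3] := by
          rw [show ([0,2,3,1,0,2,1,2,3] : List (Fin 4)) = [0,2] ++ (List.ofFn ⇑(Equiv.swap (0 : Fin 4) 2 * Equiv.swap (0 : Fin 4) 3) ++ [1,2,3]) by decide,
              show ([0,2,1,3,2,0,1,2,3] : List (Fin 4)) = [0,2] ++ (List.ofFn ⇑(Equiv.swap (0 : Fin 4) 1 * Equiv.swap (1 : Fin 4) 3) ++ [1,2,3]) by decide]
          exact Q_rw 4 [0,2] [1,2,3] _ _ (by decide) (by decide)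
    _ = Q 4 [0,2,1,3,2,0,3,1,2] := by
          rw [show ([0,2,1,3,2,0,1,2,3] : List (Fin 4)) = [0,2,1,3,2] ++ (List.ofFn ⇑(Equiv.swap (0 : Fin 4) 1 * Equiv.swap (0 : Fin 4) 1) ++ []) by decide,
              show ([0,2,1,3,2,0,3,1,2] : List (Fin 4)) = [0,2,1,3,2] ++ (List.ofFn ⇑(Equiv.swap (1 : Fin 4) 2 * Equiv.swap (1 : Fin 4) 3) ++ []) by decide]
          exact Q_rw 4 [0,2,1,3,2] [] _ _ (by decide) (by decide)
    _ = Q 4 [0,2,3,1,0,2,3,1,2] := by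
          rw [show ([0,2,1,3,2,0,3,1,2] : List (Fin 4)) = [0,2] ++ (List.ofFn ⇑(Equiv.swap (0 : Fin 4) 1 * Equiv.swap (1 : Fin 4) 3) ++ [3,1,2]) by decide,
              show ([0,2,3,1,0,2,3,1,2] : List (Fin 4)) = [0,2] ++ (List.ofFn ⇑(Equiv.swap (0 : Fin 4) 2 * Equiv.swap (0 : Fin 4) 3) ++ [3,1,2]) by decide]
          exact Q_rw 4 [0,2] [3,1,2] _ _ (by decide) (by decide)
    _ = Q 4 [0,1,2,3,0,2,3,1,2] := by
          rw [show ([0,2,3,1,0,2,3,1,2] : List (Fin 4)) = [] ++ (List.ofFn ⇑(Equiv.swap (1 : Fin 4) 2 * Equiv.swap (2 : Fin 4) 3) ++ [0,2,3,1,2]) by decide,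
              show ([0,1,2,3,0,2,3,1,2] : List (Fin 4)) = [] ++ (List.ofFn ⇑(Equiv.swap (0 : Fin 4) 1 * Equiv.swap (0 : Fin 4) 1) ++ [0,2,3,1,2]) by decide]
          exact Q_rw 4 [] [0,2,3,1,2] _ _ (by decide) (by decide)
    _ = Q 4 [0,1,2,3,0,1,2,3,2] := by
          rw [show ([0,1,2,3,0,2,3,1,2] : List (Fin 4)) = [0,1,2,3] ++ (List.ofFn ⇑(Equiv.swap (1 : Fin 4) 2 * Equiv.swap (2 : Fin 4) 3) ++ [2]) by decide,
              show ([0,1,2,3,0,1,2,3,2] : List (Fin 4)) = [0,1,2,3] ++ (List.ofFn ⇑(Equiv.swap (0 : Fin 4) 1 * Equiv.swap (0 : Fin 4) 1) ++ [2]) by decide]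
          exact Q_rw 4 [0,1,2,3] [2] _ _ (by decide) (by decide)
    _ = (z 4)^2 * a 4 (⟨2, by omega⟩ : Fin 4) := by
          rw [a_eq, hz, pow_two, ← Q_append, ← Q_append]
          rfl
  -- case i = 3
  · calc a 4 (⟨3, by omega⟩ : Fin 4) * (z 4)^2
        = Q 4 [3,0,1,2,3,0,1,2,3] := by
          rw [a_eq, hz, pow_two, ← Q_append, ← Q_append]
          rfl
    _ = Q 4 [3,0,2,3,1,0,1,2,3] := by
          rw [show ([3,0,1,2,3,0,1,2,3] : List (Fin 4)) = [3] ++ (List.ofFn ⇑(Equiv.swap (0 : Fin 4) 1 * Equiv.swap (0 : Fin 4) 1) ++ [0,1,2,3]) by decide,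
              show ([3,0,2,3,1,0,1,2,3] : List (Fin 4)) = [3] ++ (List.ofFn ⇑(Equiv.swap (1 : Fin 4) 2 * Equiv.swap (2 : Fin 4) 3) ++ [0,1,2,3]) by decide]
          exact Q_rw 4 [3] [0,1,2,3] _ _ (by decide) (by decide)
    _ = Q 4 [3,0,2,3,1,0,2,3,1] := by
          rw [show ([3,0,2,3,1,0,1,2,3] : List (Fin 4)) = [3,0,2,3,1] ++ (List.ofFn ⇑(Equiv.swap (0 : Fin 4) 1 * Equiv.swap (0 : Fin 4) 1) ++ []) by decide,
              show ([3,0,2,3,1,0,2,3,1] : List (Fin 4)) = [3,0,2,3,1] ++ (List.ofFn ⇑(Equiv.swap (1 : Fin 4) 2 * Equiv.swap (2 : Fin 4) 3) ++ []) by decide]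
          exact Q_rw 4 [3,0,2,3,1] [] _ _ (by decide) (by decide)
    _ = Q 4 [3,0,2,1,0,3,2,3,1] := by
          rw [show ([3,0,2,3,1,0,2,3,1] : List (Fin 4)) = [3,0,2] ++ (List.ofFn ⇑(Equiv.swap (0 : Fin 4) 2 * Equiv.swap (0 : Fin 4) 3) ++ [3,1]) by decide,
              show ([3,0,2,1,0,3,2,3,1] : List (Fin 4)) = [3,0,2] ++ (List.ofFn ⇑(Equiv.swap (0 : Fin 4) 1 * Equiv.swap (2 : Fin 4) 3) ++ [3,1]) by decide]
          exact Q_rw 4 [3,0,2] [3,1] _ _ (by decide) (by decide)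
    _ = Q 4 [0,3,1,2,0,3,2,3,1] := by
          rw [show ([3,0,2,1,0,3,2,3,1] : List (Fin 4)) = [] ++ (List.ofFn ⇑(Equiv.swap (0 : Fin 4) 1 * Equiv.swap (0 : Fin 4) 3) ++ [0,3,2,3,1]) by decide,
              show ([0,3,1,2,0,3,2,3,1] : List (Fin 4)) = [] ++ (List.ofFn ⇑(Equiv.swap (1 : Fin 4) 2 * Equiv.swap (1 : Fin 4) 3) ++ [0,3,2,3,1]) by decide]
          exact Q_rw 4 [] [0,3,2,3,1] _ _ (by decide) (by decide)
    _ = Q 4 [0,3,1,3,2,0,2,3,1] := by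
          rw [show ([0,3,1,2,0,3,2,3,1] : List (Fin 4)) = [0,3] ++ (List.ofFn ⇑(Equiv.swap (0 : Fin 4) 1 * Equiv.swap (1 : Fin 4) 2) ++ [2,3,1]) by decide,
              show ([0,3,1,3,2,0,2,3,1] : List (Fin 4)) = [0,3] ++ (List.ofFn ⇑(Equiv.swap (0 : Fin 4) 1 * Equiv.swap (1 : Fin 4) 3) ++ [2,3,1]) by decide]
          exact Q_rw 4 [0,3] [2,3,1] _ _ (by decide) (by decide)
    _ = Q 4 [0,3,1,3,2,0,1,2,3] := by
          rw [show ([0,3,1,3,2,0,2,3,1] : List (Fin 4)) = [0,3,1,3,2] ++ (List.ofFn ⇑(Equiv.swap (1 : Fin 4) 2 * Equiv.swap (2 : Fin 4) 3) ++ []) by decide,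
              show ([0,3,1,3,2,0,1,2,3] : List (Fin 4)) = [0,3,1,3,2] ++ (List.ofFn ⇑(Equiv.swap (0 : Fin 4) 1 * Equiv.swap (0 : Fin 4) 1) ++ []) by decide]
          exact Q_rw 4 [0,3,1,3,2] [] _ _ (by decide) (by decide)
    _ = Q 4 [0,3,1,2,0,3,1,2,3] := by
          rw [show ([0,3,1,3,2,0,1,2,3] : List (Fin 4)) = [0,3] ++ (List.ofFn ⇑(Equiv.swap (0 : Fin 4) 1 * Equiv.swap (1 : Fin 4) 3) ++ [1,2,3]) by decide,
              show ([0,3,1,2,0,3,1,2,3] : List (Fin 4)) = [0,3] ++ (List.ofFn ⇑(Equiv.swap (0 : Fin 4) 1 * Equiv.swap (1 : Fin 4) 2) ++ [1,2,3]) by decide]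
          exact Q_rw 4 [0,3] [1,2,3] _ _ (by decide) (by decide)
    _ = Q 4 [0,1,2,3,0,3,1,2,3] := by
          rw [show ([0,3,1,2,0,3,1,2,3] : List (Fin 4)) = [] ++ (List.ofFn ⇑(Equiv.swap (1 : Fin 4) 2 * Equiv.swap (1 : Fin 4) 3) ++ [0,3,1,2,3]) by decide,
              show ([0,1,2,3,0,3,1,2,3] : List (Fin 4)) = [] ++ (List.ofFn ⇑(Equiv.swap (0 : Fin 4) 1 * Equiv.swap (0 : Fin 4) 1) ++ [0,3,1,2,3]) by decide]
          exact Q_rw 4 [] [0,3,1,2,3] _ _ (by decide) (by decide)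
    _ = Q 4 [0,1,2,3,0,1,2,3,3] := by
          rw [show ([0,1,2,3,0,3,1,2,3] : List (Fin 4)) = [0,1,2,3] ++ (List.ofFn ⇑(Equiv.swap (1 : Fin 4) 2 * Equiv.swap (1 : Fin 4) 3) ++ [3]) by decide,
              show ([0,1,2,3,0,1,2,3,3] : List (Fin 4)) = [0,1,2,3] ++ (List.ofFn ⇑(Equiv.swap (0 : Fin 4) 1 * Equiv.swap (0 : Fin 4) 1) ++ [3]) by decide]
          exact Q_rw 4 [0,1,2,3] [3] _ _ (by decide) (by decide)
    _ = (z 4)^2 * a 4 (⟨3, by omega⟩ : Fin 4) := by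
          rw [a_eq, hz, pow_two, ← Q_append, ← Q_append]
          rfl

lemma gen_comm (n : ℕ) (hn : 4 ≤ n) (i : Fin n) :
    a n i * (z n)^2 = (z n)^2 * a n i := by
  by_cases h2 : 2 ∣ n
  · rcases eq_or_lt_of_le hn with h4 | h5
    · subst h4
      exact gen_comm_four i
    · exact gen_comm_even n (by omega) h2 i
  · have h := gen_comm_odd n (by omega) h2 i
    calc a n i * (z n)^2 = (a n i * z n) * z n := by rw [pow_two, mul_assoc]
    _ = (z n * a n i) * z n := by rw [h]
    _ = z n * (a n i * z n) := by rw [mul_assoc]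
    _ = z n * (z n * a n i) := by rw [h]
    _ = (z n)^2 * a n i := by rw [pow_two, mul_assoc]

/-- in `M = Sₙ(Altₙ)` with `n ≥ 4`, `z² = (a₁a₂⋯aₙ)²` is central. -/
theorem stmt7 (n : ℕ) (hn : 4 ≤ n) (x : SAlt n) :
    (z n) ^ 2 * x = x * (z n) ^ 2 := by
  have key : ∀ l : List (Fin n), (z n)^2 * Q n l = Q n l * (z n)^2 := by
    intro l
    induction l with
    | nil =>
      have : Q n [] = 1 := rfl
      rw [this, mul_one, one_mul]
    | cons h t ih =>
      have : Q n (h :: t) = Q n [h] * Q n t := Q_append n [h] t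
      rw [this, ← mul_assoc, ← a_eq, ← gen_comm n hn h, mul_assoc, ih, mul_assoc]
  induction x using Con.induction_on with
  | H w =>
    have : (w : SAlt n) = Q n (FreeMonoid.toList w) := rfl
    rw [this, key]
end

section
/- Let M = S_4(Alt_4) and z = a_1a_2a_3a_4. Then a_1a_2a_4a_3·z = σ(a_1a_2a_4a_3)·z for every σ ∈ Alt_4 (where σ acts by permuting the indices of the generators), and the element a_1a_2a_4a_3·z is central in M. -/
def mkP (f g : Fin 4 → Fin 4) (h1 : ∀ x, g (f x) = x) (h2 : ∀ x, f (g x) = x) :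
    Equiv.Perm (Fin 4) := ⟨f, g, h1, h2⟩

lemma seqrel (σ τ : Equiv.Perm (Fin 4)) (hσ : Equiv.Perm.sign σ = 1) (hτ : Equiv.Perm.sign τ = 1)
    (s t : List (Fin 4)) (hs : List.ofFn (fun i => σ i) = s) (ht : List.ofFn (fun i => τ i) = t) :
    SnCon 4 (AltH 4) (.ofList s) (.ofList t) :=
  ConGen.Rel.trans
    (ConGen.Rel.symm (ConGen.Rel.of _ _ ⟨σ, Equiv.Perm.mem_alternatingGroup.mpr hσ, rfl, by rw [hs]⟩))
    (ConGen.Rel.of _ _ ⟨τ, Equiv.Perm.mem_alternatingGroup.mpr hτ, rfl, by rw [ht]⟩)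

lemma mid (pre s t suf : List (Fin 4)) (h : SnCon 4 (AltH 4) (.ofList s) (.ofList t)) :
    SnCon 4 (AltH 4) (.ofList (pre ++ s ++ suf)) (.ofList (pre ++ t ++ suf)) :=
  ConGen.Rel.mul (ConGen.Rel.mul (ConGen.Rel.refl (FreeMonoid.ofList pre)) h)
    (ConGen.Rel.refl (FreeMonoid.ofList suf))

lemma toEq {x y : FreeMonoid (Fin 4)} (h : SnCon 4 (AltH 4) x y) :
    (SnCon 4 (AltH 4)).mk' x = (SnCon 4 (AltH 4)).mk' y := (Con.eq _).mpr h

lemma prodList (u0 u1 u2 u3 : Fin 4) : a 4 u0 * a 4 u1 * a 4 u2 * a 4 u3 * z 4 =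
    (SnCon 4 (AltH 4)).mk' (.ofList [u0,u1,u2,u3,0,1,2,3]) := rfl

def P0123 : Equiv.Perm (Fin 4) := mkP ![0,1,2,3] ![0,1,2,3] (by decide) (by decide)

lemma hP0123 : Equiv.Perm.sign P0123 = 1 := by decide

def P0231 : Equiv.Perm (Fin 4) := mkP ![0,2,3,1] ![0,3,1,2] (by decide) (by decide)

lemma hP0231 : Equiv.Perm.sign P0231 = 1 := by decide

def P0312 : Equiv.Perm (Fin 4) := mkP ![0,3,1,2] ![0,2,3,1] (by decide) (by decide)

lemma hP0312 : Equiv.Perm.sign P0312 = 1 := by decide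

def P1032 : Equiv.Perm (Fin 4) := mkP ![1,0,3,2] ![1,0,3,2] (by decide) (by decide)

lemma hP1032 : Equiv.Perm.sign P1032 = 1 := by decide

def P1203 : Equiv.Perm (Fin 4) := mkP ![1,2,0,3] ![2,0,1,3] (by decide) (by decide)

lemma hP1203 : Equiv.Perm.sign P1203 = 1 := by decide

def P1320 : Equiv.Perm (Fin 4) := mkP ![1,3,2,0] ![3,0,2,1] (by decide) (by decide)

lemma hP1320 : Equiv.Perm.sign P1320 = 1 := by decide

def P2013 : Equiv.Perm (Fin 4) := mkP ![2,0,1,3] ![1,2,0,3] (by decide) (by decide)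

lemma hP2013 : Equiv.Perm.sign P2013 = 1 := by decide

def P2130 : Equiv.Perm (Fin 4) := mkP ![2,1,3,0] ![3,1,0,2] (by decide) (by decide)

lemma hP2130 : Equiv.Perm.sign P2130 = 1 := by decide

def P2301 : Equiv.Perm (Fin 4) := mkP ![2,3,0,1] ![2,3,0,1] (by decide) (by decide)

lemma hP2301 : Equiv.Perm.sign P2301 = 1 := by decide

def P3021 : Equiv.Perm (Fin 4) := mkP ![3,0,2,1] ![1,3,2,0] (by decide) (by decide)

lemma hP3021 : Equiv.Perm.sign P3021 = 1 := by decide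

def P3102 : Equiv.Perm (Fin 4) := mkP ![3,1,0,2] ![2,1,3,0] (by decide) (by decide)

lemma hP3102 : Equiv.Perm.sign P3102 = 1 := by decide

def P3210 : Equiv.Perm (Fin 4) := mkP ![3,2,1,0] ![3,2,1,0] (by decide) (by decide)

lemma hP3210 : Equiv.Perm.sign P3210 = 1 := by decide

lemma con_0213 : SnCon 4 (AltH 4) (.ofList [0,1,3,2,0,1,2,3]) (.ofList [0,2,1,3,0,1,2,3]) :=
  (mid [0] [1,3,2,0] [2,1,3,0] [1,2,3] (seqrel P1320 P2130 hP1320 hP2130 [1,3,2,0] [2,1,3,0] (by decide) (by decide)))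

lemma con_0321 : SnCon 4 (AltH 4) (.ofList [0,1,3,2,0,1,2,3]) (.ofList [0,3,2,1,0,1,2,3]) :=
  (mid [0] [1,3,2,0] [3,2,1,0] [1,2,3] (seqrel P1320 P3210 hP1320 hP3210 [1,3,2,0] [3,2,1,0] (by decide) (by decide)))

lemma con_1023 : SnCon 4 (AltH 4) (.ofList [0,1,3,2,0,1,2,3]) (.ofList [1,0,2,3,0,1,2,3]) :=
  (ConGen.Rel.trans (mid [0] [1,3,2,0] [1,2,0,3] [1,2,3] (seqrel P1320 P1203 hP1320 hP1203 [1,3,2,0] [1,2,0,3] (by decide) (by decide))) (ConGen.Rel.trans (mid [0,1,2] [0,3,1,2] [3,1,0,2] [3] (seqrel P0312 P3102 hP0312 hP3102 [0,3,1,2] [3,1,0,2] (by decide) (by decide))) (ConGen.Rel.trans (mid [] [0,1,2,3] [1,0,3,2] [1,0,2,3] (seqrel P0123 P1032 hP0123 hP1032 [0,1,2,3] [1,0,3,2] (by decide) (by decide))) (mid [1,0] [3,2,1,0] [2,3,0,1] [2,3] (seqrel P3210 P2301 hP3210 hP2301 [3,2,1,0] [2,3,0,1] (by decide) (by decide)))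)))

lemma con_1230 : SnCon 4 (AltH 4) (.ofList [0,1,3,2,0,1,2,3]) (.ofList [1,2,3,0,0,1,2,3]) :=
  (ConGen.Rel.trans (mid [0] [1,3,2,0] [1,2,0,3] [1,2,3] (seqrel P1320 P1203 hP1320 hP1203 [1,3,2,0] [1,2,0,3] (by decide) (by decide))) (ConGen.Rel.trans (mid [0,1,2] [0,3,1,2] [3,0,2,1] [3] (seqrel P0312 P3021 hP0312 hP3021 [0,3,1,2] [3,0,2,1] (by decide) (by decide))) (ConGen.Rel.trans (mid [] [0,1,2,3] [1,2,0,3] [0,2,1,3] (seqrel P0123 P1203 hP0123 hP1203 [0,1,2,3] [1,2,0,3] (by decide) (by decide))) (ConGen.Rel.trans (mid [1,2,0] [3,0,2,1] [1,3,2,0] [3] (seqrel P3021 P1320 hP3021 hP1320 [3,0,2,1] [1,3,2,0] (by decide) (by decide))) (ConGen.Rel.trans (mid [1] [2,0,1,3] [2,3,0,1] [2,0,3] (seqrel P2013 P2301 hP2013 hP2301 [2,0,1,3] [2,3,0,1] (by decide) (by decide))) (mid [1,2,3,0] [1,2,0,3] [0,1,2,3] [] (seqrel P1203 P0123 hP1203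 hP0123 [1,2,0,3] [0,1,2,3] (by decide) (by decide))))))))

lemma con_1302 : SnCon 4 (AltH 4) (.ofList [0,1,3,2,0,1,2,3]) (.ofList [1,3,0,2,0,1,2,3]) :=
  (ConGen.Rel.trans (mid [0] [1,3,2,0] [1,2,0,3] [1,2,3] (seqrel P1320 P1203 hP1320 hP1203 [1,3,2,0] [1,2,0,3] (by decide) (by decide))) (ConGen.Rel.trans (mid [0,1,2] [0,3,1,2] [3,0,2,1] [3] (seqrel P0312 P3021 hP0312 hP3021 [0,3,1,2] [3,0,2,1] (by decide) (by decide))) (ConGen.Rel.trans (mid [] [0,1,2,3] [1,2,0,3] [0,2,1,3] (seqrel P0123 P1203 hP0123 hP1203 [0,1,2,3] [1,2,0,3] (by decide) (by decide))) (ConGen.Rel.trans (mid [1,2,0] [3,0,2,1] [1,3,2,0] [3] (seqrel P3021 P1320 hP3021 hP1320 [3,0,2,1] [1,3,2,0] (by decide) (by decide))) (ConGen.Rel.trans (mid [1] [2,0,1,3] [3,0,2,1] [2,0,3] (seqrel P2013 P3021 hP2013 hP3021 [2,0,1,3] [3,0,2,1] (by decide) (by decide))) (mid [1,3,0,2] [1,2,0,3]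 [0,1,2,3] [] (seqrel P1203 P0123 hP1203 hP0123 [1,2,0,3] [0,1,2,3] (by decide) (by decide))))))))

lemma con_2031 : SnCon 4 (AltH 4) (.ofList [0,1,3,2,0,1,2,3]) (.ofList [2,0,3,1,0,1,2,3]) :=
  (ConGen.Rel.trans (mid [0] [1,3,2,0] [1,2,0,3] [1,2,3] (seqrel P1320 P1203 hP1320 hP1203 [1,3,2,0] [1,2,0,3] (by decide) (by decide))) (ConGen.Rel.trans (mid [0,1,2] [0,3,1,2] [3,0,2,1] [3] (seqrel P0312 P3021 hP0312 hP3021 [0,3,1,2] [3,0,2,1] (by decide) (by decide))) (ConGen.Rel.trans (mid [] [0,1,2,3] [2,0,1,3] [0,2,1,3] (seqrel P0123 P2013 hP0123 hP2013 [0,1,2,3] [2,0,1,3] (by decide) (by decide))) (ConGen.Rel.trans (mid [2,0,1] [3,0,2,1] [2,3,0,1] [3] (seqrel P3021 P2301 hP3021 hP2301 [3,0,2,1] [2,3,0,1] (by decide) (by decide))) (ConGen.Rel.trans (mid [2] [0,1,2,3] [0,3,1,2] [0,1,3] (seqrel P0123 P0312 hP0123 hP0312 [0,1,2,3] [0,3,1,2]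 (by decide) (by decide))) (mid [2,0,3,1] [2,0,1,3] [0,1,2,3] [] (seqrel P2013 P0123 hP2013 hP0123 [2,0,1,3] [0,1,2,3] (by decide) (by decide))))))))

lemma con_2103 : SnCon 4 (AltH 4) (.ofList [0,1,3,2,0,1,2,3]) (.ofList [2,1,0,3,0,1,2,3]) :=
  (ConGen.Rel.trans (mid [0] [1,3,2,0] [1,2,0,3] [1,2,3] (seqrel P1320 P1203 hP1320 hP1203 [1,3,2,0] [1,2,0,3] (by decide) (by decide))) (ConGen.Rel.trans (mid [0,1,2] [0,3,1,2] [3,2,1,0] [3] (seqrel P0312 P3210 hP0312 hP3210 [0,3,1,2] [3,2,1,0] (by decide) (by decide))) (ConGen.Rel.trans (mid [] [0,1,2,3] [2,1,3,0] [2,1,0,3] (seqrel P0123 P2130 hP0123 hP2130 [0,1,2,3] [2,1,3,0] (by decide) (by decide))) (ConGen.Rel.trans (mid [2,1] [3,0,2,1] [0,3,1,2] [0,3] (seqrel P3021 P0312 hP3021 hP0312 [3,0,2,1] [0,3,1,2] (by decide) (by decide))) (mid [2,1,0,3] [1,2,0,3] [0,1,2,3] [] (seqrel P1203 P0123 hP1203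 hP0123 [1,2,0,3] [0,1,2,3] (by decide) (by decide)))))))

lemma con_2310 : SnCon 4 (AltH 4) (.ofList [0,1,3,2,0,1,2,3]) (.ofList [2,3,1,0,0,1,2,3]) :=
  (ConGen.Rel.trans (mid [0] [1,3,2,0] [1,2,0,3] [1,2,3] (seqrel P1320 P1203 hP1320 hP1203 [1,3,2,0] [1,2,0,3] (by decide) (by decide))) (ConGen.Rel.trans (mid [0,1,2] [0,3,1,2] [3,0,2,1] [3] (seqrel P0312 P3021 hP0312 hP3021 [0,3,1,2] [3,0,2,1] (by decide) (by decide))) (ConGen.Rel.trans (mid [] [0,1,2,3] [2,0,1,3] [0,2,1,3] (seqrel P0123 P2013 hP0123 hP2013 [0,1,2,3] [2,0,1,3] (by decide) (by decide))) (ConGen.Rel.trans (mid [2,0,1] [3,0,2,1] [2,3,0,1] [3] (seqrel P3021 P2301 hP3021 hP2301 [3,0,2,1] [2,3,0,1] (by decide) (by decide))) (ConGen.Rel.trans (mid [2] [0,1,2,3] [3,1,0,2] [0,1,3] (seqrel P0123 P3102 hP0123 hP3102 [0,1,2,3] [3,1,0,2] (by decide) (by decide))) (mid [2,3,1,0] [2,0,1,3]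 [0,1,2,3] [] (seqrel P2013 P0123 hP2013 hP0123 [2,0,1,3] [0,1,2,3] (by decide) (by decide))))))))

lemma con_3012 : SnCon 4 (AltH 4) (.ofList [0,1,3,2,0,1,2,3]) (.ofList [3,0,1,2,0,1,2,3]) :=
  (ConGen.Rel.trans (mid [0,1,3,2] [0,1,2,3] [0,3,1,2] [] (seqrel P0123 P0312 hP0123 hP0312 [0,1,2,3] [0,3,1,2] (by decide) (by decide))) (ConGen.Rel.trans (mid [0] [1,3,2,0] [3,1,0,2] [3,1,2] (seqrel P1320 P3102 hP1320 hP3102 [1,3,2,0] [3,1,0,2] (by decide) (by decide))) (ConGen.Rel.trans (mid [0,3,1] [0,2,3,1] [2,3,0,1] [2] (seqrel P0231 P2301 hP0231 hP2301 [0,2,3,1] [2,3,0,1] (by decide) (by decide))) (ConGen.Rel.trans (mid [] [0,3,1,2] [3,0,2,1] [3,0,1,2] (seqrel P0312 P3021 hP0312 hP3021 [0,3,1,2] [3,0,2,1] (by decide) (by decide))) (ConGen.Rel.trans (mid [3,0] [2,1,3,0] [1,2,0,3] [1,2] (seqrel P2130 P1203 hP2130 hP1203 [2,1,3,0] [1,2,0,3]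 (by decide) (by decide))) (mid [3,0,1,2] [0,3,1,2] [0,1,2,3] [] (seqrel P0312 P0123 hP0312 hP0123 [0,3,1,2] [0,1,2,3] (by decide) (by decide))))))))

lemma con_3120 : SnCon 4 (AltH 4) (.ofList [0,1,3,2,0,1,2,3]) (.ofList [3,1,2,0,0,1,2,3]) :=
  (ConGen.Rel.trans (mid [0,1,3,2] [0,1,2,3] [1,0,3,2] [] (seqrel P0123 P1032 hP0123 hP1032 [0,1,2,3] [1,0,3,2] (by decide) (by decide))) (ConGen.Rel.trans (mid [0,1] [3,2,1,0] [2,3,0,1] [3,2] (seqrel P3210 P2301 hP3210 hP2301 [3,2,1,0] [2,3,0,1] (by decide) (by decide))) (ConGen.Rel.trans (mid [] [0,1,2,3] [3,1,0,2] [0,1,3,2] (seqrel P0123 P3102 hP0123 hP3102 [0,1,2,3] [3,1,0,2] (by decide) (by decide))) (ConGen.Rel.trans (mid [3,1,0] [2,0,1,3] [3,2,1,0] [2] (seqrel P2013 P3210 hP2013 hP3210 [2,0,1,3] [3,2,1,0] (by decide) (by decide))) (ConGen.Rel.trans (mid [3] [1,0,3,2] [1,2,0,3] [1,0,2] (seqrel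 P1032 P1203 hP1032 hP1203 [1,0,3,2] [1,2,0,3] (by decide) (by decide))) (mid [3,1,2,0] [3,1,0,2] [0,1,2,3] [] (seqrel P3102 P0123 hP3102 hP0123 [3,1,0,2] [0,1,2,3] (by decide) (by decide))))))))

lemma con_3201 : SnCon 4 (AltH 4) (.ofList [0,1,3,2,0,1,2,3]) (.ofList [3,2,0,1,0,1,2,3]) :=
  (ConGen.Rel.trans (mid [0,1,3,2] [0,1,2,3] [0,2,3,1] [] (seqrel P0123 P0231 hP0123 hP0231 [0,1,2,3] [0,2,3,1] (by decide) (by decide))) (ConGen.Rel.trans (mid [0] [1,3,2,0] [2,3,0,1] [2,3,1] (seqrel P1320 P2301 hP1320 hP2301 [1,3,2,0] [2,3,0,1] (by decide) (by decide))) (ConGen.Rel.trans (mid [0,2,3] [0,1,2,3] [1,3,2,0] [1] (seqrel P0123 P1320 hP0123 hP1320 [0,1,2,3] [1,3,2,0] (by decide) (by decide))) (ConGen.Rel.trans (mid [] [0,2,3,1] [3,2,1,0] [3,2,0,1] (seqrel P0231 P3210 hP0231 hP3210 [0,2,3,1] [3,2,1,0] (by decide) (by decide))) (ConGen.Rel.trans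 (mid [3,2] [1,0,3,2] [0,1,2,3] [0,1] (seqrel P1032 P0123 hP1032 hP0123 [1,0,3,2] [0,1,2,3] (by decide) (by decide))) (mid [3,2,0,1] [2,3,0,1] [0,1,2,3] [] (seqrel P2301 P0123 hP2301 hP0123 [2,3,0,1] [0,1,2,3] (by decide) (by decide))))))))

lemma con_g0 : SnCon 4 (AltH 4) (.ofList [0,1,3,2,0,1,2,3,0]) (.ofList [0,0,1,3,2,0,1,2,3]) :=
  (ConGen.Rel.trans (mid [0,1,3,2] [0,1,2,3] [1,0,3,2] [0] (seqrel P0123 P1032 hP0123 hP1032 [0,1,2,3] [1,0,3,2] (by decide) (by decide))) (ConGen.Rel.trans (mid [0,1] [3,2,1,0] [0,2,3,1] [3,2,0] (seqrel P3210 P0231 hP3210 hP0231 [3,2,1,0] [0,2,3,1] (by decide) (by decide))) (ConGen.Rel.trans (mid [0,1,0,2,3] [1,3,2,0] [0,1,2,3] [] (seqrel P1320 P0123 hP1320 hP0123 [1,3,2,0] [0,1,2,3] (by decide) (by decide))) (ConGen.Rel.trans (mid [0,1,0] [2,3,0,1] [3,2,1,0] [2,3] (seqrel P2301 P3210 hP2301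 hP3210 [2,3,0,1] [3,2,1,0] (by decide) (by decide))) (ConGen.Rel.trans (mid [0] [1,0,3,2] [0,1,2,3] [1,0,2,3] (seqrel P1032 P0123 hP1032 hP0123 [1,0,3,2] [0,1,2,3] (by decide) (by decide))) (ConGen.Rel.trans (mid [0,0,1,2] [3,1,0,2] [0,3,1,2] [3] (seqrel P3102 P0312 hP3102 hP0312 [3,1,0,2] [0,3,1,2] (by decide) (by decide))) (mid [0,0] [1,2,0,3] [1,3,2,0] [1,2,3] (seqrel P1203 P1320 hP1203 hP1320 [1,2,0,3] [1,3,2,0] (by decide) (by decide)))))))))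

lemma con_g1 : SnCon 4 (AltH 4) (.ofList [0,1,3,2,0,1,2,3,1]) (.ofList [1,0,1,3,2,0,1,2,3]) :=
  (ConGen.Rel.trans (mid [0] [1,3,2,0] [1,2,0,3] [1,2,3,1] (seqrel P1320 P1203 hP1320 hP1203 [1,3,2,0] [1,2,0,3] (by decide) (by decide))) (ConGen.Rel.trans (mid [0,1,2] [0,3,1,2] [3,1,0,2] [3,1] (seqrel P0312 P3102 hP0312 hP3102 [0,3,1,2] [3,1,0,2] (by decide) (by decide))) (ConGen.Rel.trans (mid [] [0,1,2,3] [1,0,3,2] [1,0,2,3,1] (seqrel P0123 P1032 hP0123 hP1032 [0,1,2,3] [1,0,3,2] (by decide) (by decide))) (ConGen.Rel.trans (mid [1,0] [3,2,1,0] [1,3,2,0] [2,3,1] (seqrel P3210 P1320 hP3210 hP1320 [3,2,1,0] [1,3,2,0] (by decide) (by decide))) (mid [1,0,1,3,2] [0,2,3,1] [0,1,2,3] [] (seqrel P0231 P0123 hP0231 hP0123 [0,2,3,1] [0,1,2,3] (by decide) (by decide)))))))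

lemma con_g2 : SnCon 4 (AltH 4) (.ofList [0,1,3,2,0,1,2,3,2]) (.ofList [2,0,1,3,2,0,1,2,3]) :=
  (ConGen.Rel.trans (mid [0] [1,3,2,0] [1,2,0,3] [1,2,3,2] (seqrel P1320 P1203 hP1320 hP1203 [1,3,2,0] [1,2,0,3] (by decide) (by decide))) (ConGen.Rel.trans (mid [0,1,2] [0,3,1,2] [3,2,1,0] [3,2] (seqrel P0312 P3210 hP0312 hP3210 [0,3,1,2] [3,2,1,0] (by decide) (by decide))) (ConGen.Rel.trans (mid [] [0,1,2,3] [2,0,1,3] [2,1,0,3,2] (seqrel P0123 P2013 hP0123 hP2013 [0,1,2,3] [2,0,1,3] (by decide) (by decide))) (mid [2,0,1,3,2] [1,0,3,2] [0,1,2,3] [] (seqrel P1032 P0123 hP1032 hP0123 [1,0,3,2] [0,1,2,3] (by decide) (by decide))))))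

lemma con_g3 : SnCon 4 (AltH 4) (.ofList [0,1,3,2,0,1,2,3,3]) (.ofList [3,0,1,3,2,0,1,2,3]) :=
  (ConGen.Rel.trans (mid [0,1,3,2] [0,1,2,3] [0,3,1,2] [3] (seqrel P0123 P0312 hP0123 hP0312 [0,1,2,3] [0,3,1,2] (by decide) (by decide))) (ConGen.Rel.trans (mid [0] [1,3,2,0] [3,1,0,2] [3,1,2,3] (seqrel P1320 P3102 hP1320 hP3102 [1,3,2,0] [3,1,0,2] (by decide) (by decide))) (ConGen.Rel.trans (mid [0,3,1] [0,2,3,1] [2,3,0,1] [2,3] (seqrel P0231 P2301 hP0231 hP2301 [0,2,3,1] [2,3,0,1] (by decide) (by decide))) (ConGen.Rel.trans (mid [] [0,3,1,2] [3,0,2,1] [3,0,1,2,3] (seqrel P0312 P3021 hP0312 hP3021 [0,3,1,2] [3,0,2,1] (by decide) (by decide))) (mid [3,0] [2,1,3,0] [1,3,2,0] [1,2,3] (seqrel P2130 P1320 hP2130 hP1320 [2,1,3,0] [1,3,2,0] (by decide) (by decide)))))))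

lemma eq_0213 : a 4 0 * a 4 1 * a 4 3 * a 4 2 * z 4 = a 4 0 * a 4 2 * a 4 1 * a 4 3 * z 4 :=
  (prodList 0 1 3 2).trans ((toEq con_0213).trans (prodList 0 2 1 3).symm)

lemma eq_0321 : a 4 0 * a 4 1 * a 4 3 * a 4 2 * z 4 = a 4 0 * a 4 3 * a 4 2 * a 4 1 * z 4 :=
  (prodList 0 1 3 2).trans ((toEq con_0321).trans (prodList 0 3 2 1).symm)

lemma eq_1023 : a 4 0 * a 4 1 * a 4 3 * a 4 2 * z 4 = a 4 1 * a 4 0 * a 4 2 * a 4 3 * z 4 :=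
  (prodList 0 1 3 2).trans ((toEq con_1023).trans (prodList 1 0 2 3).symm)

lemma eq_1230 : a 4 0 * a 4 1 * a 4 3 * a 4 2 * z 4 = a 4 1 * a 4 2 * a 4 3 * a 4 0 * z 4 :=
  (prodList 0 1 3 2).trans ((toEq con_1230).trans (prodList 1 2 3 0).symm)

lemma eq_1302 : a 4 0 * a 4 1 * a 4 3 * a 4 2 * z 4 = a 4 1 * a 4 3 * a 4 0 * a 4 2 * z 4 :=
  (prodList 0 1 3 2).trans ((toEq con_1302).trans (prodList 1 3 0 2).symm)

lemma eq_2031 : a 4 0 * a 4 1 * a 4 3 * a 4 2 * z 4 = a 4 2 * a 4 0 * a 4 3 * a 4 1 * z 4 :=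
  (prodList 0 1 3 2).trans ((toEq con_2031).trans (prodList 2 0 3 1).symm)

lemma eq_2103 : a 4 0 * a 4 1 * a 4 3 * a 4 2 * z 4 = a 4 2 * a 4 1 * a 4 0 * a 4 3 * z 4 :=
  (prodList 0 1 3 2).trans ((toEq con_2103).trans (prodList 2 1 0 3).symm)

lemma eq_2310 : a 4 0 * a 4 1 * a 4 3 * a 4 2 * z 4 = a 4 2 * a 4 3 * a 4 1 * a 4 0 * z 4 :=
  (prodList 0 1 3 2).trans ((toEq con_2310).trans (prodList 2 3 1 0).symm)

lemma eq_3012 : a 4 0 * a 4 1 * a 4 3 * a 4 2 * z 4 = a 4 3 * a 4 0 * a 4 1 * a 4 2 * z 4 :=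
  (prodList 0 1 3 2).trans ((toEq con_3012).trans (prodList 3 0 1 2).symm)

lemma eq_3120 : a 4 0 * a 4 1 * a 4 3 * a 4 2 * z 4 = a 4 3 * a 4 1 * a 4 2 * a 4 0 * z 4 :=
  (prodList 0 1 3 2).trans ((toEq con_3120).trans (prodList 3 1 2 0).symm)

lemma eq_3201 : a 4 0 * a 4 1 * a 4 3 * a 4 2 * z 4 = a 4 3 * a 4 2 * a 4 0 * a 4 1 * z 4 :=
  (prodList 0 1 3 2).trans ((toEq con_3201).trans (prodList 3 2 0 1).symm)

lemma key : ∀ σ : Equiv.Perm (Fin 4), Equiv.Perm.sign σ = 1 →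
    ([σ 0, σ 1, σ 3, σ 2] : List (Fin 4)) ∈ ([[0,1,3,2],[0,2,1,3],[0,3,2,1],[1,0,2,3],[1,2,3,0],[1,3,0,2],[2,0,3,1],[2,1,0,3],[2,3,1,0],[3,0,1,2],[3,1,2,0],[3,2,0,1]] : List (List (Fin 4))) := by decide

lemma commGen (i : Fin 4) :
    (SnCon 4 (AltH 4)).mk' (.ofList [0,1,3,2,0,1,2,3]) * (SnCon 4 (AltH 4)).mk' (.ofList [i]) =
    (SnCon 4 (AltH 4)).mk' (.ofList [i]) * (SnCon 4 (AltH 4)).mk' (.ofList [0,1,3,2,0,1,2,3]) := by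
  fin_cases i
  · exact toEq con_g0
  · exact toEq con_g1
  · exact toEq con_g2
  · exact toEq con_g3

lemma central (l : List (Fin 4)) :
    (SnCon 4 (AltH 4)).mk' (.ofList [0,1,3,2,0,1,2,3]) * (SnCon 4 (AltH 4)).mk' (.ofList l) =
    (SnCon 4 (AltH 4)).mk' (.ofList l) * (SnCon 4 (AltH 4)).mk' (.ofList [0,1,3,2,0,1,2,3]) := by
  induction l with
  | nil =>
    have h1 : (SnCon 4 (AltH 4)).mk' (.ofList ([] : List (Fin 4))) = 1 := rfl
    rw [h1, mul_one, one_mul]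
  | cons i t ih =>
    have h1 : (SnCon 4 (AltH 4)).mk' (.ofList (i :: t)) =
        (SnCon 4 (AltH 4)).mk' (.ofList [i]) * (SnCon 4 (AltH 4)).mk' (.ofList t) := rfl
    rw [h1, ← mul_assoc, commGen i, mul_assoc, ih, ← mul_assoc]

/-- in `M = S₄(Alt₄)`, `a₁a₂a₄a₃·z = σ(a₁a₂a₄a₃)·z` for every even
permutation `σ`, and the element `a₁a₂a₄a₃·z` is central in `M`. -/
theorem stmt8 :
    (∀ σ ∈ alternatingGroup (Fin 4),
      a 4 0 * a 4 1 * a 4 3 * a 4 2 * z 4 =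
        a 4 (σ 0) * a 4 (σ 1) * a 4 (σ 3) * a 4 (σ 2) * z 4) ∧
    ∀ x : SAlt 4,
      (a 4 0 * a 4 1 * a 4 3 * a 4 2 * z 4) * x =
        x * (a 4 0 * a 4 1 * a 4 3 * a 4 2 * z 4) := by
  constructor
  · intro σ hσ
    have hmem := key σ (Equiv.Perm.mem_alternatingGroup.mp hσ)
    simp only [List.mem_cons, List.not_mem_nil, or_false] at hmem
    rcases hmem with h|h|h|h|h|h|h|h|h|h|h|h
    · simp only [List.cons.injEq, and_true] at h
      obtain ⟨h0, h1, h3, h2⟩ := h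
      rw [h0, h1, h2, h3]
    · simp only [List.cons.injEq, and_true] at h
      obtain ⟨h0, h1, h3, h2⟩ := h
      rw [h0, h1, h2, h3]
      exact eq_0213
    · simp only [List.cons.injEq, and_true] at h
      obtain ⟨h0, h1, h3, h2⟩ := h
      rw [h0, h1, h2, h3]
      exact eq_0321
    · simp only [List.cons.injEq, and_true] at h
      obtain ⟨h0, h1, h3, h2⟩ := h
      rw [h0, h1, h2, h3]
      exact eq_1023
    · simp only [List.cons.injEq, and_true] at h
      obtain ⟨h0, h1, h3, h2⟩ := h
      rw [h0, h1, h2, h3]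
      exact eq_1230
    · simp only [List.cons.injEq, and_true] at h
      obtain ⟨h0, h1, h3, h2⟩ := h
      rw [h0, h1, h2, h3]
      exact eq_1302
    · simp only [List.cons.injEq, and_true] at h
      obtain ⟨h0, h1, h3, h2⟩ := h
      rw [h0, h1, h2, h3]
      exact eq_2031
    · simp only [List.cons.injEq, and_true] at h
      obtain ⟨h0, h1, h3, h2⟩ := h
      rw [h0, h1, h2, h3]
      exact eq_2103
    · simp only [List.cons.injEq, and_true] at h
      obtain ⟨h0, h1, h3, h2⟩ := h
      rw [h0, h1, h2, h3]
      exact eq_2310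
    · simp only [List.cons.injEq, and_true] at h
      obtain ⟨h0, h1, h3, h2⟩ := h
      rw [h0, h1, h2, h3]
      exact eq_3012
    · simp only [List.cons.injEq, and_true] at h
      obtain ⟨h0, h1, h3, h2⟩ := h
      rw [h0, h1, h2, h3]
      exact eq_3120
    · simp only [List.cons.injEq, and_true] at h
      obtain ⟨h0, h1, h3, h2⟩ := h
      rw [h0, h1, h2, h3]
      exact eq_3201
  · intro x
    rw [prodList 0 1 3 2]
    induction x using Con.induction_on with
    | H w => exact central (FreeMonoid.toList w)
end

section
/- Let n ≥ 4 and G = G_n(Alt_n) the group presented by a_1,...,a_n with relations a_1a_2⋯a_n = a_{σ(1)}⋯a_{σ(n)} for all σ ∈ Alt_n. Then for any three distinct indices i, j, k, the equalities a_i a_j a_k = a_j a_k a_i = a_k a_i a_j hold in G, and a_i^2 a_j = a_j a_i^2 for all i, j. -/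
/-- The relator set of `Gₙ(Altₙ)`: the words `(a₁a₂⋯aₙ)(a_{σ(1)}⋯a_{σ(n)})⁻¹`
for all even permutations `σ`. -/
def GAltRels (n : ℕ) : Set (FreeGroup (Fin n)) :=
  { w | ∃ σ ∈ alternatingGroup (Fin n),
      w = (List.ofFn (fun i : Fin n => FreeGroup.of i)).prod *
        ((List.ofFn (fun i : Fin n => FreeGroup.of (σ i))).prod)⁻¹ }

/-- The group `Gₙ(Altₙ) = ⟨a₁,…,aₙ ∣ a₁a₂⋯aₙ = a_{σ(1)}⋯a_{σ(n)}, σ ∈ Altₙ⟩`. -/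
abbrev GAlt (n : ℕ) : Type := PresentedGroup (GAltRels n)

/-- The generator `aᵢ` of `Gₙ(Altₙ)`. -/
def b (n : ℕ) (i : Fin n) : GAlt n := PresentedGroup.of i

namespace Stmt13Aux

open Equiv Equiv.Perm

/-- The word `a_{σ(1)} ⋯ a_{σ(n)}` in `GAlt n`. -/
def Bw (n : ℕ) (σ : Equiv.Perm (Fin n)) : GAlt n :=
  (List.ofFn (fun m => b n (σ m))).prod

lemma Bw_eq_mk (n : ℕ) (σ : Equiv.Perm (Fin n)) :
    Bw n σ = PresentedGroup.mk (GAltRels n)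
      (List.ofFn (fun m => FreeGroup.of (σ m))).prod := by
  rw [Bw, map_list_prod (PresentedGroup.mk (GAltRels n))
    (List.ofFn fun m => FreeGroup.of (σ m)), List.map_ofFn]
  rfl

lemma Bw_eq_one_perm (n : ℕ) (σ : Equiv.Perm (Fin n))
    (hσ : σ ∈ alternatingGroup (Fin n)) : Bw n σ = Bw n 1 := by
  have hrel : PresentedGroup.mk (GAltRels n)
      ((List.ofFn (fun i : Fin n => FreeGroup.of i)).prod *
        ((List.ofFn (fun i : Fin n => FreeGroup.of (σ i))).prod)⁻¹) = 1 := by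
    apply (QuotientGroup.eq_one_iff _).mpr
    exact Subgroup.subset_normalClosure ⟨σ, hσ, rfl⟩
  rw [Bw_eq_mk, Bw_eq_mk]
  simp only [Equiv.Perm.one_apply]
  rw [map_mul, map_inv] at hrel
  have h2 := mul_eq_one_iff_eq_inv.mp hrel
  rw [h2, inv_inv]

lemma exists_perm_three {α : Type*} [DecidableEq α] (p0 p1 p2 i j k : α)
    (hp01 : p0 ≠ p1) (hp02 : p0 ≠ p2) (hp12 : p1 ≠ p2)
    (hij : i ≠ j) (hik : i ≠ k) (hjk : j ≠ k) :
    ∃ τ : Equiv.Perm α, τ p0 = i ∧ τ p1 = j ∧ τ p2 = k := by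
  set t0 : Equiv.Perm α := Equiv.swap p0 i with ht0
  set t1 : Equiv.Perm α := Equiv.swap p1 (t0⁻¹ j) with ht1
  set A : α := (t0 * t1)⁻¹ k with hA
  set t2 : Equiv.Perm α := Equiv.swap p2 A with ht2
  have h1 : t0⁻¹ j ≠ p0 := by
    intro h
    have : j = t0 p0 := by rw [← h]; simp
    rw [Equiv.swap_apply_left] at this
    exact hij this.symm
  have ht1p0 : t1 p0 = p0 := Equiv.swap_apply_of_ne_of_ne hp01 (Ne.symm h1)
  have ht1p1 : t1 p1 = t0⁻¹ j := Equiv.swap_apply_left _ _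
  have hAk : (t0 * t1) A = k := Equiv.apply_symm_apply _ _
  have h2 : A ≠ p0 := by
    intro h
    rw [h, Equiv.Perm.mul_apply, ht1p0, Equiv.swap_apply_left] at hAk
    exact hik hAk
  have h3 : A ≠ p1 := by
    intro h
    rw [h, Equiv.Perm.mul_apply, ht1p1, show t0 (t0⁻¹ j) = j by simp] at hAk
    exact hjk hAk
  refine ⟨t0 * t1 * t2, ?_, ?_, ?_⟩
  · have : t2 p0 = p0 := Equiv.swap_apply_of_ne_of_ne hp02 (Ne.symm h2)
    simp only [Equiv.Perm.mul_apply, this, ht1p0]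
    exact Equiv.swap_apply_left _ _
  · have : t2 p1 = p1 := Equiv.swap_apply_of_ne_of_ne hp12 (Ne.symm h3)
    simp only [Equiv.Perm.mul_apply, this, ht1p1]
    simp
  · have : t2 p2 = A := Equiv.swap_apply_left _ _
    show (t0 * t1) (t2 p2) = k
    rw [this]
    exact hAk


lemma split_end {G : Type*} [Monoid G] (m : ℕ) (f : Fin (m + 4) → G) :
    (List.ofFn f).prod = (List.ofFn fun x : Fin (m + 1) => f (Fin.castAdd 3 x)).prod *
      (f ⟨m + 1, by omega⟩ * f ⟨m + 2, by omega⟩ * f ⟨m + 3, by omega⟩) := by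
  have h := List.ofFn_add (n := m + 1) (m := 3) (f := f)
  rw [h, List.prod_append]
  congr 1
  have e0 : f (Fin.natAdd (m + 1) (0 : Fin 3)) = f ⟨m + 1, by omega⟩ := rfl
  have e1 : f (Fin.natAdd (m + 1) (1 : Fin 3)) = f ⟨m + 2, by omega⟩ := rfl
  have e2 : f (Fin.natAdd (m + 1) (2 : Fin 3)) = f ⟨m + 3, by omega⟩ := rfl
  simp [List.ofFn_succ, mul_assoc, e0, e1, e2]

lemma split_front {G : Type*} [Monoid G] (m : ℕ) (f : Fin (3 + (m + 1)) → G) :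
    (List.ofFn f).prod =
      (f ⟨0, by omega⟩ * f ⟨1, by omega⟩ * f ⟨2, by omega⟩) *
        (List.ofFn fun x : Fin (m + 1) => f (Fin.natAdd 3 x)).prod := by
  have h := List.ofFn_add (n := 3) (m := m + 1) (f := f)
  rw [h, List.prod_append]
  congr 1
  have e0 : f (Fin.castAdd (m + 1) (0 : Fin 3)) = f ⟨0, by omega⟩ := rfl
  have e1 : f (Fin.castAdd (m + 1) (1 : Fin 3)) = f ⟨1, by omega⟩ := rfl
  have e2 : f (Fin.castAdd (m + 1) (2 : Fin 3)) = f ⟨2, by omega⟩ := rfl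
  simp [List.ofFn_succ, mul_assoc, e0, e1, e2]
  rfl

set_option maxHeartbeats 1600000 in
lemma mul_mem_alternating {α : Type*} [DecidableEq α] [Fintype α] (π ρ : Equiv.Perm α)
    (h1 : Equiv.Perm.sign π = -1) (h2 : Equiv.Perm.sign ρ = -1) :
    π * ρ ∈ alternatingGroup α := by
  rw [Equiv.Perm.mem_alternatingGroup, map_mul, h1, h2, neg_mul_neg, one_mul]

lemma exists_placed (m : ℕ) (i j k : Fin (m + 4))
    (hij : i ≠ j) (hik : i ≠ k) (hjk : j ≠ k) :
    ∃ σ ∈ alternatingGroup (Fin (m + 4)),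
      (σ ⟨m + 1, by omega⟩ = i ∧ σ ⟨m + 2, by omega⟩ = j ∧ σ ⟨m + 3, by omega⟩ = k) ∨
      (σ ⟨0, by omega⟩ = i ∧ σ ⟨1, by omega⟩ = j ∧ σ ⟨2, by omega⟩ = k) := by
  have hp01 : (⟨m + 1, by omega⟩ : Fin (m + 4)) ≠ ⟨m + 2, by omega⟩ := by
    simp [Fin.ext_iff]
  have hp02 : (⟨m + 1, by omega⟩ : Fin (m + 4)) ≠ ⟨m + 3, by omega⟩ := by
    simp [Fin.ext_iff]
  have hp12 : (⟨m + 2, by omega⟩ : Fin (m + 4)) ≠ ⟨m + 3, by omega⟩ := by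
    simp [Fin.ext_iff]
  obtain ⟨τ, hτ0, hτ1, hτ2⟩ := exists_perm_three (⟨m + 1, by omega⟩ : Fin (m + 4))
    ⟨m + 2, by omega⟩ ⟨m + 3, by omega⟩ i j k hp01 hp02 hp12 hij hik hjk
  rcases Int.units_eq_one_or (Equiv.Perm.sign τ) with hs | hs
  · exact ⟨τ, Equiv.Perm.mem_alternatingGroup.mpr hs, Or.inl ⟨hτ0, hτ1, hτ2⟩⟩
  · by_cases hm : m = 0
    · -- n = 4 : rotate the block to the front
      subst hm
      have r0 : (finRotate (0 + 4)) ⟨0, by decide⟩ = (⟨0 + 1, by decide⟩ : Fin (0 + 4)) := by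
        decide
      have r1 : (finRotate (0 + 4)) ⟨1, by decide⟩ = (⟨0 + 2, by decide⟩ : Fin (0 + 4)) := by
        decide
      have r2 : (finRotate (0 + 4)) ⟨2, by decide⟩ = (⟨0 + 3, by decide⟩ : Fin (0 + 4)) := by
        decide
      have hsr : Equiv.Perm.sign (finRotate (0 + 4)) = -1 := by
        rw [sign_finRotate]
        exact Odd.neg_one_pow ⟨1, rfl⟩
      refine ⟨τ * finRotate (0 + 4), ?_, Or.inr ⟨?_, ?_, ?_⟩⟩
      · exact mul_mem_alternating τ _ hs hsr
      · rw [Equiv.Perm.mul_apply, r0, hτ0]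
      · rw [Equiv.Perm.mul_apply, r1, hτ1]
      · rw [Equiv.Perm.mul_apply, r2, hτ2]
    · -- n ≥ 5 : compose with a swap of two fresh positions at the front
      have hne : (⟨0, by omega⟩ : Fin (m + 4)) ≠ ⟨1, by omega⟩ :=
        Fin.ne_of_val_ne (show (0:ℕ) ≠ 1 by omega)
      have w0 : Equiv.swap (⟨0, by omega⟩ : Fin (m + 4)) ⟨1, by omega⟩
          ⟨m + 1, by omega⟩ = ⟨m + 1, by omega⟩ :=
        Equiv.swap_apply_of_ne_of_ne (Fin.ne_of_val_ne (show m + 1 ≠ 0 by omega))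
          (Fin.ne_of_val_ne (show m + 1 ≠ 1 by omega))
      have w1 : Equiv.swap (⟨0, by omega⟩ : Fin (m + 4)) ⟨1, by omega⟩
          ⟨m + 2, by omega⟩ = ⟨m + 2, by omega⟩ :=
        Equiv.swap_apply_of_ne_of_ne (Fin.ne_of_val_ne (show m + 2 ≠ 0 by omega))
          (Fin.ne_of_val_ne (show m + 2 ≠ 1 by omega))
      have w2 : Equiv.swap (⟨0, by omega⟩ : Fin (m + 4)) ⟨1, by omega⟩
          ⟨m + 3, by omega⟩ = ⟨m + 3, by omega⟩ :=
        Equiv.swap_apply_of_ne_of_ne (Fin.ne_of_val_ne (show m + 3 ≠ 0 by omega))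
          (Fin.ne_of_val_ne (show m + 3 ≠ 1 by omega))
      refine ⟨τ * Equiv.swap ⟨0, by omega⟩ ⟨1, by omega⟩, ?_, Or.inl ⟨?_, ?_, ?_⟩⟩
      · exact mul_mem_alternating τ _ hs (Equiv.Perm.sign_swap hne)
      · rw [Equiv.Perm.mul_apply, w0, hτ0]
      · rw [Equiv.Perm.mul_apply, w1, hτ1]
      · rw [Equiv.Perm.mul_apply, w2, hτ2]


lemma cyc (n : ℕ) (hn : 4 ≤ n) (i j k : Fin n) (hij : i ≠ j) (hjk : j ≠ k) (hik : i ≠ k) :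
    b n i * b n j * b n k = b n j * b n k * b n i := by
  obtain ⟨m, rfl⟩ : ∃ m, n = m + 4 := ⟨n - 4, by omega⟩
  obtain ⟨σ, hσ, hplace⟩ := exists_placed m i j k hij hik hjk
  set c : Equiv.Perm (Fin (m + 4)) := Equiv.swap i k * Equiv.swap i j with hc
  have hcmem : c ∈ alternatingGroup (Fin (m + 4)) :=
    mul_mem_alternating _ _ (Equiv.Perm.sign_swap hik) (Equiv.Perm.sign_swap hij)
  have hci : c i = j := by
    rw [hc, Equiv.Perm.mul_apply, Equiv.swap_apply_left,
      Equiv.swap_apply_of_ne_of_ne hij.symm hjk]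
  have hcj : c j = k := by
    rw [hc, Equiv.Perm.mul_apply, Equiv.swap_apply_right, Equiv.swap_apply_left]
  have hck : c k = i := by
    rw [hc, Equiv.Perm.mul_apply, Equiv.swap_apply_of_ne_of_ne hik.symm hjk.symm,
      Equiv.swap_apply_right]
  have hcfix : ∀ x : Fin (m + 4), x ≠ i → x ≠ j → x ≠ k → c x = x := by
    intro x h1 h2 h3
    rw [hc, Equiv.Perm.mul_apply, Equiv.swap_apply_of_ne_of_ne h1 h2,
      Equiv.swap_apply_of_ne_of_ne h1 h3]
  have key : Bw (m + 4) σ = Bw (m + 4) (c * σ) :=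
    (Bw_eq_one_perm _ σ hσ).trans (Bw_eq_one_perm _ (c * σ) (mul_mem hcmem hσ)).symm
  rcases hplace with ⟨h0, h1, h2⟩ | ⟨h0, h1, h2⟩
  · -- block at the end
    have fresh : ∀ x : Fin (m + 1), c (σ (Fin.castAdd 3 x)) = σ (Fin.castAdd 3 x) := by
      intro x
      refine hcfix _ ?_ ?_ ?_
      · intro h
        have := congrArg Fin.val (σ.injective (h.trans h0.symm))
        simp at this; omega
      · intro h
        have := congrArg Fin.val (σ.injective (h.trans h1.symm))
        simp at this; omega
      · intro h
        have := congrArg Fin.val (σ.injective (h.trans h2.symm))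
        simp at this; omega
    have E : Bw (m + 4) σ =
        (List.ofFn fun x : Fin (m + 1) => b (m + 4) (σ (Fin.castAdd 3 x))).prod *
          (b (m + 4) i * b (m + 4) j * b (m + 4) k) := by
      have h := split_end m (fun x => b (m + 4) (σ x))
      simp only [h0, h1, h2] at h
      exact h
    have E' : Bw (m + 4) (c * σ) =
        (List.ofFn fun x : Fin (m + 1) => b (m + 4) (σ (Fin.castAdd 3 x))).prod *
          (b (m + 4) j * b (m + 4) k * b (m + 4) i) := by
      have h := split_end m (fun x => b (m + 4) ((c * σ) x))
      simp only [Equiv.Perm.mul_apply, h0, h1, h2, hci, hcj, hck, fresh] at h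
      exact h
    exact mul_left_cancel (E.symm.trans (key.trans E'))
  · -- block at the front
    have hcast : m + 4 = 3 + (m + 1) := by omega
    have fresh : ∀ x : Fin (m + 1),
        c (σ (Fin.cast hcast.symm (Fin.natAdd 3 x))) = σ (Fin.cast hcast.symm (Fin.natAdd 3 x)) := by
      intro x
      refine hcfix _ ?_ ?_ ?_
      · intro h
        have := congrArg Fin.val (σ.injective (h.trans h0.symm))
        simp at this
      · intro h
        have := congrArg Fin.val (σ.injective (h.trans h1.symm))
        simp at this
      · intro h
        have := congrArg Fin.val (σ.injective (h.trans h2.symm))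
        simp at this
    have q0 : Fin.cast hcast.symm (⟨0, by omega⟩ : Fin (3 + (m + 1))) = (⟨0, by omega⟩ : Fin (m + 4)) := rfl
    have q1 : Fin.cast hcast.symm (⟨1, by omega⟩ : Fin (3 + (m + 1))) = (⟨1, by omega⟩ : Fin (m + 4)) := rfl
    have q2 : Fin.cast hcast.symm (⟨2, by omega⟩ : Fin (3 + (m + 1))) = (⟨2, by omega⟩ : Fin (m + 4)) := rfl
    have E0 : ∀ τ : Equiv.Perm (Fin (m + 4)),
        (List.ofFn fun x : Fin (m + 4) => b (m + 4) (τ x)) =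
          List.ofFn fun y : Fin (3 + (m + 1)) => b (m + 4) (τ (Fin.cast hcast.symm y)) :=
      fun τ => List.ofFn_congr hcast _
    have E : Bw (m + 4) σ =
        (b (m + 4) i * b (m + 4) j * b (m + 4) k) *
          (List.ofFn fun x : Fin (m + 1) =>
            b (m + 4) (σ (Fin.cast hcast.symm (Fin.natAdd 3 x)))).prod := by
      have h := split_front m (fun y : Fin (3 + (m + 1)) => b (m + 4) (σ (Fin.cast hcast.symm y)))
      simp only [q0, q1, q2, h0, h1, h2] at h
      calc Bw (m + 4) σ = _ := congrArg List.prod (E0 σ)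
        _ = _ := h
    have E' : Bw (m + 4) (c * σ) =
        (b (m + 4) j * b (m + 4) k * b (m + 4) i) *
          (List.ofFn fun x : Fin (m + 1) =>
            b (m + 4) (σ (Fin.cast hcast.symm (Fin.natAdd 3 x)))).prod := by
      have h := split_front m
        (fun y : Fin (3 + (m + 1)) => b (m + 4) ((c * σ) (Fin.cast hcast.symm y)))
      simp only [Equiv.Perm.mul_apply, q0, q1, q2, h0, h1, h2, hci, hcj, hck, fresh] at h
      calc Bw (m + 4) (c * σ) = _ := congrArg List.prod (E0 (c * σ))
        _ = _ := h
    exact mul_right_cancel (E.symm.trans (key.trans E'))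

end Stmt13Aux

/-- in `G = Gₙ(Altₙ)` with `n ≥ 4`, for distinct `i, j, k` one has
`aᵢaⱼaₖ = aⱼaₖaᵢ = aₖaᵢaⱼ`, and `aᵢ²aⱼ = aⱼaᵢ²` for all `i, j`. -/
theorem stmt13 (n : ℕ) (hn : 4 ≤ n) :
    (∀ i j k : Fin n, i ≠ j → j ≠ k → i ≠ k →
      b n i * b n j * b n k = b n j * b n k * b n i ∧
        b n j * b n k * b n i = b n k * b n i * b n j) ∧
    ∀ i j : Fin n, b n i ^ 2 * b n j = b n j * b n i ^ 2 := by
  have hcomm : ∀ p q r : Fin n, p ≠ q → q ≠ r → p ≠ r →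
      Commute (b n p * b n q) (b n r) := by
    intro p q r hpq hqr hpr
    have h := Stmt13Aux.cyc n hn r p q hpr.symm hpq hqr.symm
    exact h.symm.trans (mul_assoc _ _ _)
  constructor
  · intro i j k hij hjk hik
    exact ⟨Stmt13Aux.cyc n hn i j k hij hjk hik,
      Stmt13Aux.cyc n hn j k i hjk hik.symm hij.symm⟩
  · intro i j
    by_cases hij : i = j
    · subst hij
      rw [sq, mul_assoc]
    · obtain ⟨k, l, hkl, hki, hkj, hli, hlj⟩ :
          ∃ k l : Fin n, k ≠ l ∧ k ≠ i ∧ k ≠ j ∧ l ≠ i ∧ l ≠ j := by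
        have hcard : 1 < (({i, j}ᶜ : Finset (Fin n))).card := by
          have h2 : ({i, j} : Finset (Fin n)).card ≤ 2 := by
            apply le_trans (Finset.card_insert_le _ _)
            simp
          rw [Finset.card_compl, Fintype.card_fin]
          omega
        obtain ⟨k, hk, l, hl, hkl⟩ := Finset.one_lt_card.mp hcard
        simp only [Finset.mem_compl, Finset.mem_insert, Finset.mem_singleton, not_or] at hk hl
        exact ⟨k, l, hkl, hk.1, hk.2, hl.1, hl.2⟩
      have c1 : Commute (b n i * b n k) (b n j) := hcomm i k j hki.symm hkj hij
      have c2 : Commute (b n l * b n k) (b n j) := hcomm l k j hkl.symm hkj hlj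
      have c3 : Commute (b n l * b n i) (b n j) := hcomm l i j hli (Ne.symm (fun h => hij h.symm)) hlj
      have hdecomp : b n i ^ 2 = (b n i * b n k) * ((b n l * b n k)⁻¹ * (b n l * b n i)) := by
        rw [sq]; group
      have hc : Commute (b n i ^ 2) (b n j) := by
        rw [hdecomp]
        exact Commute.mul_left c1 (Commute.mul_left c2.inv_left c3)
      exact hc.eq
end

section
/- Let n ≥ 4 and G = G_n(Alt_n). Then the commutator c = a_1a_2a_1^{-1}a_2^{-1} is a central element of G with c^2 = 1, and c = a_i a_j a_i^{-1} a_j^{-1} for all i ≠ j. -/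
lemma prod_rel {n : ℕ} (σ : Equiv.Perm (Fin n)) (hσ : σ ∈ alternatingGroup (Fin n)) :
    (List.ofFn fun i => b n i).prod = (List.ofFn fun i => b n (σ i)).prod := by
  have h : ((List.ofFn (fun i : Fin n => FreeGroup.of i)).prod *
      ((List.ofFn (fun i : Fin n => FreeGroup.of (σ i))).prod)⁻¹ : FreeGroup (Fin n)) ∈
      Subgroup.normalClosure (GAltRels n) :=
    Subgroup.subset_normalClosure ⟨σ, hσ, rfl⟩
  have h2 : PresentedGroup.mk (GAltRels n)
      ((List.ofFn (fun i : Fin n => FreeGroup.of i)).prod *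
        ((List.ofFn (fun i : Fin n => FreeGroup.of (σ i))).prod)⁻¹) = 1 :=
    (QuotientGroup.eq_one_iff _).2 h
  rw [map_mul, map_inv, mul_inv_eq_one] at h2
  rw [map_list_prod, map_list_prod, List.map_ofFn, List.map_ofFn] at h2
  exact h2

lemma expand4 {G : Type*} [Monoid G] {m : ℕ} (f : Fin (4+m) → G) :
    (List.ofFn f).prod = f ⟨0, by omega⟩ * f ⟨1, by omega⟩ * f ⟨2, by omega⟩ * f ⟨3, by omega⟩ *
      (List.ofFn fun j : Fin m => f (Fin.natAdd 4 j)).prod := by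
  rw [List.ofFn_add, List.prod_append]
  congr 1
  · simp only [List.ofFn_succ, List.ofFn_zero, List.prod_cons, List.prod_nil, mul_one, mul_assoc]
    rfl

lemma ne_inv_of_apply_ne {α : Type*} [DecidableEq α] (σ : Equiv.Perm α) {p : α} {v : α}
    (h : σ p ≠ v) : p ≠ σ⁻¹ v :=
  fun hh => h (by rw [hh, Equiv.Perm.coe_inv, Equiv.apply_symm_apply])

/-- Cancelling equal tails: the first four letters of two even-permutation words agree
as a product. -/
lemma wordeq {m : ℕ} (σ σ' : Equiv.Perm (Fin (4+m)))
    (hσ : σ ∈ alternatingGroup (Fin (4+m))) (hσ' : σ' ∈ alternatingGroup (Fin (4+m)))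
    (htail : ∀ j : Fin m, σ (Fin.natAdd 4 j) = σ' (Fin.natAdd 4 j)) :
    b (4+m) (σ ⟨0, by omega⟩) * b (4+m) (σ ⟨1, by omega⟩) * b (4+m) (σ ⟨2, by omega⟩) *
      b (4+m) (σ ⟨3, by omega⟩) =
    b (4+m) (σ' ⟨0, by omega⟩) * b (4+m) (σ' ⟨1, by omega⟩) * b (4+m) (σ' ⟨2, by omega⟩) *
      b (4+m) (σ' ⟨3, by omega⟩) := by
  have h1 := (prod_rel σ hσ).symm.trans (prod_rel σ' hσ')
  rw [expand4 (fun t => b (4+m) (σ t)), expand4 (fun t => b (4+m) (σ' t))] at h1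
  have htail' : (fun j : Fin m => b (4+m) (σ (Fin.natAdd 4 j))) =
      (fun j : Fin m => b (4+m) (σ' (Fin.natAdd 4 j))) :=
    funext fun j => by rw [htail]
  rw [htail'] at h1
  exact mul_right_cancel h1

lemma exists_perm4 {α : Type*} [DecidableEq α] {p0 p1 p2 p3 x y z w : α}
    (h01 : p0 ≠ p1) (h02 : p0 ≠ p2) (h03 : p0 ≠ p3) (h12 : p1 ≠ p2) (h13 : p1 ≠ p3)
    (h23 : p2 ≠ p3) (hxy : x ≠ y) (hxz : x ≠ z) (hyz : y ≠ z)
    (hwx : w ≠ x) (hwy : w ≠ y) (hwz : w ≠ z) :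
    ∃ β : Equiv.Perm α, β p0 = x ∧ β p1 = y ∧ β p2 = z ∧ β p3 = w := by
  set e1 : Equiv.Perm α := Equiv.swap p0 x with he1def
  have he1 : e1 p0 = x := Equiv.swap_apply_left _ _
  set e2 : Equiv.Perm α := e1 * Equiv.swap p1 (e1⁻¹ y) with he2def
  have he2b : e2 p1 = y := by
    rw [he2def, Equiv.Perm.mul_apply, Equiv.swap_apply_left, Equiv.Perm.coe_inv, Equiv.apply_symm_apply]
  have he2a : e2 p0 = x := by
    rw [he2def, Equiv.Perm.mul_apply,
      Equiv.swap_apply_of_ne_of_ne h01 (ne_inv_of_apply_ne e1 (by rw [he1]; exact hxy)), he1]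
  set e3 : Equiv.Perm α := e2 * Equiv.swap p2 (e2⁻¹ z) with he3def
  have he3c : e3 p2 = z := by
    rw [he3def, Equiv.Perm.mul_apply, Equiv.swap_apply_left, Equiv.Perm.coe_inv, Equiv.apply_symm_apply]
  have he3a : e3 p0 = x := by
    rw [he3def, Equiv.Perm.mul_apply,
      Equiv.swap_apply_of_ne_of_ne h02 (ne_inv_of_apply_ne e2 (by rw [he2a]; exact hxz)), he2a]
  have he3b : e3 p1 = y := by
    rw [he3def, Equiv.Perm.mul_apply,
      Equiv.swap_apply_of_ne_of_ne h12 (ne_inv_of_apply_ne e2 (by rw [he2b]; exact hyz)), he2b]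
  refine ⟨e3 * Equiv.swap p3 (e3⁻¹ w), ?_, ?_, ?_, ?_⟩
  · rw [Equiv.Perm.mul_apply,
      Equiv.swap_apply_of_ne_of_ne h03
        (ne_inv_of_apply_ne e3 (by rw [he3a]; exact fun hh => hwx hh.symm)), he3a]
  · rw [Equiv.Perm.mul_apply,
      Equiv.swap_apply_of_ne_of_ne h13
        (ne_inv_of_apply_ne e3 (by rw [he3b]; exact fun hh => hwy hh.symm)), he3b]
  · rw [Equiv.Perm.mul_apply,
      Equiv.swap_apply_of_ne_of_ne h23
        (ne_inv_of_apply_ne e3 (by rw [he3c]; exact fun hh => hwz hh.symm)), he3c]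
  · rw [Equiv.Perm.mul_apply, Equiv.swap_apply_left, Equiv.Perm.coe_inv, Equiv.apply_symm_apply]

set_option maxHeartbeats 2000000 in
lemma core {m : ℕ} (x y z : Fin (4+m)) (hxy : x ≠ y) (hxz : x ≠ z) (hyz : y ≠ z) :
    b (4+m) y * b (4+m) x * b (4+m) z = b (4+m) x * b (4+m) z * b (4+m) y := by
  -- fourth element
  obtain ⟨w, hwx, hwy, hwz⟩ : ∃ w : Fin (4+m), w ≠ x ∧ w ≠ y ∧ w ≠ z := by
    by_contra h
    push_neg at h
    have hsub : (Finset.univ : Finset (Fin (4+m))) ⊆ {x, y, z} := by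
      intro u _
      simp only [Finset.mem_insert, Finset.mem_singleton]
      by_contra hu
      push_neg at hu
      exact hu.2.2 (h u hu.1 hu.2.1)
    have h1 := Finset.card_le_card hsub
    have h2 : ({x, y, z} : Finset (Fin (4+m))).card ≤ 3 := by
      apply le_trans (Finset.card_insert_le _ _)
      apply Nat.succ_le_succ
      apply le_trans (Finset.card_insert_le _ _)
      simp
    simp [Finset.card_univ] at h1
    omega
  -- positions
  set P0 : Fin (4+m) := ⟨0, by omega⟩ with hP0
  set P1 : Fin (4+m) := ⟨1, by omega⟩ with hP1
  set P2 : Fin (4+m) := ⟨2, by omega⟩ with hP2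
  set P3 : Fin (4+m) := ⟨3, by omega⟩ with hP3
  have h01 : P0 ≠ P1 := by simp [hP0, hP1, Fin.ext_iff]
  have h02 : P0 ≠ P2 := by simp [hP0, hP2, Fin.ext_iff]
  have h03 : P0 ≠ P3 := by simp [hP0, hP3, Fin.ext_iff]
  have h12 : P1 ≠ P2 := by simp [hP1, hP2, Fin.ext_iff]
  have h13 : P1 ≠ P3 := by simp [hP1, hP3, Fin.ext_iff]
  have h23 : P2 ≠ P3 := by simp [hP2, hP3, Fin.ext_iff]
  have hnat : ∀ (j : Fin m) (k : Fin (4+m)), k.val < 4 → Fin.natAdd 4 j ≠ k := by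
    intro j k hk
    apply Fin.ne_of_val_ne
    simp only [Fin.coe_natAdd]
    omega
  obtain ⟨β, hβ0, hβ1, hβ2, hβ3⟩ := exists_perm4 h01 h02 h03 h12 h13 h23 hxy hxz hyz hwx hwy hwz
  rcases Int.units_eq_one_or (Equiv.Perm.sign β) with hs | hs
  · -- β even : use τ = β * ρ, words (w,y,x,z,⋯) and (w,x,z,y,⋯)
    obtain ⟨τ, hτ0, hτ1, hτ2, hτ3, hτt, hτs⟩ :
        ∃ τ : Equiv.Perm (Fin (4+m)), τ P0 = w ∧ τ P1 = x ∧ τ P2 = y ∧ τ P3 = z ∧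
          (∀ j : Fin m, τ (Fin.natAdd 4 j) = β (Fin.natAdd 4 j)) ∧
          Equiv.Perm.sign τ = -1 := by
      refine ⟨β * (Equiv.swap P0 P3 * Equiv.swap P3 P2 * Equiv.swap P2 P1),
        ?_, ?_, ?_, ?_, ?_, ?_⟩
      · simp only [Equiv.Perm.mul_apply]
        rw [Equiv.swap_apply_of_ne_of_ne h02 h01, Equiv.swap_apply_of_ne_of_ne h03 h02,
          Equiv.swap_apply_left, hβ3]
      · simp only [Equiv.Perm.mul_apply]
        rw [Equiv.swap_apply_right, Equiv.swap_apply_right, Equiv.swap_apply_right, hβ0]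
      · simp only [Equiv.Perm.mul_apply]
        rw [Equiv.swap_apply_left, Equiv.swap_apply_of_ne_of_ne h13 h12,
          Equiv.swap_apply_of_ne_of_ne h01.symm h13, hβ1]
      · simp only [Equiv.Perm.mul_apply]
        rw [Equiv.swap_apply_of_ne_of_ne h23.symm h13.symm, Equiv.swap_apply_left,
          Equiv.swap_apply_of_ne_of_ne h02.symm h23, hβ2]
      · intro j
        simp only [Equiv.Perm.mul_apply]
        rw [Equiv.swap_apply_of_ne_of_ne (hnat j P2 (by simp [hP2])) (hnat j P1 (by simp [hP1])),
          Equiv.swap_apply_of_ne_of_ne (hnat j P3 (by simp [hP3])) (hnat j P2 (by simp [hP2])),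
          Equiv.swap_apply_of_ne_of_ne (hnat j P0 (by simp [hP0])) (hnat j P3 (by simp [hP3]))]
      · rw [map_mul, map_mul, map_mul, hs, Equiv.Perm.sign_swap h03,
          Equiv.Perm.sign_swap h23.symm, Equiv.Perm.sign_swap h12.symm]
        decide
    have m1 : τ * Equiv.swap P1 P2 ∈ alternatingGroup (Fin (4+m)) := by
      rw [Equiv.Perm.mem_alternatingGroup, map_mul, hτs, Equiv.Perm.sign_swap h12]
      decide
    have m2 : τ * Equiv.swap P2 P3 ∈ alternatingGroup (Fin (4+m)) := by
      rw [Equiv.Perm.mem_alternatingGroup, map_mul, hτs, Equiv.Perm.sign_swap h23]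
      decide
    have key := wordeq (τ * Equiv.swap P1 P2) (τ * Equiv.swap P2 P3) m1 m2 (by
      intro j
      simp only [Equiv.Perm.mul_apply]
      rw [Equiv.swap_apply_of_ne_of_ne (hnat j P1 (by simp [hP1])) (hnat j P2 (by simp [hP2])),
        Equiv.swap_apply_of_ne_of_ne (hnat j P2 (by simp [hP2])) (hnat j P3 (by simp [hP3]))])
    rw [show (⟨0, by omega⟩ : Fin (4+m)) = P0 from rfl,
      show (⟨1, by omega⟩ : Fin (4+m)) = P1 from rfl,
      show (⟨2, by omega⟩ : Fin (4+m)) = P2 from rfl,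
      show (⟨3, by omega⟩ : Fin (4+m)) = P3 from rfl] at key
    simp only [Equiv.Perm.mul_apply] at key
    rw [Equiv.swap_apply_of_ne_of_ne h01 h02, Equiv.swap_apply_left, Equiv.swap_apply_right,
      Equiv.swap_apply_of_ne_of_ne h13.symm h23.symm,
      Equiv.swap_apply_of_ne_of_ne h02 h03, Equiv.swap_apply_of_ne_of_ne h12 h13,
      Equiv.swap_apply_left, Equiv.swap_apply_right] at key
    rw [hτ0, hτ1, hτ2, hτ3] at key
    apply mul_left_cancel (a := b (4+m) w)
    simp only [← mul_assoc]
    exact key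
  · -- β odd : words (y,x,z,w,⋯) and (x,z,y,w,⋯)
    have m1 : β * Equiv.swap P0 P1 ∈ alternatingGroup (Fin (4+m)) := by
      rw [Equiv.Perm.mem_alternatingGroup, map_mul, hs, Equiv.Perm.sign_swap h01]
      decide
    have m2 : β * Equiv.swap P1 P2 ∈ alternatingGroup (Fin (4+m)) := by
      rw [Equiv.Perm.mem_alternatingGroup, map_mul, hs, Equiv.Perm.sign_swap h12]
      decide
    have key := wordeq (β * Equiv.swap P0 P1) (β * Equiv.swap P1 P2) m1 m2 (by
      intro j
      simp only [Equiv.Perm.mul_apply]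
      rw [Equiv.swap_apply_of_ne_of_ne (hnat j P0 (by simp [hP0])) (hnat j P1 (by simp [hP1])),
        Equiv.swap_apply_of_ne_of_ne (hnat j P1 (by simp [hP1])) (hnat j P2 (by simp [hP2]))])
    rw [show (⟨0, by omega⟩ : Fin (4+m)) = P0 from rfl,
      show (⟨1, by omega⟩ : Fin (4+m)) = P1 from rfl,
      show (⟨2, by omega⟩ : Fin (4+m)) = P2 from rfl,
      show (⟨3, by omega⟩ : Fin (4+m)) = P3 from rfl] at key
    simp only [Equiv.Perm.mul_apply] at key
    rw [Equiv.swap_apply_left, Equiv.swap_apply_right,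
      Equiv.swap_apply_of_ne_of_ne h02.symm h12.symm,
      Equiv.swap_apply_of_ne_of_ne h03.symm h13.symm,
      Equiv.swap_apply_of_ne_of_ne h01 h02, Equiv.swap_apply_left, Equiv.swap_apply_right,
      Equiv.swap_apply_of_ne_of_ne h13.symm h23.symm] at key
    rw [hβ0, hβ1, hβ2, hβ3] at key
    exact mul_right_cancel key

lemma exists_other {n : ℕ} (hn : 4 ≤ n) (x y z : Fin n) :
    ∃ w : Fin n, w ≠ x ∧ w ≠ y ∧ w ≠ z := by
  by_contra h
  push_neg at h
  have hsub : (Finset.univ : Finset (Fin n)) ⊆ {x, y, z} := by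
    intro u _
    simp only [Finset.mem_insert, Finset.mem_singleton]
    by_contra hu
    push_neg at hu
    exact hu.2.2 (h u hu.1 hu.2.1)
  have h1 := Finset.card_le_card hsub
  have h2 : ({x, y, z} : Finset (Fin n)).card ≤ 3 := by
    apply le_trans (Finset.card_insert_le _ _)
    apply Nat.succ_le_succ
    apply le_trans (Finset.card_insert_le _ _)
    simp
  simp [Finset.card_univ] at h1
  omega

/-- `c_{xy} = a_x a_y a_x⁻¹ a_y⁻¹`, the commutator of two generators. -/
def KK (n : ℕ) (i j : Fin n) : GAlt n := b n i * b n j * (b n i)⁻¹ * (b n j)⁻¹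

lemma UR {m : ℕ} (x y z : Fin (4+m)) (hxy : x ≠ y) (hxz : x ≠ z) (hyz : y ≠ z) :
    KK (4+m) x y = b (4+m) x * KK (4+m) y z * (b (4+m) x)⁻¹ := by
  have h1 : b (4+m) y * b (4+m) x * b (4+m) z = b (4+m) x * b (4+m) z * b (4+m) y :=
    core x y z hxy hxz hyz
  have h4 : (b (4+m) y)⁻¹ * (b (4+m) x * b (4+m) z) = (b (4+m) x * b (4+m) z) * (b (4+m) y)⁻¹ := by
    have hcomm : Commute (b (4+m) y) (b (4+m) x * b (4+m) z) := by
      unfold Commute SemiconjBy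
      rw [← mul_assoc, h1]
    exact hcomm.inv_left
  unfold KK
  apply mul_right_cancel (b := b (4+m) x * b (4+m) z)
  calc b (4+m) x * b (4+m) y * (b (4+m) x)⁻¹ * (b (4+m) y)⁻¹ * (b (4+m) x * b (4+m) z)
      = b (4+m) x * b (4+m) y * (b (4+m) x)⁻¹ *
        ((b (4+m) y)⁻¹ * (b (4+m) x * b (4+m) z)) := by group
    _ = b (4+m) x * b (4+m) y * (b (4+m) x)⁻¹ *
        ((b (4+m) x * b (4+m) z) * (b (4+m) y)⁻¹) := by rw [h4]
    _ = b (4+m) x * (b (4+m) y * b (4+m) z * (b (4+m) y)⁻¹ * (b (4+m) z)⁻¹) * (b (4+m) x)⁻¹ *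
        (b (4+m) x * b (4+m) z) := by group

lemma Keq {m : ℕ} (y z z' : Fin (4+m)) (hz : z ≠ y) (hz' : z' ≠ y) :
    KK (4+m) y z = KK (4+m) y z' := by
  obtain ⟨x, hx1, hx2, hx3⟩ := exists_other (by omega) y z z'
  have u1 := UR x y z hx1 hx2 hz.symm
  have u2 := UR x y z' hx1 hx3 hz'.symm
  rw [u1] at u2
  exact mul_left_cancel (mul_right_cancel u2)

lemma Kconst {m : ℕ} (i j k l : Fin (4+m)) (hij : i ≠ j) (hkl : k ≠ l) :
    KK (4+m) i j = KK (4+m) k l := by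
  by_cases hik : i = k
  · subst hik
    exact Keq i j l hij.symm hkl.symm
  · obtain ⟨x, hxi, hxk, _⟩ := exists_other (by omega) i k k
    obtain ⟨z1, hz1x, hz1i, _⟩ := exists_other (by omega) x i i
    obtain ⟨z2, hz2x, hz2k, _⟩ := exists_other (by omega) x k k
    have e1 : KK (4+m) i j = KK (4+m) i z1 := Keq i j z1 hij.symm hz1i
    have e2 : KK (4+m) k l = KK (4+m) k z2 := Keq k l z2 hkl.symm hz2k
    have u1 := UR x i z1 hxi hz1x.symm hz1i.symm
    have u2 := UR x k z2 hxk hz2x.symm hz2k.symm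
    have ex : KK (4+m) x i = KK (4+m) x k := Keq x i k hxi.symm hxk.symm
    rw [ex] at u1
    rw [u1] at u2
    have := mul_left_cancel (mul_right_cancel u2)
    rw [e1, e2, this]

/-- in `G = Gₙ(Altₙ)` with `n ≥ 4`, the commutator
`c = a₁a₂a₁⁻¹a₂⁻¹` is central, satisfies `c² = 1`, and equals
`aᵢaⱼaᵢ⁻¹aⱼ⁻¹` for all `i ≠ j`. -/
theorem stmt14 (n : ℕ) (hn : 4 ≤ n) [NeZero n] :
    (∀ g : GAlt n,
      (b n 0 * b n 1 * (b n 0)⁻¹ * (b n 1)⁻¹) * g =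
        g * (b n 0 * b n 1 * (b n 0)⁻¹ * (b n 1)⁻¹)) ∧
    (b n 0 * b n 1 * (b n 0)⁻¹ * (b n 1)⁻¹) ^ 2 = 1 ∧
    ∀ i j : Fin n, i ≠ j →
      b n 0 * b n 1 * (b n 0)⁻¹ * (b n 1)⁻¹ =
        b n i * b n j * (b n i)⁻¹ * (b n j)⁻¹ := by
  obtain ⟨m, rfl⟩ : ∃ m, n = 4 + m := ⟨n - 4, by omega⟩
  have h01 : (0 : Fin (4+m)) ≠ 1 := by
    apply Fin.ne_of_val_ne
    have hv0 : ((0 : Fin (4+m))).val = 0 := rfl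
    have hv1 : ((1 : Fin (4+m))).val = 1 := by
      show 1 % (4+m) = 1
      rw [Nat.mod_eq_of_lt (by omega)]
    omega
  have hKc : ∀ i j : Fin (4+m), i ≠ j →
      b (4+m) i * b (4+m) j * (b (4+m) i)⁻¹ * (b (4+m) j)⁻¹ =
        b (4+m) 0 * b (4+m) 1 * (b (4+m) 0)⁻¹ * (b (4+m) 1)⁻¹ :=
    fun i j hij => Kconst i j 0 1 hij h01
  -- generator-wise centrality
  have hgen : ∀ k : Fin (4+m),
      b (4+m) k * (b (4+m) 0 * b (4+m) 1 * (b (4+m) 0)⁻¹ * (b (4+m) 1)⁻¹) =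
        (b (4+m) 0 * b (4+m) 1 * (b (4+m) 0)⁻¹ * (b (4+m) 1)⁻¹) * b (4+m) k := by
    intro k
    obtain ⟨j, hjk, _, _⟩ := exists_other (by omega) k k k
    obtain ⟨z, hzk, hzj, _⟩ := exists_other (by omega) k j j
    have u := UR k j z hjk.symm hzk.symm hzj.symm
    have e1 : KK (4+m) k j = KK (4+m) 0 1 := Kconst k j 0 1 hjk.symm h01
    have e2 : KK (4+m) j z = KK (4+m) 0 1 := Kconst j z 0 1 hzj.symm h01
    rw [e1, e2] at u
    -- u : KK 0 1 = b k * KK 0 1 * (b k)⁻¹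
    have u2 := congrArg (fun g => g * b (4+m) k) u
    simp only [inv_mul_cancel_right] at u2
    exact u2.symm
  refine ⟨?_, ?_, ?_⟩
  · intro g
    have hg : g ∈ Subgroup.centralizer
        ({b (4+m) 0 * b (4+m) 1 * (b (4+m) 0)⁻¹ * (b (4+m) 1)⁻¹} :
          Set (GAlt (4+m))) := by
      apply PresentedGroup.generated_by
      intro j
      rw [Subgroup.mem_centralizer_iff]
      intro h hh
      rw [Set.mem_singleton_iff] at hh
      subst hh
      exact (hgen j).symm
    exact Subgroup.mem_centralizer_iff.1 hg _ rfl
  · have hK10 : KK (4+m) 1 0 = KK (4+m) 0 1 := Kconst 1 0 0 1 h01.symm h01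
    have hinv : KK (4+m) 1 0 = (KK (4+m) 0 1)⁻¹ := by
      unfold KK; group
    have : (KK (4+m) 0 1)⁻¹ = KK (4+m) 0 1 := by rw [← hinv, hK10]
    show (KK (4+m) 0 1) ^ 2 = 1
    rw [sq]
    nth_rewrite 1 [← this]
    rw [inv_mul_cancel]
  · exact fun i j hij => (hKc i j hij).symm
end

section
/- Let n ≥ 4 and G = G_n(Alt_n). Then the commutator a_1a_2a_1^{-1}a_2^{-1} is not equal to the identity in G; in particular G is nonabelian. (This can be proved via the sign invariant f assigning to a word a_{i_1}⋯a_{i_m} the product over pairs j < k with i_j ≠ i_k of (i_k − i_j)/|i_k − i_j|, which is invariant under the defining relations.) -/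
namespace Stmt16Aux

open Finset Equiv Equiv.Perm

/-- The set of ordered pairs `(i,j)` with `i < j`. -/
def PS (k : ℕ) : Finset (Fin k × Fin k) := Finset.univ.filter (fun p => p.1 < p.2)

lemma mem_PS {k : ℕ} {p : Fin k × Fin k} : p ∈ PS k ↔ p.1 < p.2 := by simp [PS]

/-- A bilinear form on `(ZMod 2)^n`. -/
def Q {n : ℕ} (u v : Fin n → ZMod 2) : ZMod 2 := ∑ p ∈ PS n, u p.1 * v p.2

variable {n : ℕ}

lemma Q_add_left (u u' w : Fin n → ZMod 2) : Q (u + u') w = Q u w + Q u' w := by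
  simp [Q, add_mul, Finset.sum_add_distrib]

lemma Q_add_right (u w w' : Fin n → ZMod 2) : Q u (w + w') = Q u w + Q u w' := by
  simp [Q, mul_add, Finset.sum_add_distrib]

lemma Q_neg_left (u w : Fin n → ZMod 2) : Q (-u) w = - Q u w := by
  simp [Q, Finset.sum_neg_distrib]

lemma Q_neg_right (u w : Fin n → ZMod 2) : Q u (-w) = - Q u w := by
  simp [Q, Finset.sum_neg_distrib]

lemma Q_zero_right (u : Fin n → ZMod 2) : Q u 0 = 0 := by simp [Q]

lemma Q_zero_left (u : Fin n → ZMod 2) : Q 0 u = 0 := by simp [Q]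

/-- Heisenberg-type extension of `(ZMod 2)^n` by `ZMod 2` via the cocycle `Q`. -/
@[ext] structure H (n : ℕ) where
  v : Fin n → ZMod 2
  t : ZMod 2

instance : Mul (H n) := ⟨fun a b => ⟨a.v + b.v, a.t + b.t + Q a.v b.v⟩⟩
instance : One (H n) := ⟨⟨0, 0⟩⟩
instance : Inv (H n) := ⟨fun a => ⟨-a.v, -a.t + Q a.v a.v⟩⟩

@[simp] lemma mul_v (a b : H n) : (a * b).v = a.v + b.v := rfl
@[simp] lemma mul_t (a b : H n) : (a * b).t = a.t + b.t + Q a.v b.v := rfl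
@[simp] lemma one_v : (1 : H n).v = 0 := rfl
@[simp] lemma one_t : (1 : H n).t = 0 := rfl
@[simp] lemma inv_v (a : H n) : (a⁻¹).v = -a.v := rfl
@[simp] lemma inv_t (a : H n) : (a⁻¹).t = -a.t + Q a.v a.v := rfl

instance : Group (H n) where
  mul_assoc a b c := by
    ext i
    · simp [add_assoc]
    · simp only [mul_t, mul_v, Q_add_left, Q_add_right]; ring
  one_mul a := by ext i <;> simp [Q_zero_left]
  mul_one a := by ext i <;> simp [Q_zero_right]
  inv_mul_cancel a := by
    ext i
    · simp; exact CharTwo.add_self_eq_zero _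
    · simp only [mul_t, inv_t, inv_v, one_t, Q_neg_left]; ring

/-- The image of the generator `aᵢ`. -/
def xg (i : Fin n) : H n := ⟨Pi.single i 1, 0⟩

/-- The count (mod 2) of in-order pairs in a list. -/
def TK : List (Fin n) → ZMod 2
  | [] => 0
  | a :: l => (l.map fun b => if a < b then (1 : ZMod 2) else 0).sum + TK l

lemma Q_single_single (a c : Fin n) :
    Q (Pi.single a (1 : ZMod 2)) (Pi.single c 1) = if a < c then 1 else 0 := by
  classical
  have h : ∀ p : Fin n × Fin n,
      (Pi.single a 1 : Fin n → ZMod 2) p.1 * (Pi.single c 1 : Fin n → ZMod 2) p.2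
        = if p = (a, c) then (1 : ZMod 2) else 0 := by
    rintro ⟨i, j⟩
    simp only [Pi.single_apply, Prod.mk.injEq, Prod.ext_iff]
    split_ifs with h1 h2 h3 h3 h2 <;> simp_all
  unfold Q
  simp only [h]
  rw [Finset.sum_ite_eq' (PS n) (a, c) (fun _ => (1 : ZMod 2))]
  simp [mem_PS]

lemma Q_single_listsum (a : Fin n) (l : List (Fin n)) :
    Q (Pi.single a 1) ((l.map fun i => Pi.single i (1 : ZMod 2)).sum)
      = (l.map fun c => if a < c then (1 : ZMod 2) else 0).sum := by
  induction l with
  | nil => simp [Q_zero_right]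
  | cons c l ih => simp [Q_add_right, Q_single_single, ih]

lemma prod_map_xg (l : List (Fin n)) :
    (l.map xg).prod = ⟨(l.map fun i => Pi.single i (1 : ZMod 2)).sum, TK l⟩ := by
  induction l with
  | nil => ext i <;> simp [TK]
  | cons a l ih =>
    rw [List.map_cons, List.prod_cons, ih]
    ext i
    · simp [xg]
    · simp only [mul_t, mul_v, xg, TK, Q_single_listsum]
      ring

lemma TK_ofFn {k : ℕ} (f : Fin k → Fin n) :
    TK (List.ofFn f) = ∑ p ∈ PS k, if f p.1 < f p.2 then (1 : ZMod 2) else 0 := by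
  induction k with
  | zero => simp [TK, PS]
  | succ k ih =>
    rw [List.ofFn_succ]
    show (List.map _ (List.ofFn (f ∘ Fin.succ))).sum + TK (List.ofFn (f ∘ Fin.succ)) = _
    rw [ih (f ∘ Fin.succ), List.map_ofFn, List.sum_ofFn]
    simp only [PS, Finset.sum_filter, Fintype.sum_prod_type]
    rw [Fin.sum_univ_succ]
    simp [Fin.sum_univ_succ, Fin.succ_lt_succ_iff, Fin.succ_pos, Function.comp]

lemma signAux_eq_sign (hn2 : 2 ≤ n) (σ : Perm (Fin n)) : signAux σ = sign σ := by
  have hs : Function.Surjective (MonoidHom.mk' (signAux (n := n)) signAux_mul) := by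
    intro u
    rcases Int.units_eq_one_or u with rfl | rfl
    · exact ⟨1, signAux_one n⟩
    · exact ⟨Equiv.swap ⟨0, by omega⟩ ⟨1, by omega⟩,
        signAux_swap (by simp [Fin.ext_iff])⟩
  have h := eq_sign_of_surjective_hom hs
  exact DFunLike.congr_fun h σ

lemma inversions_even (hn2 : 2 ≤ n) (σ : Perm (Fin n))
    (hσ : σ ∈ alternatingGroup (Fin n)) :
    Even ((finPairsLT n).filter (fun x => σ x.1 ≤ σ x.2)).card := by
  have h1 : signAux σ = 1 := by
    rw [signAux_eq_sign hn2]; exact Equiv.Perm.mem_alternatingGroup.mp hσ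
  unfold signAux at h1
  rw [Finset.prod_ite, Finset.prod_const, Finset.prod_const, one_pow, mul_one] at h1
  have hne : (-1 : ℤˣ) ≠ 1 := by decide
  exact (neg_one_pow_eq_one_iff_even hne).mp h1

lemma card_bridge (σ : Perm (Fin n)) :
    ((PS n).filter (fun p => σ p.2 < σ p.1)).card
      = ((finPairsLT n).filter (fun x => σ x.1 ≤ σ x.2)).card := by
  apply Finset.card_bij' (fun p _ => (⟨p.2, p.1⟩ : Σ _ : Fin n, Fin n))
    (fun x _ => ((x.2, x.1) : Fin n × Fin n))
  · rintro ⟨i, j⟩ hp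
    rw [Finset.mem_filter, mem_PS] at hp
    rw [Finset.mem_filter, mem_finPairsLT]
    exact ⟨hp.1, le_of_lt hp.2⟩
  · rintro ⟨i, j⟩ hx
    rw [Finset.mem_filter, mem_finPairsLT] at hx
    rw [Finset.mem_filter, mem_PS]
    exact ⟨hx.1, lt_of_le_of_ne hx.2
      (fun h => absurd (σ.injective h) (ne_of_gt hx.1))⟩
  · rintro ⟨i, j⟩ _; rfl
  · rintro ⟨i, j⟩ _; rfl

lemma even_cast_zero {c : ℕ} (h : Even c) : (c : ZMod 2) = 0 := by
  rw [ZMod.natCast_eq_zero_iff]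
  exact h.two_dvd

lemma TK_invariant (hn2 : 2 ≤ n) (σ : Perm (Fin n))
    (hσ : σ ∈ alternatingGroup (Fin n)) :
    TK (List.ofFn (fun i => σ i)) = TK (List.ofFn (fun i : Fin n => i)) := by
  rw [TK_ofFn, TK_ofFn]
  have hid : ∑ p ∈ PS n, (if (p.1 : Fin n) < p.2 then (1 : ZMod 2) else 0)
      = ((PS n).card : ZMod 2) := by
    rw [Finset.sum_congr rfl (fun p hp => if_pos (mem_PS.mp hp))]
    simp
  rw [hid]
  have hb : ∑ p ∈ PS n, (if σ p.1 < σ p.2 then (1 : ZMod 2) else 0)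
      = (((PS n).filter (fun p => σ p.1 < σ p.2)).card : ZMod 2) := by
    rw [Finset.sum_boole]
  rw [hb]
  have hpart := Finset.card_filter_add_card_filter_not
    (s := PS n) (p := fun p => σ p.1 < σ p.2)
  have hneg : (PS n).filter (fun p => ¬ σ p.1 < σ p.2)
      = (PS n).filter (fun p => σ p.2 < σ p.1) := by
    apply Finset.filter_congr
    intro p hp
    have hne : σ p.1 ≠ σ p.2 := fun h =>
      absurd (σ.injective h) (ne_of_lt (mem_PS.mp hp))
    simp only [not_lt]
    constructor
    · intro h; exact lt_of_le_of_ne h (Ne.symm hne)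
    · intro h; exact le_of_lt h
  rw [hneg] at hpart
  have heven : Even ((PS n).filter (fun p => σ p.2 < σ p.1)).card := by
    rw [card_bridge]; exact inversions_even hn2 σ hσ
  have hz : (((PS n).filter (fun p => σ p.2 < σ p.1)).card : ZMod 2) = 0 :=
    even_cast_zero heven
  rw [← hpart]
  push_cast
  rw [hz, add_zero]

lemma lift_rel (hn2 : 2 ≤ n) : ∀ r ∈ GAltRels n, FreeGroup.lift (xg (n := n)) r = 1 := by
  rintro r ⟨σ, hσ, rfl⟩
  rw [map_mul, map_inv, mul_inv_eq_one]
  have key : ∀ f : Fin n → Fin n,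
      FreeGroup.lift (xg (n := n)) ((List.ofFn (fun i => FreeGroup.of (f i))).prod)
        = ((List.ofFn f).map xg).prod := by
    intro f
    rw [map_list_prod, List.map_ofFn, List.map_ofFn]
    congr 1
    congr 1
    funext i
    simp [Function.comp]
  have h1 := key (fun i => i)
  have h2 := key (fun i => σ i)
  rw [h1, h2, prod_map_xg, prod_map_xg]
  ext i
  · simp only [List.map_ofFn, List.sum_ofFn, Function.comp]
    exact congrFun (Equiv.sum_comp σ (fun i => Pi.single i (1 : ZMod 2))).symm i
  · exact (TK_invariant hn2 σ hσ).symm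

end Stmt16Aux

/-- in `G = Gₙ(Altₙ)` with `n ≥ 4`, the commutator `a₁a₂a₁⁻¹a₂⁻¹`
is nontrivial; in particular `G` is nonabelian. -/
theorem stmt16 (n : ℕ) (hn : 4 ≤ n) [NeZero n] :
    b n 0 * b n 1 * (b n 0)⁻¹ * (b n 1)⁻¹ ≠ 1 ∧
      ¬ ∀ x y : GAlt n, x * y = y * x := by
  open Stmt16Aux in
  have hn2 : 2 ≤ n := by omega
  have h01 : (0 : Fin n) ≠ 1 := by
    have h1 : ((1 : Fin n) : ℕ) = 1 := by
      rw [Fin.val_one']; exact Nat.mod_eq_of_lt (by omega)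
    intro h
    rw [Fin.ext_iff, Fin.val_zero, h1] at h
    exact one_ne_zero h.symm
  set φ : GAlt n →* Stmt16Aux.H n := PresentedGroup.toGroup (Stmt16Aux.lift_rel hn2) with hφ
  have hof : ∀ i : Fin n, φ (b n i) = Stmt16Aux.xg i := fun i =>
    PresentedGroup.toGroup.of (Stmt16Aux.lift_rel hn2)
  have hcomm : b n 0 * b n 1 * (b n 0)⁻¹ * (b n 1)⁻¹ ≠ 1 := by
    intro h
    have himg := congrArg φ h
    rw [map_mul, map_mul, map_mul, map_inv, map_inv, map_one, hof, hof] at himg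
    have ht := congrArg Stmt16Aux.H.t himg
    simp only [Stmt16Aux.mul_t, Stmt16Aux.mul_v, Stmt16Aux.inv_t, Stmt16Aux.inv_v,
      Stmt16Aux.one_t, Stmt16Aux.xg, Stmt16Aux.Q_add_left, Stmt16Aux.Q_add_right,
      Stmt16Aux.Q_neg_left, Stmt16Aux.Q_neg_right, Stmt16Aux.Q_single_single] at ht
    rcases lt_or_gt_of_ne h01 with hlt | hgt
    · rw [if_pos hlt, if_neg (asymm hlt), if_neg (lt_irrefl _), if_neg (lt_irrefl _)] at ht
      revert ht; decide
    · rw [if_neg (asymm hgt), if_pos hgt, if_neg (lt_irrefl _), if_neg (lt_irrefl _)] at ht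
      revert ht; decide
  refine ⟨hcomm, fun hab => hcomm ?_⟩
  rw [hab (b n 0) (b n 1)]
  group
end
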